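/- arXiv:2601.19764 — 11 statements merged into one kernel-verified Lean document; each statement's English description precedes it below -/
import Mathlib

section
/- Let G and H be groups and let φ : G → H be a surjective group homomorphism whose kernel is contained in the center of G (i.e., G is a central extension of H). If H is finite, then the commutator subgroup [G, G] is finite. -/
open scoped commutatorElement

lemma commutator_eq_of_central {G : Type*} [Group G] (g h z w : G)
    (hz : z ∈ Subgroup.center G) (hw : w ∈ Subgroup.center G) :
    ⁅g * z, h * w⁆ = ⁅g, h⁆ := by
  have hz' := Subgroup.mem_center_iff.mp ((Subgroup.center G).inv_mem hz)
  have hw' := Subgroup.mem_center_iff.mp ((Subgroup.center G).inv_mem hw)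
  rw [Subgroup.mem_center_iff] at hz hw
  simp only [commutatorElement_def, mul_inv_rev]
  calc g * z * (h * w) * (z⁻¹ * g⁻¹) * (w⁻¹ * h⁻¹)
      = g * (z * h) * w * z⁻¹ * g⁻¹ * w⁻¹ * h⁻¹ := by group
    _ = g * (h * z) * w * z⁻¹ * g⁻¹ * w⁻¹ * h⁻¹ := by rw [← hz h]
    _ = g * h * z * (w * z⁻¹) * g⁻¹ * w⁻¹ * h⁻¹ := by group
    _ = g * h * z * (z⁻¹ * w) * g⁻¹ * w⁻¹ * h⁻¹ := by rw [hz' w]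
    _ = g * h * (w * g⁻¹) * w⁻¹ * h⁻¹ := by group
    _ = g * h * (g⁻¹ * w) * w⁻¹ * h⁻¹ := by rw [hw g⁻¹]
    _ = g * h * g⁻¹ * h⁻¹ := by group

/-- **Schur's theorem.** If `φ : G → H` is a surjective group homomorphism whose kernel is
contained in the center of `G` (i.e. `G` is a central extension of `H`) and `H` is finite,
then the commutator subgroup `[G, G]` is finite. -/
theorem commutator_finite_of_central_extension_of_finite
    {G H : Type*} [Group G] [Group H] (φ : G →* H)
    (hsurj : Function.Surjective φ) (hker : φ.ker ≤ Subgroup.center G)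
    (hH : Finite H) :
    Finite ↥(commutator G) := by
  have hQ : Finite (G ⧸ Subgroup.center G) := by
    have e := QuotientGroup.quotientKerEquivOfSurjective φ hsurj
    have : Finite (G ⧸ φ.ker) := Finite.of_equiv H e.symm.toEquiv
    refine Finite.of_surjective
      (QuotientGroup.map φ.ker (Subgroup.center G) (MonoidHom.id G) hker) ?_
    intro x
    obtain ⟨g, rfl⟩ := QuotientGroup.mk_surjective x
    exact ⟨QuotientGroup.mk g, rfl⟩
  have hcs : Finite (commutatorSet G) := by
    let F : (G ⧸ Subgroup.center G) × (G ⧸ Subgroup.center G) → G := fun p =>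
      Quotient.liftOn₂' p.1 p.2 (fun g h => ⁅g, h⁆) (by
        intro a₁ b₁ a₂ b₂ ha hb
        have ha' := QuotientGroup.leftRel_apply.mp ha
        have hb' := QuotientGroup.leftRel_apply.mp hb
        have := commutator_eq_of_central a₁ b₁ (a₁⁻¹ * a₂) (b₁⁻¹ * b₂)
          ha' hb'
        simpa [← mul_assoc] using this.symm)
    have hsub : commutatorSet G ⊆ Set.range F := by
      rintro x ⟨g, h, rfl⟩
      exact ⟨(QuotientGroup.mk g, QuotientGroup.mk h), rfl⟩
    exact Set.Finite.subset (Set.finite_range F) hsub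
  infer_instance
end

section
/- Let G and H be groups and let φ : G → H be a surjective group homomorphism whose kernel is contained in the center of G (i.e., G is a central extension of H). If H is polycyclic, then the commutator subgroup [G, G] is polycyclic. -/
/-- A group is *Noetherian* if every subgroup is finitely generated. -/
def IsNoetherianGroup (G : Type*) [Group G] : Prop := ∀ K : Subgroup G, K.FG

/-- A group is *polycyclic* if and only if it is solvable and Noetherian. -/
def IsPolycyclic (G : Type*) [Group G] : Prop := IsSolvable G ∧ IsNoetherianGroup G

open Subgroup Function
open scoped commutatorElement

section Helpers
variable {A B C : Type*} [Group A] [Group B] [Group C]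

/-- Factor a hom through a surjection whose kernel it kills. -/
theorem hom_factor (f : A →* B) (g : A →* C) (hs : Function.Surjective f)
    (hk : f.ker ≤ g.ker) : ∃ h : B →* C, ∀ a, h (f a) = g a := by
  have key : ∀ x y : A, f x = f y → g x = g y := by
    intro x y hxy
    have : x⁻¹ * y ∈ f.ker := by simp [MonoidHom.mem_ker, hxy]
    have h2 := hk this
    rw [MonoidHom.mem_ker, map_mul, map_inv] at h2
    have := congrArg (fun t => g x * t) h2
    simpa [mul_assoc] using this.symm
  refine ⟨{ toFun := fun b => g (surjInv hs b), map_one' := ?_, map_mul' := ?_ }, ?_⟩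
  · have : f (surjInv hs 1) = f 1 := by simp [surjInv_eq hs]
    simpa using key _ _ this
  · intro x y
    have : f (surjInv hs (x*y)) = f (surjInv hs x * surjInv hs y) := by
      simp [surjInv_eq hs]
    simpa using key _ _ this
  · intro a
    have : f (surjInv hs (f a)) = f a := surjInv_eq hs (f a)
    exact key _ _ this

theorem comm_mul_central_left (a c z : A) (hz : z ∈ Subgroup.center A) :
    ⁅a*z, c⁆ = ⁅a, c⁆ := by
  have hzc : z * c * z⁻¹ = c := by
    rw [← Subgroup.mem_center_iff.mp hz c]; group
  calc ⁅a*z, c⁆ = a * (z * c * z⁻¹) * a⁻¹ * c⁻¹ := by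
        rw [commutatorElement_def]; group
    _ = ⁅a, c⁆ := by rw [hzc, commutatorElement_def]

theorem comm_mul_central (a b z w : A) (hz : z ∈ Subgroup.center A)
    (hw : w ∈ Subgroup.center A) : ⁅a*z, b*w⁆ = ⁅a, b⁆ := by
  rw [comm_mul_central_left a (b*w) z hz]
  rw [show ⁅a, b*w⁆ = ⁅b*w, a⁆⁻¹ by rw [commutatorElement_inv]]
  rw [comm_mul_central_left b a w hw, commutatorElement_inv]

end Helpers

section FG
variable {A B : Type*} [Group A] [Group B]

theorem fg_bot : (⊥ : Subgroup A).FG := ⟨∅, by simp⟩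

theorem fg_of_map_of_inf_ker (f : A →* B) (K : Subgroup A)
    (h1 : (K.map f).FG) (h2 : (f.ker ⊓ K).FG) : K.FG := by
  rw [Subgroup.fg_iff] at h1 h2 ⊢
  obtain ⟨S, hS, hSfin⟩ := h1
  obtain ⟨T, hT, hTfin⟩ := h2
  have hmem : ∀ s ∈ S, ∃ g, g ∈ K ∧ f g = s := by
    intro s hs
    have : s ∈ K.map f := hS ▸ Subgroup.subset_closure hs
    simpa [Subgroup.mem_map] using this
  choose σ hσK hσf using hmem
  classical
  have hdep : {y | ∃ x hx, y = σ x hx}.Finite := by simpa [eq_comm] using hSfin.dependent_image σ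
  refine ⟨{y | ∃ x hx, y = σ x hx} ∪ T, ?_, hdep.union hTfin⟩
  apply le_antisymm
  · rw [Subgroup.closure_le]
    rintro g (⟨x, hx, rfl⟩ | hg)
    · exact hσK x hx
    · have : g ∈ f.ker ⊓ K := hT ▸ Subgroup.subset_closure hg
      exact this.2
  · intro k hk
    have h1 : f k ∈ Subgroup.closure S := hS.symm ▸ Subgroup.mem_map_of_mem f hk
    have h2 : Subgroup.closure S ≤ Subgroup.map f (Subgroup.closure {y | ∃ x hx, y = σ x hx}) := by
      rw [Subgroup.closure_le]
      intro s hs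
      exact ⟨σ s hs, Subgroup.subset_closure ⟨s, hs, rfl⟩, hσf s hs⟩
    obtain ⟨u, hu, huf⟩ := h2 h1
    have huK : u ∈ K := by
      have : Subgroup.closure {y | ∃ x hx, y = σ x hx} ≤ K := by
        rw [Subgroup.closure_le]; rintro g ⟨x, hx, rfl⟩; exact hσK x hx
      exact this hu
    have hku : k * u⁻¹ ∈ f.ker ⊓ K :=
      ⟨by simp [MonoidHom.mem_ker, huf, hk], K.mul_mem hk (K.inv_mem huK)⟩
    have : k = (k * u⁻¹) * u := by group
    rw [this]
    exact Subgroup.mul_mem _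
      (Subgroup.closure_mono le_sup_right (hT.symm ▸ hku : _))
      (Subgroup.closure_mono le_sup_left hu)

/-- subgroups of an fg "abelian" group are fg -/
theorem subgroup_fg_of_comm (hc : ∀ a b : A, a * b = b * a)
    (hA : (⊤ : Subgroup A).FG) (K : Subgroup A) : K.FG := by
  letI : CommGroup A := { (inferInstance : Group A) with mul_comm := hc }
  have hfg : Group.FG A := ⟨hA⟩
  have h1 : AddGroup.FG (Additive A) := GroupFG.iff_add_fg.mp hfg
  have h2 : Module.Finite ℤ (Additive A) := Module.Finite.iff_addGroup_fg.mpr h1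
  have h3 : IsNoetherian ℤ (Additive A) := isNoetherian_of_isNoetherianRing_of_finite ℤ _
  rw [Subgroup.fg_iff_add_fg]
  have h4 := IsNoetherian.noetherian (AddSubgroup.toIntSubmodule (Subgroup.toAddSubgroup K))
  have h5 := (Submodule.fg_iff_addSubgroup_fg _).mp h4
  rwa [AddSubgroup.toIntSubmodule_toAddSubgroup] at h5

end FG

section FinPres
universe u

/-- A group is finitely presented: finite free cover with normally finitely generated kernel. -/
def FinPres (Q : Type u) [Group Q] : Prop :=
  ∃ (α : Type u) (_ : Finite α) (π : FreeGroup α →* Q), Function.Surjective π ∧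
    ∃ S : Set (FreeGroup α), S.Finite ∧ Subgroup.normalClosure S = π.ker

variable {Q : Type*} [Group Q]

theorem finPres_of_comm (hc : ∀ a b : Q, a * b = b * a)
    (hfg : (⊤ : Subgroup Q).FG) : FinPres Q := by
  classical
  obtain ⟨S0, hS0⟩ := hfg
  set α := {x // x ∈ S0} with hα
  haveI : Finite α := inferInstance
  set π : FreeGroup α →* Q := FreeGroup.lift (fun x => (x : Q)) with hπ
  have hπsurj : Function.Surjective π := by
    rw [← MonoidHom.range_eq_top]
    rw [FreeGroup.range_lift_eq_closure]
    rw [Subtype.range_coe_subtype]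
    simpa using hS0
  -- commutator relator set
  set Cset : Set (FreeGroup α) :=
    Set.image2 (fun i j : α => ⁅(FreeGroup.of i : FreeGroup α), FreeGroup.of j⁆)
      Set.univ Set.univ with hCset
  have hCfin : Cset.Finite := Set.Finite.image2 _ Set.finite_univ Set.finite_univ
  set C : Subgroup (FreeGroup α) := Subgroup.normalClosure Cset with hC
  have hCker : C ≤ π.ker := by
    apply Subgroup.normalClosure_le_normal
    rintro g ⟨i, -, j, -, rfl⟩
    simp only [SetLike.mem_coe, MonoidHom.mem_ker, map_commutatorElement]
    exact commutatorElement_eq_one_iff_commute.mpr (hc _ _)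
  -- the quotient by C is commutative and finitely generated
  set q : FreeGroup α →* FreeGroup α ⧸ C := QuotientGroup.mk' C with hq
  have hqsurj : Function.Surjective q := QuotientGroup.mk'_surjective C
  have hgen : Subgroup.closure (Set.range fun i : α => q (FreeGroup.of i)) = ⊤ := by
    have h := MonoidHom.map_closure q (Set.range (FreeGroup.of : α → FreeGroup α))
    rw [FreeGroup.closure_range_of, ← Set.range_comp] at h
    rw [show Set.range (q ∘ FreeGroup.of) = Set.range (fun i : α => q (FreeGroup.of i)) from rfl]
      at h
    rw [← h, Subgroup.map_top_of_surjective q hqsurj]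
  have hgencomm : ∀ i j : α, Commute (q (FreeGroup.of i)) (q (FreeGroup.of j)) := by
    intro i j
    rw [← commutatorElement_eq_one_iff_commute, ← map_commutatorElement]
    have : ⁅(FreeGroup.of i : FreeGroup α), FreeGroup.of j⁆ ∈ C :=
      Subgroup.subset_normalClosure (Set.mem_image2_of_mem (Set.mem_univ i) (Set.mem_univ j))
    rwa [← QuotientGroup.ker_mk' C, MonoidHom.mem_ker] at this
  have h1 : ∀ i : α, ∀ x, Commute (q (FreeGroup.of i)) x := by
    intro i x
    have : Subgroup.centralizer {q (FreeGroup.of i)} = ⊤ := by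
      rw [eq_top_iff, ← hgen, Subgroup.closure_le]
      rintro _ ⟨j, rfl⟩
      rw [SetLike.mem_coe, Subgroup.mem_centralizer_iff]
      rintro h hh
      rw [Set.mem_singleton_iff] at hh; subst hh
      exact (hgencomm i j).eq
    have hx : x ∈ Subgroup.centralizer {q (FreeGroup.of i)} := this ▸ Subgroup.mem_top x
    exact (Subgroup.mem_centralizer_iff.mp hx _ (Set.mem_singleton _))
  have hqcomm : ∀ x y : FreeGroup α ⧸ C, x * y = y * x := by
    intro x y
    have : Subgroup.centralizer {x} = ⊤ := by
      rw [eq_top_iff, ← hgen, Subgroup.closure_le]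
      rintro _ ⟨j, rfl⟩
      rw [SetLike.mem_coe, Subgroup.mem_centralizer_iff]
      rintro h hh
      rw [Set.mem_singleton_iff] at hh; subst hh
      exact ((h1 j h).symm).eq
    have hy : y ∈ Subgroup.centralizer {x} := this ▸ Subgroup.mem_top y
    exact (Subgroup.mem_centralizer_iff.mp hy _ (Set.mem_singleton _))
  -- the image of the kernel is finitely generated
  have hFfg : Group.FG (FreeGroup α) := by
    rw [Group.fg_iff]
    exact ⟨Set.range FreeGroup.of, FreeGroup.closure_range_of α, Set.finite_range _⟩
  have hQfg : Group.FG (FreeGroup α ⧸ C) := Group.fg_of_surjective hqsurj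
  have hKbar : (π.ker.map q).FG :=
    subgroup_fg_of_comm hqcomm (Group.fg_def.mp hQfg) _
  rw [Subgroup.fg_iff] at hKbar
  obtain ⟨T, hT, hTfin⟩ := hKbar
  have hmem : ∀ t ∈ T, ∃ g, g ∈ π.ker ∧ q g = t := by
    intro t ht
    have : t ∈ π.ker.map q := hT ▸ Subgroup.subset_closure ht
    simpa [Subgroup.mem_map] using this
  choose τ hτker hτq using hmem
  classical
  set Tlift : Set (FreeGroup α) := {y | ∃ x hx, τ x hx = y} with hTlift
  have hTliftfin : Tlift.Finite := hTfin.dependent_image τ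
  refine ⟨α, inferInstance, π, hπsurj, Cset ∪ Tlift, hCfin.union hTliftfin, ?_⟩
  apply le_antisymm
  · apply Subgroup.normalClosure_le_normal
    rintro g (hg | ⟨x, hx, rfl⟩)
    · exact hCker (Subgroup.subset_normalClosure hg)
    · exact hτker x hx
  · intro k hk
    have h1' : q k ∈ Subgroup.closure T := hT.symm ▸ Subgroup.mem_map_of_mem q hk
    have h2 : Subgroup.closure T ≤ Subgroup.map q (Subgroup.closure Tlift) := by
      rw [Subgroup.closure_le]
      intro t ht
      exact ⟨τ t ht, Subgroup.subset_closure ⟨t, ht, rfl⟩, hτq t ht⟩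
    obtain ⟨u, hu, hqu⟩ := h2 h1'
    have hku : k * u⁻¹ ∈ C := by
      have hq1 : q (k * u⁻¹) = 1 := by
        rw [map_mul, map_inv, hqu]; simp
      rwa [show C = (QuotientGroup.mk' C).ker from (QuotientGroup.ker_mk' C).symm,
        MonoidHom.mem_ker]
    have hC' : C ≤ Subgroup.normalClosure (Cset ∪ Tlift) :=
      Subgroup.normalClosure_mono Set.subset_union_left
    have hu' : u ∈ Subgroup.normalClosure (Cset ∪ Tlift) :=
      (Subgroup.closure_le_normalClosure.trans
        (Subgroup.normalClosure_mono Set.subset_union_right)) hu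
    have : k = (k * u⁻¹) * u := by group
    rw [this]
    exact Subgroup.mul_mem _ (hC' hku) hu'

end FinPres

section Ext
universe v2
theorem finPres_extension {Q : Type v2} [Group Q] (N : Subgroup Q) [hNn : N.Normal]
    (hN : FinPres ↥N) (hQN : FinPres (Q ⧸ N)) : FinPres Q := by
  classical
  obtain ⟨a, hafin, π₁, hπ₁, S₁, hS₁fin, hS₁⟩ := hN
  obtain ⟨b, hbfin, π₂, hπ₂, S₂, hS₂fin, hS₂⟩ := hQN
  haveI := hafin; haveI := hbfin
  let ι₁ : FreeGroup a →* FreeGroup (a ⊕ b) := FreeGroup.lift (fun x => FreeGroup.of (Sum.inl x))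
  let ι₂ : FreeGroup b →* FreeGroup (a ⊕ b) := FreeGroup.lift (fun y => FreeGroup.of (Sum.inr y))
  let gen : a ⊕ b → Q := Sum.elim (fun x => ((π₁ (FreeGroup.of x) : N) : Q))
    (fun y => Function.surjInv (QuotientGroup.mk'_surjective N) (π₂ (FreeGroup.of y)))
  let π : FreeGroup (a ⊕ b) →* Q := FreeGroup.lift gen
  have hπι₁ : ∀ w, π (ι₁ w) = ((π₁ w : N) : Q) := by
    intro w
    have h : π.comp ι₁ = N.subtype.comp π₁ := by
      apply FreeGroup.ext_hom; intro x
      simp [ι₁, π, FreeGroup.lift_apply_of, gen]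
    exact DFunLike.congr_fun h w
  have hπι₂ : ∀ w, QuotientGroup.mk' N (π (ι₂ w)) = π₂ w := by
    intro w
    have h : (QuotientGroup.mk' N).comp (π.comp ι₂) = π₂ := by
      apply FreeGroup.ext_hom; intro y
      simp only [MonoidHom.comp_apply]
      rw [show ι₂ (FreeGroup.of y) = FreeGroup.of (Sum.inr y) from FreeGroup.lift_apply_of]
      rw [show π (FreeGroup.of (Sum.inr y)) = gen (Sum.inr y) from FreeGroup.lift_apply_of]
      exact surjInv_eq (QuotientGroup.mk'_surjective N) _
    exact DFunLike.congr_fun h w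
  have hS₁ker : ∀ s ∈ S₁, π₁ s = 1 := by
    intro s hs
    have : s ∈ π₁.ker := hS₁ ▸ Subgroup.subset_normalClosure hs
    exact this
  have hS₂ker : ∀ s ∈ S₂, π₂ s = 1 := by
    intro s hs
    have : s ∈ π₂.ker := hS₂ ▸ Subgroup.subset_normalClosure hs
    exact this
  -- surjectivity of π
  have hπsurj : Function.Surjective π := by
    intro g
    obtain ⟨w₂, hw₂⟩ := hπ₂ (QuotientGroup.mk' N g)
    have heq : QuotientGroup.mk' N (π (ι₂ w₂)) = QuotientGroup.mk' N g := by
      rw [hπι₂]; exact hw₂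
    have hmem : (π (ι₂ w₂))⁻¹ * g ∈ N := by
      have h2 : QuotientGroup.mk' N ((π (ι₂ w₂))⁻¹ * g) = 1 := by
        rw [map_mul, map_inv, heq]; simp
      rwa [← MonoidHom.mem_ker, QuotientGroup.ker_mk' N] at h2
    obtain ⟨w₁, hw₁⟩ := hπ₁ ⟨(π (ι₂ w₂))⁻¹ * g, hmem⟩
    refine ⟨ι₂ w₂ * ι₁ w₁, ?_⟩
    rw [map_mul, hπι₁, hw₁]
    simp
  -- the correction function
  let ρ : ↥N → FreeGroup a := Function.surjInv hπ₁
  let c : FreeGroup (a ⊕ b) → FreeGroup (a ⊕ b) :=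
    fun w => if h : π w ∈ N then ι₁ (ρ ⟨π w, h⟩) else 1
  have hcπ : ∀ w, π w ∈ N → π (c w) = π w := by
    intro w h
    simp only [c, dif_pos h]
    rw [hπι₁, show π₁ (ρ ⟨π w, h⟩) = ⟨π w, h⟩ from surjInv_eq hπ₁ _]
  have hcmem : ∀ w, c w ∈ ι₁.range := by
    intro w
    by_cases h : π w ∈ N
    · simp only [c, dif_pos h]; exact ⟨_, rfl⟩
    · simp only [c, dif_neg h]; exact one_mem _
  -- relator sets
  let RS₁ : Set (FreeGroup (a ⊕ b)) := ι₁ '' S₁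
  let RS₂ : Set (FreeGroup (a ⊕ b)) := (fun s => ι₂ s * (c (ι₂ s))⁻¹) '' S₂
  let conjel : a × b × Bool → FreeGroup (a ⊕ b) := fun p =>
    (cond p.2.2 (FreeGroup.of (Sum.inr p.2.1)) (FreeGroup.of (Sum.inr p.2.1))⁻¹) *
      FreeGroup.of (Sum.inl p.1) *
      (cond p.2.2 (FreeGroup.of (Sum.inr p.2.1)) (FreeGroup.of (Sum.inr p.2.1))⁻¹)⁻¹
  let RS₃ : Set (FreeGroup (a ⊕ b)) := Set.range (fun p => conjel p * (c (conjel p))⁻¹)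
  have hconjN : ∀ p : a × b × Bool, π (conjel p) ∈ N := by
    rintro ⟨x, y, ε⟩
    simp only [conjel, map_mul, map_inv]
    have h1 : π (FreeGroup.of (Sum.inl x)) ∈ N := by
      rw [show π (FreeGroup.of (Sum.inl x)) = gen (Sum.inl x) from FreeGroup.lift_apply_of]
      exact (π₁ (FreeGroup.of x)).2
    cases ε <;> simp only [cond] <;>
      [skip; skip] <;> exact hNn.conj_mem _ h1 _
  let Sgen := RS₁ ∪ RS₂ ∪ RS₃
  have hSgenfin : Sgen.Finite :=
    ((hS₁fin.image _).union (hS₂fin.image _)).union (Set.finite_range _)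
  have hSgenker : ∀ w ∈ Sgen, π w = 1 := by
    rintro w ((⟨s, hs, rfl⟩ | ⟨s, hs, rfl⟩) | ⟨p, rfl⟩)
    · rw [hπι₁, hS₁ker s hs]; simp
    · have hmem : π (ι₂ s) ∈ N := by
        rw [← QuotientGroup.eq_one_iff, ← QuotientGroup.mk'_apply, hπι₂, hS₂ker s hs]
      rw [map_mul, map_inv, hcπ _ hmem]; simp
    · rw [map_mul, map_inv, hcπ _ (hconjN p)]; simp
  let R₀ : Subgroup (FreeGroup (a ⊕ b)) := Subgroup.normalClosure Sgen
  have hR₀ker : R₀ ≤ π.ker := Subgroup.normalClosure_le_normal fun w hw => hSgenker w hw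
  -- the quotient P
  let pt : FreeGroup (a ⊕ b) →* FreeGroup (a ⊕ b) ⧸ R₀ := QuotientGroup.mk' R₀
  have hptsurj : Function.Surjective pt := QuotientGroup.mk'_surjective R₀
  let p : FreeGroup (a ⊕ b) ⧸ R₀ →* Q := QuotientGroup.lift R₀ π fun w hw => hR₀ker hw
  have hppt : ∀ w, p (pt w) = π w := fun w => rfl
  have hptrel : ∀ w ∈ Sgen, pt w = 1 := by
    intro w hw
    rw [← MonoidHom.mem_ker, QuotientGroup.ker_mk']
    exact Subgroup.subset_normalClosure hw
  let P₁ : Subgroup (FreeGroup (a ⊕ b) ⧸ R₀) := (pt.comp ι₁).range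
  have hptc : ∀ w, pt (c w) ∈ P₁ := by
    intro w
    obtain ⟨v, hv⟩ := hcmem w
    exact ⟨v, by rw [MonoidHom.comp_apply, hv]⟩
  -- generators of P
  have hPgen : Subgroup.closure (Set.range fun t : a ⊕ b => pt (FreeGroup.of t)) = ⊤ := by
    have h := MonoidHom.map_closure pt (Set.range (FreeGroup.of : a ⊕ b → FreeGroup (a ⊕ b)))
    rw [FreeGroup.closure_range_of, ← Set.range_comp] at h
    rw [show Set.range (pt ∘ FreeGroup.of) = Set.range (fun t : a ⊕ b => pt (FreeGroup.of t))
      from rfl] at h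
    rw [← h, Subgroup.map_top_of_surjective pt hptsurj]
  -- conjugation stability of P₁
  have hconj : ∀ (y : b) (ε : Bool) (u : FreeGroup (a ⊕ b) ⧸ R₀), u ∈ P₁ →
      (cond ε (pt (FreeGroup.of (Sum.inr y))) (pt (FreeGroup.of (Sum.inr y)))⁻¹) * u *
      (cond ε (pt (FreeGroup.of (Sum.inr y))) (pt (FreeGroup.of (Sum.inr y)))⁻¹)⁻¹ ∈ P₁ := by
    intro y ε u hu
    obtain ⟨w, hw⟩ := hu
    set z := cond ε (pt (FreeGroup.of (Sum.inr y))) (pt (FreeGroup.of (Sum.inr y)))⁻¹ with hz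
    have hD : (⊤ : Subgroup (FreeGroup a)) ≤
        Subgroup.comap ((MulAut.conj z).toMonoidHom.comp (pt.comp ι₁)) P₁ := by
      rw [← FreeGroup.closure_range_of a, Subgroup.closure_le]
      rintro _ ⟨x, rfl⟩
      rw [SetLike.mem_coe, Subgroup.mem_comap]
      simp only [MonoidHom.comp_apply, MulEquiv.coe_toMonoidHom, MulAut.conj_apply]
      have hι : ι₁ (FreeGroup.of x) = FreeGroup.of (Sum.inl x) := FreeGroup.lift_apply_of
      rw [hι]
      have hrel : pt (conjel (x, y, ε)) = pt (c (conjel (x, y, ε))) := by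
        have h1 : pt (conjel (x, y, ε) * (c (conjel (x, y, ε)))⁻¹) = 1 :=
          hptrel _ (Or.inr ⟨(x, y, ε), rfl⟩)
        rw [map_mul, map_inv] at h1
        exact (mul_inv_eq_one.mp h1)
      have hzz : z * pt (FreeGroup.of (Sum.inl x)) * z⁻¹ = pt (conjel (x, y, ε)) := by
        simp only [conjel, map_mul, map_inv, hz]
        cases ε <;> simp
      rw [hzz, hrel]
      exact hptc _
    have hthis := hD (Subgroup.mem_top w)
    rw [Subgroup.mem_comap] at hthis
    simp only [MonoidHom.comp_apply, MulEquiv.coe_toMonoidHom, MulAut.conj_apply] at hthis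
    rw [← hw]
    exact hthis
  haveI hP₁norm : P₁.Normal := by
    rw [← Subgroup.normalizer_eq_top_iff]
    rw [eq_top_iff, ← hPgen, Subgroup.closure_le]
    rintro _ ⟨t, rfl⟩
    cases t with
    | inl x =>
      have : pt (FreeGroup.of (Sum.inl x)) ∈ P₁ :=
        ⟨FreeGroup.of x, by rw [MonoidHom.comp_apply,
          show ι₁ (FreeGroup.of x) = FreeGroup.of (Sum.inl x) from FreeGroup.lift_apply_of]⟩
      exact Subgroup.le_normalizer this
    | inr y =>
      rw [SetLike.mem_coe, Subgroup.mem_normalizer_iff]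
      intro h
      constructor
      · intro hh
        have := hconj y true h hh
        simpa using this
      · intro hh
        have := hconj y false _ hh
        simp only [cond] at this
        have heq : (pt (FreeGroup.of (Sum.inr y)))⁻¹ *
            (pt (FreeGroup.of (Sum.inr y)) * h * (pt (FreeGroup.of (Sum.inr y)))⁻¹) *
            ((pt (FreeGroup.of (Sum.inr y)))⁻¹)⁻¹ = h := by group
        rwa [heq] at this
  -- the map q₁ : N → P
  have hker₁ : π₁.ker ≤ (pt.comp ι₁).ker := by
    rw [← hS₁]
    apply Subgroup.normalClosure_le_normal
    intro s hs
    rw [SetLike.mem_coe, MonoidHom.mem_ker, MonoidHom.comp_apply]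
    exact hptrel _ (Or.inl (Or.inl ⟨s, hs, rfl⟩))
  obtain ⟨q₁, hq₁⟩ := hom_factor π₁ (pt.comp ι₁) hπ₁ hker₁
  have hpq₁ : ∀ n : ↥N, p (q₁ n) = (n : Q) := by
    intro n
    obtain ⟨w, rfl⟩ := hπ₁ n
    rw [hq₁ w, MonoidHom.comp_apply, hppt, hπι₁]
  have hq₁range : ∀ u, u ∈ P₁ ↔ ∃ n : ↥N, q₁ n = u := by
    intro u
    constructor
    · rintro ⟨w, rfl⟩
      exact ⟨π₁ w, (hq₁ w)⟩
    · rintro ⟨n, rfl⟩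
      obtain ⟨w, rfl⟩ := hπ₁ n
      rw [hq₁ w]
      exact ⟨w, rfl⟩
  -- the map χ : Q⧸N → P⧸P₁
  have hker₂ : π₂.ker ≤ ((QuotientGroup.mk' P₁).comp (pt.comp ι₂)).ker := by
    rw [← hS₂]
    apply Subgroup.normalClosure_le_normal
    intro s hs
    rw [SetLike.mem_coe, MonoidHom.mem_ker, MonoidHom.comp_apply, MonoidHom.comp_apply]
    have hrel : pt (ι₂ s) = pt (c (ι₂ s)) := by
      have h1 : pt (ι₂ s * (c (ι₂ s))⁻¹) = 1 := hptrel _ (Or.inl (Or.inr ⟨s, hs, rfl⟩))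
      rw [map_mul, map_inv] at h1
      exact mul_inv_eq_one.mp h1
    rw [QuotientGroup.mk'_apply, QuotientGroup.eq_one_iff, hrel]
    exact hptc _
  obtain ⟨χ, hχ⟩ := hom_factor π₂ ((QuotientGroup.mk' P₁).comp (pt.comp ι₂)) hπ₂ hker₂
  -- χ ∘ ψ = mk' P₁
  have hχψ : ∀ u, χ (QuotientGroup.mk' N (p u)) = QuotientGroup.mk' P₁ u := by
    have hcomp : (χ.comp ((QuotientGroup.mk' N).comp p)).comp pt =
        (QuotientGroup.mk' P₁).comp pt := by
      apply FreeGroup.ext_hom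
      intro t
      rcases t with x | y
      · simp only [MonoidHom.comp_apply]
        have h1 : π (FreeGroup.of (Sum.inl x)) ∈ N := by
          rw [show π (FreeGroup.of (Sum.inl x)) = gen (Sum.inl x) from FreeGroup.lift_apply_of]
          exact (π₁ (FreeGroup.of x)).2
        have h2 : QuotientGroup.mk' N (p (pt (FreeGroup.of (Sum.inl x)))) = 1 := by
          rw [hppt, QuotientGroup.mk'_apply, QuotientGroup.eq_one_iff]
          exact h1
        rw [h2, map_one, QuotientGroup.mk'_apply, eq_comm, QuotientGroup.eq_one_iff]
        exact ⟨FreeGroup.of x, by rw [MonoidHom.comp_apply,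
          show ι₁ (FreeGroup.of x) = FreeGroup.of (Sum.inl x) from FreeGroup.lift_apply_of]⟩
      · simp only [MonoidHom.comp_apply]
        have h1 : QuotientGroup.mk' N (p (pt (FreeGroup.of (Sum.inr y)))) =
            π₂ (FreeGroup.of y) := by
          rw [hppt]
          rw [show FreeGroup.of (Sum.inr y) = ι₂ (FreeGroup.of y) from FreeGroup.lift_apply_of.symm]
          exact hπι₂ _
        rw [h1, hχ, MonoidHom.comp_apply, MonoidHom.comp_apply,
          show ι₂ (FreeGroup.of y) = FreeGroup.of (Sum.inr y) from FreeGroup.lift_apply_of]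
    intro u
    obtain ⟨w, rfl⟩ := hptsurj u
    exact DFunLike.congr_fun hcomp w
  -- p is injective
  have hpinj : ∀ u, p u = 1 → u = 1 := by
    intro u hu
    have h1 : QuotientGroup.mk' P₁ u = 1 := by
      rw [← hχψ, hu]; simp
    have h2 : u ∈ P₁ := by
      rwa [QuotientGroup.mk'_apply, QuotientGroup.eq_one_iff] at h1
    obtain ⟨n, rfl⟩ := (hq₁range u).mp h2
    have h3 : (n : Q) = 1 := by rw [← hpq₁ n, hu]
    have h4 : n = 1 := Subtype.ext h3
    rw [h4, map_one]
  -- conclusion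
  refine ⟨a ⊕ b, inferInstance, π, hπsurj, Sgen, hSgenfin, ?_⟩
  apply le_antisymm
  · exact Subgroup.normalClosure_le_normal fun w hw => hSgenker w hw
  · intro w hw
    have h1 : p (pt w) = 1 := by rw [hppt]; exact hw
    have h2 : pt w = 1 := hpinj _ h1
    have h3 : w ∈ (QuotientGroup.mk' R₀).ker := by rw [MonoidHom.mem_ker]; exact h2
    rw [QuotientGroup.ker_mk'] at h3
    exact h3

end Ext

section Polycyclic
universe v
variable {H : Type v} [Group H]

theorem noeth_subgroup (hH : ∀ K : Subgroup H, K.FG) (N : Subgroup H)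
    (K : Subgroup ↥N) : K.FG := by
  apply fg_of_map_of_inf_ker N.subtype K (hH _)
  rw [Subgroup.ker_subtype, bot_inf_eq]
  exact fg_bot

theorem quot_commutator_comm (x y : H ⧸ commutator H) : x * y = y * x := by
  obtain ⟨g, rfl⟩ := QuotientGroup.mk'_surjective (commutator H) x
  obtain ⟨h, rfl⟩ := QuotientGroup.mk'_surjective (commutator H) y
  rw [← map_mul, ← map_mul, QuotientGroup.mk'_apply, QuotientGroup.mk'_apply]
  rw [QuotientGroup.eq]
  have : (g * h)⁻¹ * (h * g) = ⁅h⁻¹, g⁻¹⁆ := by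
    rw [commutatorElement_def]; group
  rw [this]
  exact Subgroup.commutator_mem_commutator (Subgroup.mem_top _) (Subgroup.mem_top _)

theorem finPres_aux : ∀ (n : ℕ) (H : Type v) (_ : Group H),
    (∀ K : Subgroup H, K.FG) → derivedSeries H n = ⊥ → FinPres H := by
  intro n
  induction n with
  | zero =>
    intro H _ hfg hd
    apply finPres_of_comm _ (hfg ⊤)
    intro x y
    have h1 : ∀ z : H, z = 1 := by
      intro z
      have : z ∈ derivedSeries H 0 := by rw [derivedSeries_zero]; exact Subgroup.mem_top z
      rw [hd] at this
      exact this
    rw [h1 x, h1 y]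
  | succ n ih =>
    intro H _ hfg hd
    refine finPres_extension (commutator H) (hN := ?_) (hQN := ?_)
    · apply ih ↥(commutator H) inferInstance (noeth_subgroup hfg _)
      have hmap : ∀ m, (derivedSeries ↥(commutator H) m).map (commutator H).subtype ≤
          derivedSeries H (m + 1) := by
        intro m
        induction m with
        | zero =>
          rw [derivedSeries_zero, ← MonoidHom.range_eq_map, Subgroup.range_subtype,
            derivedSeries_one]
        | succ m ihm =>
          rw [derivedSeries_succ, derivedSeries_succ, Subgroup.map_commutator]
          exact Subgroup.commutator_mono ihm ihm
      have h2 := hmap n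
      rw [hd] at h2
      have h3 : (derivedSeries ↥(commutator H) n).map (commutator H).subtype = ⊥ :=
        le_bot_iff.mp h2
      rwa [Subgroup.map_eq_bot_iff_of_injective _ (Subgroup.subtype_injective (commutator H))] at h3
    · haveI : Group.FG H := ⟨hfg ⊤⟩
      exact finPres_of_comm quot_commutator_comm
        (Group.fg_def.mp (QuotientGroup.fg (commutator H)))

end Polycyclic

section Assemble
theorem fg_map_subgroup {G H : Type*} [Group G] [Group H] (f : G →* H) {K : Subgroup G}
    (h : K.FG) : (K.map f).FG := by
  rw [Subgroup.fg_iff] at h ⊢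
  obtain ⟨T, hT, hTfin⟩ := h
  exact ⟨f '' T, by rw [← MonoidHom.map_closure, hT], hTfin.image f⟩

theorem fg_of_le_comm {G : Type*} [Group G] (V W : Subgroup G) (hV : V.FG)
    (hc : ∀ a b : G, a ∈ V → b ∈ V → a * b = b * a) (hW : W ≤ V) : W.FG := by
  have h1 : Group.FG ↥V := (Group.fg_iff_subgroup_fg V).mpr hV
  have hcomm : ∀ x y : ↥V, x * y = y * x := fun x y => Subtype.ext (hc _ _ x.2 y.2)
  have h2 := subgroup_fg_of_comm hcomm (Group.fg_def.mp h1) (W.subgroupOf V)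
  have h3 : (W.subgroupOf V).map V.subtype = W := by
    rw [Subgroup.subgroupOf_map_subtype, inf_eq_left.mpr hW]
  rw [← h3]
  exact fg_map_subgroup V.subtype h2
end Assemble

/-- If `φ : G → H` is a surjective group homomorphism whose kernel is contained in the center
of `G` (i.e. `G` is a central extension of `H`) and `H` is polycyclic, then the commutator
subgroup `[G, G]` is polycyclic. -/
theorem commutator_polycyclic_of_central_extension_of_polycyclic
    {G H : Type*} [Group G] [Group H] (φ : G →* H)
    (hsurj : Function.Surjective φ) (hker : φ.ker ≤ Subgroup.center G)
    (hH : IsPolycyclic H) :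
    IsPolycyclic ↥(commutator G) := by
  obtain ⟨hsolv, hnoeth⟩ := hH
  haveI : Group.IsSolvable H := hsolv
  haveI hkersolv : Group.IsSolvable ↥φ.ker := by
    apply Group.isSolvable_of_comm
    intro a b
    exact Subtype.ext ((Subgroup.mem_center_iff.mp (hker b.2)) ↑a)
  haveI : Group.IsSolvable G :=
    Group.isSolvable_of_ker_le_range φ.ker.subtype φ (by rw [Subgroup.range_subtype])
  refine ⟨(inferInstance : Group.IsSolvable _), ?_⟩
  -- a finite presentation of H
  obtain ⟨n, hn⟩ := hsolv.solvable
  obtain ⟨α, hαfin, π, hπsurj, S, hSfin, hSnc⟩ := finPres_aux n H ‹Group H› (fun K => hnoeth K) hn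
  haveI := hαfin
  classical
  -- lift through φ
  let θ : FreeGroup α →* G :=
    FreeGroup.lift fun x => Function.surjInv hsurj (π (FreeGroup.of x))
  have hφθ : ∀ w, φ (θ w) = π w := by
    have h : φ.comp θ = π := by
      apply FreeGroup.ext_hom
      intro x
      rw [MonoidHom.comp_apply,
        show θ (FreeGroup.of x) = Function.surjInv hsurj (π (FreeGroup.of x))
          from FreeGroup.lift_apply_of]
      exact Function.surjInv_eq hsurj _
    exact fun w => DFunLike.congr_fun h w
  have hdec : ∀ g : G, ∃ w, ∃ z ∈ φ.ker, g = θ w * z := by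
    intro g
    obtain ⟨w, hw⟩ := hπsurj (φ g)
    refine ⟨w, (θ w)⁻¹ * g, ?_, by group⟩
    rw [MonoidHom.mem_ker, map_mul, map_inv, hφθ, hw]
    simp
  have hSker : ∀ s ∈ S, π s = 1 := by
    intro s hs
    have : s ∈ π.ker := hSnc ▸ Subgroup.subset_normalClosure hs
    exact this
  -- the image of the relation subgroup is a f.g. central subgroup
  set V : Subgroup G := Subgroup.closure (θ '' S) with hV
  have hVcen : V ≤ Subgroup.center G := by
    rw [hV, Subgroup.closure_le]
    rintro _ ⟨s, hs, rfl⟩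
    have hm : θ s ∈ φ.ker := by rw [MonoidHom.mem_ker, hφθ s]; exact hSker s hs
    exact hker hm
  haveI hVnorm : V.Normal := by
    constructor
    intro v hv g
    have hcomm := Subgroup.mem_center_iff.mp (hVcen hv) g
    rw [show g * v * g⁻¹ = v by rw [hcomm]; group]
    exact hv
  have hVfg : V.FG := by
    rw [hV]
    exact (Subgroup.fg_iff _).mpr ⟨θ '' S, rfl, hSfin.image θ⟩
  have hmapker : (π.ker).map θ ≤ V := by
    rw [Subgroup.map_le_iff_le_comap, ← hSnc]
    haveI : (V.comap θ).Normal := hVnorm.comap θ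
    apply Subgroup.normalClosure_le_normal
    intro s hs
    exact Subgroup.mem_comap.mpr (Subgroup.subset_closure ⟨s, hs, rfl⟩)
  -- the commutator subgroup of G is the image of the free commutator subgroup
  have hcommeq : commutator G = (commutator (FreeGroup α)).map θ := by
    apply le_antisymm
    · rw [_root_.commutator_def, Subgroup.commutator_le]
      intro g1 h1 g2 h2
      obtain ⟨w1, z1, hz1, rfl⟩ := hdec g1
      obtain ⟨w2, z2, hz2, rfl⟩ := hdec g2
      rw [comm_mul_central _ _ _ _ (hker hz1) (hker hz2), ← map_commutatorElement]
      exact Subgroup.mem_map_of_mem θ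
        (Subgroup.commutator_mem_commutator (Subgroup.mem_top _) (Subgroup.mem_top _))
    · rw [_root_.commutator_def, Subgroup.map_commutator]
      exact Subgroup.commutator_mono le_top le_top
  have hMV : φ.ker ⊓ commutator G ≤ V := by
    rintro x ⟨hx1, hx2⟩
    rw [hcommeq] at hx2
    obtain ⟨w, hw, rfl⟩ := hx2
    apply hmapker
    apply Subgroup.mem_map_of_mem θ
    rw [MonoidHom.mem_ker, ← hφθ]
    exact hx1
  -- Noetherian part
  intro L
  apply fg_of_map_of_inf_ker (commutator G).subtype L
  · apply fg_of_map_of_inf_ker φ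
    · exact hnoeth _
    · refine fg_of_le_comm V _ hVfg
        (fun x y hx hy => Subgroup.mem_center_iff.mp (hVcen hy) x) ?_
      exact le_trans (inf_le_inf_left _ (Subgroup.map_subtype_le L)) hMV
  · rw [Subgroup.ker_subtype, bot_inf_eq]
    exact fg_bot
end

section
/- Let p be a prime. Let G and H be groups and let φ : G → H be a surjective group homomorphism whose kernel is contained in the center of G (i.e., G is a central extension of H). If H is a finite p-group, then the commutator subgroup [G, G] is a finite p-group. -/
open scoped commutatorElement

/-- If `φ : G → H` is a surjective group homomorphism whose kernel is contained in the center
of `G` (i.e. `G` is a central extension of `H`) and `H` is a finite `p`-group, then the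
commutator subgroup `[G, G]` is a finite `p`-group. -/
theorem commutator_finite_pGroup_of_central_extension
    {p : ℕ} (hp : p.Prime) {G H : Type*} [Group G] [Group H] (φ : G →* H)
    (hsurj : Function.Surjective φ) (hker : φ.ker ≤ Subgroup.center G)
    (hHfin : Finite H) (hHp : IsPGroup p H) :
    Finite ↥(commutator G) ∧ IsPGroup p ↥(commutator G) := by
  haveI := Fact.mk hp
  have hrange : φ.range = ⊤ := MonoidHom.range_eq_top.mpr hsurj
  have hkerindex : φ.ker.index = Nat.card H := by
    rw [Subgroup.index_ker, hrange]
    exact Nat.card_congr (Equiv.Set.univ H)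
  have hHcard : Nat.card H ≠ 0 := Nat.card_pos.ne'
  -- center has finite index
  have hdvd : (Subgroup.center G).index ∣ Nat.card H := by
    rw [← hkerindex]; exact Subgroup.index_dvd_of_le hker
  haveI : (Subgroup.center G).FiniteIndex :=
    ⟨fun h => hHcard (by simpa [h] using hdvd)⟩
  -- the commutator set is finite, since commutators only depend on cosets of the center
  haveI : Finite (G ⧸ Subgroup.center G) :=
    (Subgroup.center G).finite_quotient_of_finiteIndex
  have key1 : ∀ a b z : G, z ∈ Subgroup.center G → ⁅a * z, b⁆ = ⁅a, b⁆ := by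
    intro a b z hz
    have hzb : z * b = b * z := ((Subgroup.mem_center_iff.mp hz) b).symm
    calc ⁅a * z, b⁆ = a * (z * b * z⁻¹) * a⁻¹ * b⁻¹ := by group
      _ = a * b * a⁻¹ * b⁻¹ := by rw [hzb, mul_inv_cancel_right]
      _ = ⁅a, b⁆ := by group
  have key2 : ∀ a b w : G, w ∈ Subgroup.center G → ⁅a, b * w⁆ = ⁅a, b⁆ := by
    intro a b w hw
    have hwa : w * a⁻¹ = a⁻¹ * w := ((Subgroup.mem_center_iff.mp hw) a⁻¹).symm
    calc ⁅a, b * w⁆ = a * b * (w * a⁻¹ * w⁻¹) * b⁻¹ := by group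
      _ = a * b * a⁻¹ * b⁻¹ := by rw [hwa, mul_inv_cancel_right]
      _ = ⁅a, b⁆ := by group
  have hwd : ∀ (a b c d : G), a⁻¹ * c ∈ Subgroup.center G → b⁻¹ * d ∈ Subgroup.center G →
      ⁅a, b⁆ = ⁅c, d⁆ := by
    intro a b c d hac hbd
    rw [show c = a * (a⁻¹ * c) by group, show d = b * (b⁻¹ * d) by group,
      key1 _ _ _ hac, key2 _ _ _ hbd]
  haveI : Finite (commutatorSet G) := by
    set Q := G ⧸ Subgroup.center G
    let f : Q → Q → G := Quotient.lift₂ (fun a b => ⁅a, b⁆)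
      (fun a b c d hac hbd => hwd a b c d
        (QuotientGroup.leftRel_apply.mp hac)
        (QuotientGroup.leftRel_apply.mp hbd))
    have hsub : commutatorSet G ⊆ Set.range (fun q : Q × Q => f q.1 q.2) := by
      rintro x ⟨a, b, rfl⟩
      exact ⟨(QuotientGroup.mk a, QuotientGroup.mk b), rfl⟩
    exact (Set.finite_range _).subset hsub
  refine ⟨inferInstance, ?_⟩
  -- p-group part via the transfer homomorphism
  obtain ⟨k, hk⟩ := IsPGroup.iff_card.mp hHp
  obtain ⟨m, hm, hmi⟩ := (Nat.dvd_prime_pow hp).mp (hk ▸ hdvd)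
  intro g
  refine ⟨m, ?_⟩
  have hmem : (g : G) ∈ (MonoidHom.transferCenterPow G).ker := by
    have hle : commutator G ≤ (MonoidHom.transferCenterPow G).ker := by
      rw [commutator_eq_closure, Subgroup.closure_le]
      rintro x ⟨a, b, rfl⟩
      rw [SetLike.mem_coe, MonoidHom.mem_ker, commutatorElement_def]
      have hc : (MonoidHom.transferCenterPow G b : G) * (MonoidHom.transferCenterPow G a : G) =
          (MonoidHom.transferCenterPow G a : G) * (MonoidHom.transferCenterPow G b : G) :=
        Subgroup.mem_center_iff.mp (MonoidHom.transferCenterPow G a).2 _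
      apply Subtype.ext
      simp only [map_mul, map_inv, Subgroup.coe_mul, Subgroup.coe_inv, OneMemClass.coe_one]
      rw [← hc]
      group
    exact hle g.2
  rw [MonoidHom.mem_ker] at hmem
  have hpow : (g : G) ^ (Subgroup.center G).index = 1 := by
    have := congrArg (Subtype.val) hmem
    rwa [MonoidHom.transferCenterPow_apply] at this
  ext
  push_cast
  rw [← hmi, hpow]
end

section
/- Let G and H be groups and let φ : G → H be a surjective group homomorphism whose kernel is contained in the center of G (i.e., G is a central extension of H). If H is super-solvable, then the commutator subgroup [G, G] is super-solvable. -/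
/-- A group `K` is *super-solvable* if there is a finite chain of subgroups
`1 = K₀ ≤ K₁ ≤ ⋯ ≤ Kₙ = K` such that each `Kᵢ` is normal in `K` and each quotient
`K_{i+1}/Kᵢ` is cyclic (i.e. `K_{i+1}` is generated over `Kᵢ` by a single element). -/
def IsSupersolvable (G : Type*) [Group G] : Prop :=
  ∃ (n : ℕ) (K : Fin (n + 1) → Subgroup G),
    Monotone K ∧ K 0 = ⊥ ∧ K (Fin.last n) = ⊤ ∧
    (∀ i, (K i).Normal) ∧
    ∀ i : Fin n, ∃ g ∈ K i.succ, K i.succ ≤ K i.castSucc ⊔ Subgroup.zpowers g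

section CentralExtensionAux

open scoped commutatorElement

variable {G H X : Type*} [Group G] [Group H] [Group X]

/-- commutator unchanged when first argument changes by a central element -/
lemma comm_eq_of_central {φ : G →* H} (hker : φ.ker ≤ Subgroup.center G)
    {x y : G} (hxy : φ x = φ y) (z : G) : ⁅x, z⁆ = ⁅y, z⁆ := by
  have hw : y⁻¹ * x ∈ φ.ker := by
    rw [MonoidHom.mem_ker, map_mul, map_inv, hxy, inv_mul_cancel]
  have hc := (Subgroup.mem_center_iff.mp (hker hw))
  have hx : x = y * (y⁻¹ * x) := by group
  rw [hx]
  simp only [commutatorElement_def]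
  have h1 := hc z
  have h2 := hc (y⁻¹)
  -- y * w * z * (y*w)⁻¹ * z⁻¹ = y * z * y⁻¹ * z⁻¹  where w := y⁻¹*x central
  set w := y⁻¹ * x
  calc y * w * z * (y * w)⁻¹ * z⁻¹ = y * (w * z) * w⁻¹ * y⁻¹ * z⁻¹ := by group
    _ = y * (z * w) * w⁻¹ * y⁻¹ * z⁻¹ := by rw [h1]
    _ = y * z * y⁻¹ * z⁻¹ := by group

lemma pow_mem_normal_mul (N : Subgroup H) (hN : N.Normal) {k : H} (hk : k ∈ N) (c : H) :
    ∀ s : ℤ, ∃ k' ∈ N, (k * c) ^ s = k' * c ^ s := by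
  intro s
  induction s using Int.induction_on with
  | zero => exact ⟨1, N.one_mem, by simp⟩
  | succ n ih =>
    obtain ⟨k', hk', hs⟩ := ih
    refine ⟨k' * (c ^ (n:ℤ) * k * (c ^ (n:ℤ))⁻¹), N.mul_mem hk' (hN.conj_mem _ hk _), ?_⟩
    have : (k * c) ^ ((n:ℤ) + 1) = (k * c) ^ (n:ℤ) * (k * c) := by
      rw [zpow_add, zpow_one]
    rw [this, hs, zpow_add, zpow_one]
    group
  | pred n ih =>
    obtain ⟨k', hk', hs⟩ := ih
    refine ⟨k' * (c ^ (-(n:ℤ) - 1) * k⁻¹ * (c ^ (-(n:ℤ) - 1))⁻¹),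
      N.mul_mem hk' (hN.conj_mem _ (N.inv_mem hk) _), ?_⟩
    have : (k * c) ^ (-(n:ℤ) - 1) = (k * c) ^ (-(n:ℤ)) * (k * c)⁻¹ := by
      rw [zpow_sub, zpow_one]
    rw [this, hs]
    group

lemma mem_sup_normal_decomp {A : Subgroup H} (hA : A.Normal) {h x : H}
    (hx : x ∈ A ⊔ Subgroup.zpowers h) : ∃ k ∈ A, ∃ t : ℤ, x = k * h ^ t := by
  haveI := hA
  have hx' : x ∈ (↑(A ⊔ Subgroup.zpowers h) : Set H) := hx
  rw [Subgroup.normal_mul] at hx'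
  obtain ⟨k, hk, b, hb, rfl⟩ := hx'
  obtain ⟨t, ht⟩ := Subgroup.mem_zpowers_iff.mp hb
  exact ⟨k, hk, t, by rw [ht]⟩



lemma step_lemma (ψ : X →* H) {A B : Subgroup H} (hA : A.Normal) (hAB : A ≤ B)
    {h : H} (hh : h ∈ B) (hB : B ≤ A ⊔ Subgroup.zpowers h) :
    ∃ d ∈ Subgroup.comap ψ B,
      Subgroup.comap ψ B ≤ Subgroup.comap ψ A ⊔ Subgroup.zpowers d := by
  set M : AddSubgroup ℤ :=
    { carrier := {t : ℤ | ∃ x : X, ∃ k ∈ A, ψ x = k * h ^ t}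
      zero_mem' := ⟨1, 1, A.one_mem, by simp⟩
      add_mem' := by
        rintro t₁ t₂ ⟨x₁, k₁, hk₁, hx₁⟩ ⟨x₂, k₂, hk₂, hx₂⟩
        refine ⟨x₁ * x₂, k₁ * (h ^ t₁ * k₂ * (h ^ t₁)⁻¹),
          A.mul_mem hk₁ (hA.conj_mem _ hk₂ _), ?_⟩
        rw [map_mul, hx₁, hx₂, zpow_add]
        group
      neg_mem' := by
        rintro t ⟨x, k, hk, hx⟩
        refine ⟨x⁻¹, h ^ (-t) * k⁻¹ * (h ^ (-t))⁻¹, hA.conj_mem _ (A.inv_mem hk) _, ?_⟩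
        rw [map_inv, hx]
        group }
  obtain ⟨a, ha⟩ := Int.subgroup_cyclic M
  have haM : a ∈ M := ha ▸ AddSubgroup.mem_closure_singleton.mpr ⟨1, one_smul _ a⟩
  obtain ⟨x₀, k₀, hk₀, hx₀⟩ := haM
  refine ⟨x₀, ?_, ?_⟩
  · exact Subgroup.mem_comap.mpr (hx₀ ▸ B.mul_mem (hAB hk₀) (B.zpow_mem hh a))
  · intro y hy
    obtain ⟨k, hk, t, ht⟩ := mem_sup_normal_decomp hA (hB (Subgroup.mem_comap.mp hy))
    have htM : t ∈ M := ⟨y, k, hk, ht⟩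
    obtain ⟨s, hs⟩ := AddSubgroup.mem_closure_singleton.mp (ha ▸ htM)
    obtain ⟨k', hk', hpow⟩ := pow_mem_normal_mul A hA hk₀ (h ^ a) s
    have hyd : y * x₀ ^ (-s) ∈ Subgroup.comap ψ A := by
      rw [Subgroup.mem_comap, map_mul, map_zpow, ht, hx₀]
      have he : k * h ^ t * (k₀ * h ^ a) ^ (-s) = k * k'⁻¹ := by
        rw [zpow_neg, hpow, ← zpow_mul, mul_inv_rev, ← hs, smul_eq_mul]
        have : (a : ℤ) * s = s * a := mul_comm a s
        rw [this]
        group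
      rw [he]
      exact A.mul_mem hk (A.inv_mem hk')
    have : y = (y * x₀ ^ (-s)) * x₀ ^ s := by group
    rw [this]
    exact Subgroup.mul_mem _ (le_sup_left (α := Subgroup X) hyd)
      (le_sup_right (α := Subgroup X) (Subgroup.zpow_mem _ (Subgroup.mem_zpowers x₀) s))


lemma fg_iff_set (P : Subgroup X) : P.FG ↔ ∃ S : Set X, Subgroup.closure S = P ∧ S.Finite :=
  Subgroup.fg_iff P

lemma fg_map {f : X →* H} {P : Subgroup X} (hP : P.FG) : (P.map f).FG := by
  obtain ⟨S, hS, hfin⟩ := (Subgroup.fg_iff P).mp hP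
  exact (Subgroup.fg_iff _).mpr ⟨f '' S, by rw [← MonoidHom.map_closure, hS], hfin.image f⟩

lemma fg_of_map_injective {f : X →* H} (hf : Function.Injective f) {P : Subgroup X}
    (hP : (P.map f).FG) : P.FG := by
  obtain ⟨S, hS, hfin⟩ := (Subgroup.fg_iff _).mp hP
  refine (Subgroup.fg_iff P).mpr ⟨f ⁻¹' S ∩ ↑P, ?_, ?_⟩
  · apply Subgroup.map_injective hf
    rw [MonoidHom.map_closure]
    have : f '' (f ⁻¹' S ∩ ↑P) = S := by
      apply Set.eq_of_subset_of_subset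
      · rintro y ⟨x, ⟨hx1, -⟩, rfl⟩; exact hx1
      · intro s hs
        have : s ∈ P.map f := hS ▸ Subgroup.subset_closure hs
        obtain ⟨p, hp, rfl⟩ := this
        exact ⟨p, ⟨hs, hp⟩, rfl⟩
    rw [this, hS]
  · exact (hfin.preimage hf.injOn).subset Set.inter_subset_left

lemma subgroup_fg_of_chain {n : ℕ} (K : Fin (n + 1) → Subgroup H)
    (hmono : Monotone K) (h0 : K 0 = ⊥) (hlast : K (Fin.last n) = ⊤)
    (hnorm : ∀ i, (K i).Normal)
    (hcyc : ∀ i : Fin n, ∃ g ∈ K i.succ, K i.succ ≤ K i.castSucc ⊔ Subgroup.zpowers g)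
    (Q : Subgroup H) : Q.FG := by
  have key : ∀ i : Fin (n + 1), (Subgroup.comap Q.subtype (K i)).FG := by
    intro i
    induction i using Fin.induction with
    | zero =>
      have hb : Subgroup.comap Q.subtype (K 0) = ⊥ := by
        rw [h0]
        ext x
        simp only [Subgroup.mem_comap, Subgroup.mem_bot, Subgroup.coe_subtype]
        exact ⟨fun h => Subtype.ext h, fun h => by rw [h]; rfl⟩
      rw [hb]
      exact (Subgroup.fg_iff _).mpr ⟨∅, by simp, Set.finite_empty⟩
    | succ i ih =>
      obtain ⟨h, hh, hB⟩ := hcyc i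
      obtain ⟨d, hd, hled⟩ := step_lemma Q.subtype (hnorm i.castSucc)
        (hmono (Fin.castSucc_le_succ i)) hh hB
      obtain ⟨S, hS, hfin⟩ := (Subgroup.fg_iff _).mp ih
      refine (Subgroup.fg_iff _).mpr ⟨S ∪ {d}, le_antisymm ?_ ?_, hfin.union (Set.finite_singleton d)⟩
      · rw [Subgroup.closure_le]
        rintro x (hxS | rfl)
        · exact Subgroup.comap_mono (f := Q.subtype) (hmono (Fin.castSucc_le_succ i)) (hS ▸ Subgroup.subset_closure hxS)
        · exact hd
      · intro x hx
        rw [Subgroup.closure_union, hS, ← Subgroup.zpowers_eq_closure]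
        exact hled hx
  have := key (Fin.last n)
  rw [hlast] at this
  have h2 : (Subgroup.map Q.subtype ⊤).FG := fg_map this
  rwa [← MonoidHom.range_eq_map, Subgroup.range_subtype] at h2


-- commutator identities
lemma comm_mul_left {G : Type*} [Group G] (a b z : G) :
    ⁅a * b, z⁆ = (a * ⁅b, z⁆ * a⁻¹) * ⁅a, z⁆ := by
  simp only [commutatorElement_def]; group

lemma comm_mul_right {G : Type*} [Group G] (a z w : G) :
    ⁅a, z * w⁆ = ⁅a, z⁆ * (z * ⁅a, w⁆ * z⁻¹) := by
  simp only [commutatorElement_def]; group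

lemma conj_comm_elt {G : Type*} [Group G] (u a b : G) :
    u * ⁅a, b⁆ * u⁻¹ = ⁅u * a * u⁻¹, u * b * u⁻¹⁆ := by
  simp only [commutatorElement_def]; group

lemma comm_inv_right {G : Type*} [Group G] (a z : G) :
    ⁅a, z⁻¹⁆ = z⁻¹ * ⁅a, z⁆⁻¹ * z := by
  simp only [commutatorElement_def]; group

/-- Main induction: the intersection of the kernel of a central quotient with the
commutator subgroup is finitely generated, when the target has a supersolvable chain. -/
lemma ker_inf_commutator_fg : ∀ (n : ℕ) {G : Type*} {H : Type*} [Group G] [Group H]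
    (φ : G →* H) (_hsurj : Function.Surjective φ) (_hker : φ.ker ≤ Subgroup.center G)
    (K : Fin (n + 1) → Subgroup H) (_hmono : Monotone K) (_h0 : K 0 = ⊥)
    (_hlast : K (Fin.last n) = ⊤) (_hnorm : ∀ i, (K i).Normal)
    (_hcyc : ∀ i : Fin n, ∃ g ∈ K i.succ, K i.succ ≤ K i.castSucc ⊔ Subgroup.zpowers g),
    (φ.ker ⊓ ⁅(⊤ : Subgroup G), (⊤ : Subgroup G)⁆).FG := by
  intro n
  induction n with
  | zero =>
    intro G H _ _ φ hsurj hker K hmono h0 hlast hnorm hcyc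
    have hHtriv : (⊥ : Subgroup H) = ⊤ := by rw [← h0, ← hlast]; rfl
    have hcent : ∀ x : G, x ∈ Subgroup.center G := by
      intro x
      apply hker
      rw [MonoidHom.mem_ker, ← Subgroup.mem_bot, hHtriv]
      trivial
    have hcomm : ⁅(⊤ : Subgroup G), (⊤ : Subgroup G)⁆ = ⊥ := by
      rw [eq_bot_iff]
      rw [Subgroup.commutator_le]
      intro g₁ _ g₂ _
      rw [Subgroup.mem_bot, commutatorElement_eq_one_iff_commute]
      exact (Subgroup.mem_center_iff.mp (hcent g₁) g₂).symm
    rw [hcomm, inf_bot_eq]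
    exact (Subgroup.fg_iff _).mpr ⟨∅, by simp, Set.finite_empty⟩
  | succ n IH =>
    intro G H _ _ φ hsurj hker K hmono h0 hlast hnorm hcyc
    -- the second-to-last subgroup of the chain
    set Hn : Subgroup H := K (Fin.castSucc (Fin.last n)) with hHn
    haveI hHnN : Hn.Normal := hnorm _
    -- top cyclic generator
    obtain ⟨htop, -, hbound⟩ := hcyc (Fin.last n)
    rw [Fin.succ_last, hlast] at hbound
    -- lift of htop
    obtain ⟨g, hg⟩ := hsurj htop
    -- the pullback G* and its commutator
    set Gs : Subgroup G := Subgroup.comap φ Hn with hGs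
    haveI hGsN : Gs.Normal := (hnorm _).comap φ
    set Ds : Subgroup G := ⁅Gs, Gs⁆ with hDs
    haveI hDsN : Ds.Normal := Subgroup.commutator_normal Gs Gs
    set q : G →* G ⧸ Ds := QuotientGroup.mk' Ds with hq
    have hqker : ∀ {x : G}, x ∈ Ds → q x = 1 := by
      intro x hx
      rw [← MonoidHom.mem_ker, QuotientGroup.ker_mk']
      exact hx
    -- decomposition of G
    have DECX : ∀ x : G, ∃ a ∈ Gs, ∃ t : ℤ, x = a * g ^ t := by
      intro x
      obtain ⟨k, hk, t, ht⟩ := mem_sup_normal_decomp hHnN (hbound (Subgroup.mem_top (φ x)))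
      refine ⟨x * g ^ (-t), ?_, t, by group⟩
      have : φ (x * g ^ (-t)) = k := by
        rw [map_mul, map_zpow, hg, ht]
        group
      exact Subgroup.mem_comap.mpr (this ▸ hk)
    -- all commutators of H lie in Hn
    have commH : ∀ a b : H, ⁅a, b⁆ ∈ Hn := by
      intro a b
      have hd : ∀ x : H, ∃ t : ℤ, QuotientGroup.mk' Hn x = (QuotientGroup.mk' Hn htop) ^ t := by
        intro x
        obtain ⟨k, hk, t, ht⟩ := mem_sup_normal_decomp hHnN (hbound (Subgroup.mem_top x))
        refine ⟨t, ?_⟩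
        rw [ht, map_mul, map_zpow]
        have : QuotientGroup.mk' Hn k = 1 := by
          rw [← MonoidHom.mem_ker, QuotientGroup.ker_mk']
          exact hk
        rw [this, one_mul]
      obtain ⟨s, hs⟩ := hd a
      obtain ⟨t, ht⟩ := hd b
      have : QuotientGroup.mk' Hn ⁅a, b⁆ = 1 := by
        rw [map_commutatorElement, commutatorElement_eq_one_iff_commute, hs, ht]
        exact Commute.zpow_zpow (Commute.refl _) s t
      rwa [← MonoidHom.mem_ker, QuotientGroup.ker_mk'] at this
    -- membership helpers
    have memGs_comm : ∀ x y : G, x ∈ Gs → ⁅x, y⁆ ∈ Gs := by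
      intro x y hx
      have : ⁅x, y⁆ = x * (y * x⁻¹ * y⁻¹) := by group
      rw [this]
      exact Gs.mul_mem hx (hGsN.conj_mem _ (Gs.inv_mem hx) y)
    have qconj : ∀ a c : G, a ∈ Gs → c ∈ Gs → q (a * c * a⁻¹) = q c := by
      intro a c ha hc
      have : a * c * a⁻¹ = ⁅a, c⁆ * c := by group
      rw [this, map_mul, hqker (Subgroup.commutator_mem_commutator ha hc), one_mul]
    have qcomm : ∀ a c : G, a ∈ Gs → c ∈ Gs → q a * q c = q c * q a := by
      intro a c ha hc
      have h1 : q ⁅a, c⁆ = 1 := hqker (Subgroup.commutator_mem_commutator ha hc)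
      rw [map_commutatorElement, commutatorElement_eq_one_iff_commute] at h1
      exact h1.eq
    -- the lifting map σ and the homomorphism f
    have hσ : ∀ h : ↥Hn, ∃ x : G, x ∈ Gs ∧ φ x = (h : H) := by
      intro h
      obtain ⟨x, hx⟩ := hsurj (h : H)
      exact ⟨x, Subgroup.mem_comap.mpr (hx ▸ h.2), hx⟩
    choose σ hσGs hσφ using hσ
    have fmul : ∀ h₁ h₂ : ↥Hn,
        q ⁅σ (h₁ * h₂), g⁆ = q ⁅σ h₁, g⁆ * q ⁅σ h₂, g⁆ := by
      intro h₁ h₂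
      have hφ : φ (σ (h₁ * h₂)) = φ (σ h₁ * σ h₂) := by
        rw [map_mul, hσφ, hσφ, hσφ]; rfl
      rw [comm_eq_of_central hker hφ g, comm_mul_left, map_mul,
        qconj _ _ (hσGs h₁) (memGs_comm _ _ (hσGs h₂)),
        qcomm _ _ (memGs_comm _ g (hσGs h₂)) (memGs_comm _ g (hσGs h₁))]
    set f : ↥Hn →* G ⧸ Ds := MonoidHom.mk' (fun h => q ⁅σ h, g⁆) fmul with hf
    set R : Subgroup (G ⧸ Ds) := f.range with hR
    have f_eq : ∀ (v : G) (hv : v ∈ Gs), q ⁅v, g⁆ ∈ R := by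
      intro v hv
      have hvHn : φ v ∈ Hn := Subgroup.mem_comap.mp hv
      refine ⟨⟨φ v, hvHn⟩, ?_⟩
      show q ⁅σ ⟨φ v, hvHn⟩, g⁆ = q ⁅v, g⁆
      exact congrArg q (comm_eq_of_central hker (by rw [hσφ]) g)
    -- conjugation stability of R
    have CONJ : ∀ (u : G) (r : G ⧸ Ds), r ∈ R → (q u) * r * (q u)⁻¹ ∈ R := by
      intro u r hr
      obtain ⟨h, rfl⟩ := hr
      show q u * q ⁅σ h, g⁆ * (q u)⁻¹ ∈ R
      rw [← map_inv, ← map_mul, ← map_mul, conj_comm_elt]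
      set v := u * σ h * u⁻¹ with hv
      have hvGs : v ∈ Gs := hGsN.conj_mem _ (hσGs h) u
      set c := g⁻¹ * (u * g * u⁻¹) with hc
      have hcGs : c ∈ Gs := by
        have : φ c = ⁅(φ g)⁻¹, φ u⁆ := by
          rw [hc]
          simp only [map_mul, map_inv, commutatorElement_def]
          group
        exact Subgroup.mem_comap.mpr (this ▸ commH _ _)
      have hug : u * g * u⁻¹ = g * c := by rw [hc]; group
      rw [hug, comm_mul_right, map_mul, conj_comm_elt g v c,
        hqker (Subgroup.commutator_mem_commutator (hGsN.conj_mem _ hvGs g) (hGsN.conj_mem _ hcGs g)),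
        mul_one]
      exact f_eq v hvGs
    have CONJ' : ∀ (u c : G), q c ∈ R → q (u * c * u⁻¹) ∈ R := by
      intro u c hc
      simpa [map_mul, map_inv] using CONJ u _ hc
    -- powers of g
    have POWmem : ∀ a : G, a ∈ Gs → ∀ t : ℤ, q ⁅a, g ^ t⁆ ∈ R := by
      intro a ha t
      induction t using Int.induction_on with
      | zero => simp only [zpow_zero, commutatorElement_one_right, map_one]; exact R.one_mem
      | succ k ih =>
        have : (g : G) ^ ((k : ℤ) + 1) = g ^ (k : ℤ) * g := by rw [zpow_add, zpow_one]
        rw [this, comm_mul_right, map_mul]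
        exact R.mul_mem ih (CONJ' (g ^ (k : ℤ)) _ (f_eq a ha))
      | pred k ih =>
        have : (g : G) ^ (-(k : ℤ) - 1) = g ^ (-(k : ℤ)) * g⁻¹ := by
          rw [zpow_sub, zpow_one, zpow_neg]
        rw [this, comm_mul_right, map_mul]
        refine R.mul_mem ih ?_
        have h2 : q ⁅a, g⁻¹⁆ ∈ R := by
          rw [comm_inv_right]
          have hge : g⁻¹ * ⁅a, g⁆⁻¹ * g = g⁻¹ * ⁅a, g⁆⁻¹ * (g⁻¹)⁻¹ := by group
          rw [hge]
          exact CONJ' g⁻¹ _ (by rw [map_inv]; exact R.inv_mem (f_eq a ha))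
        exact CONJ' (g ^ (-(k : ℤ))) _ h2
    -- every commutator is in R mod Ds
    have MAIN : ∀ x y : G, q ⁅x, y⁆ ∈ R := by
      intro x y
      obtain ⟨a, ha, k, rfl⟩ := DECX x
      obtain ⟨b, hb, l, rfl⟩ := DECX y
      rw [comm_mul_left, map_mul]
      refine R.mul_mem ?_ ?_
      · apply CONJ' a
        have h1 : ⁅g ^ k, b * g ^ l⁆ = ⁅b * g ^ l, g ^ k⁆⁻¹ :=
          (commutatorElement_inv (b * g ^ l) (g ^ k)).symm
        have hzz : ⁅g ^ l, g ^ k⁆ = 1 :=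
          commutatorElement_eq_one_iff_commute.mpr (Commute.zpow_zpow (Commute.refl g) l k)
        have h2 : ⁅b * g ^ l, g ^ k⁆ = ⁅b, g ^ k⁆ := by
          rw [comm_mul_left, hzz]
          group
        rw [h1, h2, map_inv]
        exact R.inv_mem (POWmem b hb k)
      · rw [comm_mul_right, map_mul]
        refine R.mul_mem ?_ (CONJ' b _ (POWmem a ha l))
        rw [hqker (Subgroup.commutator_mem_commutator ha hb)]
        exact R.one_mem
    -- the chain on Hn
    let K' : Fin (n + 1) → Subgroup ↥Hn := fun i => Subgroup.comap Hn.subtype (K i.castSucc)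
    have hmono' : Monotone K' := fun i j hij =>
      Subgroup.comap_mono (hmono (Fin.castSucc_le_castSucc_iff.mpr hij))
    have h0' : K' 0 = ⊥ := by
      show Subgroup.comap Hn.subtype (K (Fin.castSucc 0)) = ⊥
      rw [Fin.castSucc_zero, h0]
      ext x
      simp only [Subgroup.mem_comap, Subgroup.mem_bot, Subgroup.coe_subtype]
      exact ⟨fun h => Subtype.ext h, fun h => by rw [h]; rfl⟩
    have hlast' : K' (Fin.last n) = ⊤ := by
      show Subgroup.comap Hn.subtype (K (Fin.castSucc (Fin.last n))) = ⊤
      exact Subgroup.subgroupOf_self _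
    have hnorm' : ∀ i, (K' i).Normal := fun i => (hnorm _).comap _
    have hcyc' : ∀ i : Fin n, ∃ d ∈ K' i.succ, K' i.succ ≤ K' i.castSucc ⊔ Subgroup.zpowers d := by
      intro i
      obtain ⟨h, hh, hb2⟩ := hcyc i.castSucc
      have hstep := step_lemma Hn.subtype (hnorm i.castSucc.castSucc)
        (hmono (Fin.castSucc_le_succ i.castSucc)) hh hb2
      rw [Fin.succ_castSucc] at hstep
      exact hstep
    -- the restricted map ψ : Gs → Hn
    let ψ : ↥Gs →* ↥Hn :=
      (φ.comp Gs.subtype).codRestrict Hn (fun x => Subgroup.mem_comap.mp x.2)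
    have hψval : ∀ x : ↥Gs, (ψ x : H) = φ (x : G) := fun x => rfl
    have hsurj' : Function.Surjective ψ := by
      intro h
      refine ⟨⟨σ h, hσGs h⟩, ?_⟩
      apply Subtype.ext
      rw [hψval]
      exact hσφ h
    have hker' : ψ.ker ≤ Subgroup.center ↥Gs := by
      intro x hx
      have hx1 : (x : G) ∈ φ.ker := by
        rw [MonoidHom.mem_ker, ← hψval x]
        rw [MonoidHom.mem_ker] at hx
        rw [hx]
        rfl
      rw [Subgroup.mem_center_iff]
      intro y
      apply Subtype.ext
      exact Subgroup.mem_center_iff.mp (hker hx1) (y : G)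
    have IHfg : ((ψ.ker ⊓ ⁅(⊤ : Subgroup ↥Gs), ⊤⁆) : Subgroup ↥Gs).FG :=
      IH ψ hsurj' hker' K' hmono' h0' hlast' hnorm' hcyc'
    -- transfer to G
    have hmapker : Subgroup.map Gs.subtype ψ.ker = φ.ker := by
      ext x
      simp only [Subgroup.mem_map, MonoidHom.mem_ker, Subgroup.coe_subtype]
      constructor
      · rintro ⟨y, hy, rfl⟩
        have : (ψ y : H) = 1 := by rw [hy]; rfl
        rwa [hψval] at this
      · intro hx
        have hxGs : x ∈ Gs := Subgroup.mem_comap.mpr (by rw [hx]; exact Hn.one_mem)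
        refine ⟨⟨x, hxGs⟩, ?_, rfl⟩
        apply Subtype.ext
        rw [hψval]
        exact hx
    have hmapcomm : Subgroup.map Gs.subtype ⁅(⊤ : Subgroup ↥Gs), (⊤ : Subgroup ↥Gs)⁆ = Ds := by
      rw [Subgroup.map_commutator, ← MonoidHom.range_eq_map, Subgroup.range_subtype]
    have hE''fg : (φ.ker ⊓ Ds).FG := by
      have hmapped := fg_map (f := Gs.subtype) IHfg
      rwa [Subgroup.map_inf _ _ _ Gs.subtype_injective, hmapker, hmapcomm] at hmapped
    -- now assemble
    set E' : Subgroup G := φ.ker ⊓ ⁅(⊤ : Subgroup G), (⊤ : Subgroup G)⁆ with hE'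
    have hE'le : E' ≤ Subgroup.comap q R :=
      le_trans inf_le_right (Subgroup.commutator_le.mpr fun x _ y _ => MAIN x y)
    have hmapE'R : Subgroup.map q E' ≤ R :=
      (Subgroup.map_mono hE'le).trans (Subgroup.map_comap_le _ _)
    have hQfg : (Subgroup.comap f (Subgroup.map q E')).FG :=
      subgroup_fg_of_chain K' hmono' h0' hlast' hnorm' hcyc' _
    have hmapQ : Subgroup.map f (Subgroup.comap f (Subgroup.map q E')) = Subgroup.map q E' := by
      rw [Subgroup.map_comap_eq]
      exact inf_eq_right.mpr hmapE'R
    have hSfg : (Subgroup.map q E').FG := hmapQ ▸ fg_map hQfg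
    obtain ⟨T, hT, hTfin⟩ := (Subgroup.fg_iff _).mp hE''fg
    obtain ⟨S, hSc, hSfin⟩ := (Subgroup.fg_iff _).mp hSfg
    haveI : Finite ↥S := hSfin.to_subtype
    have hSsub : ∀ s : ↥S, ∃ u : G, u ∈ E' ∧ q u = (s : G ⧸ Ds) := by
      intro s
      have hs : (s : G ⧸ Ds) ∈ Subgroup.map q E' := hSc ▸ Subgroup.subset_closure s.2
      obtain ⟨u, hu, hqu⟩ := hs
      exact ⟨u, hu, hqu⟩
    choose uf hufE hufq using hSsub
    have hUfin : (Set.range uf).Finite := Set.finite_range uf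
    have hqU : q '' Set.range uf = S := by
      ext y
      constructor
      · rintro ⟨x, ⟨s, rfl⟩, rfl⟩
        rw [hufq s]
        exact s.2
      · intro hy
        exact ⟨uf ⟨y, hy⟩, ⟨⟨y, hy⟩, rfl⟩, hufq _⟩
    have hDsE : Ds ≤ ⁅(⊤ : Subgroup G), (⊤ : Subgroup G)⁆ :=
      Subgroup.commutator_mono le_top le_top
    have hTsub : T ⊆ ↑E' := by
      intro t ht
      have : t ∈ φ.ker ⊓ Ds := hT ▸ Subgroup.subset_closure ht
      exact ⟨this.1, hDsE this.2⟩
    have hclker : ∀ w ∈ Subgroup.closure (T ∪ Set.range uf), w ∈ φ.ker := by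
      intro w hw
      refine (Subgroup.closure_le φ.ker).mpr ?_ hw
      rintro z (hz | ⟨s, rfl⟩)
      · exact (hTsub hz).1
      · exact (hufE s).1
    refine (Subgroup.fg_iff _).mpr ⟨T ∪ Set.range uf, le_antisymm ?_ ?_, hTfin.union hUfin⟩
    · rw [Subgroup.closure_le]
      rintro z (hz | ⟨s, rfl⟩)
      · exact hTsub hz
      · exact hufE s
    · intro x hx
      have hqx : q x ∈ Subgroup.map q (Subgroup.closure (T ∪ Set.range uf)) := by
        have h1 : q x ∈ Subgroup.closure S := by
          rw [hSc]
          exact Subgroup.mem_map_of_mem q hx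
        have h2 : Subgroup.closure S ≤ Subgroup.map q (Subgroup.closure (T ∪ Set.range uf)) := by
          have h3 : Subgroup.closure (q '' Set.range uf) ≤
              Subgroup.map q (Subgroup.closure (T ∪ Set.range uf)) := by
            rw [← MonoidHom.map_closure]
            exact Subgroup.map_mono (Subgroup.closure_mono Set.subset_union_right)
          exact le_trans (le_of_eq (congrArg Subgroup.closure hqU.symm)) h3
        exact h2 h1
      obtain ⟨w, hw, hqw⟩ := hqx
      have hwx : w⁻¹ * x ∈ Ds := by
        have hq1 : q (w⁻¹ * x) = 1 := by
          rw [map_mul, map_inv, hqw]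
          group
        rwa [← QuotientGroup.ker_mk' Ds, MonoidHom.mem_ker]
      have hwxT : w⁻¹ * x ∈ Subgroup.closure (T ∪ Set.range uf) := by
        apply Subgroup.closure_mono (Set.subset_union_left (s := T))
        rw [hT]
        exact ⟨φ.ker.mul_mem (φ.ker.inv_mem (hclker w hw)) hx.1, hwx⟩
      have hxw : x = w * (w⁻¹ * x) := by group
      rw [hxw]
      exact Subgroup.mul_mem _ hw hwxT


end CentralExtensionAux

/-- If `φ : G → H` is a surjective group homomorphism whose kernel is contained in the center
of `G` (i.e. `G` is a central extension of `H`) and `H` is super-solvable, then the commutator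
subgroup `[G, G]` is super-solvable. -/
theorem commutator_supersolvable_of_central_extension
    {G H : Type*} [Group G] [Group H] (φ : G →* H)
    (hsurj : Function.Surjective φ) (hker : φ.ker ≤ Subgroup.center G)
    (hH : IsSupersolvable H) :
    IsSupersolvable ↥(commutator G) := by
  obtain ⟨n, K, hmono, h0, hlast, hnorm, hcyc⟩ := hH
  set D : Subgroup G := commutator G with hD
  set ψ : ↥D →* H := φ.comp D.subtype with hψ
  have hψval : ∀ x : ↥D, ψ x = φ (x : G) := fun _ => rfl
  -- the central bottom subgroup
  set ED : Subgroup ↥D := Subgroup.comap D.subtype φ.ker with hED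
  have hcentral : ∀ x : ↥D, x ∈ ED → ∀ d : ↥D, d * x * d⁻¹ = x := by
    intro x hx d
    apply Subtype.ext
    have hc : (d : G) * (x : G) = (x : G) * (d : G) :=
      Subgroup.mem_center_iff.mp (hker hx) (d : G)
    show (d : G) * (x : G) * (d : G)⁻¹ = (x : G)
    rw [hc]
    group
  -- ED is finitely generated
  have hEDfg : ED.FG := by
    apply fg_of_map_injective D.subtype_injective
    have hmap : Subgroup.map D.subtype ED = φ.ker ⊓ ⁅(⊤ : Subgroup G), (⊤ : Subgroup G)⁆ := by
      rw [hED, Subgroup.map_comap_eq, Subgroup.range_subtype, hD, commutator_def, inf_comm]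
    rw [hmap]
    exact ker_inf_commutator_fg n φ hsurj hker K hmono h0 hlast hnorm hcyc
  obtain ⟨VT, hVT, hVfin⟩ := (Subgroup.fg_iff _).mp hEDfg
  classical
  set lst : List ↥D := hVfin.toFinset.toList with hlst
  set m : ℕ := lst.length with hm
  have hlstVT : ∀ x, x ∈ lst ↔ x ∈ VT := by
    intro x
    rw [hlst, Finset.mem_toList, Set.Finite.mem_toFinset]
  -- the bottom chain
  set EC : ℕ → Subgroup ↥D := fun k => Subgroup.closure {x | x ∈ lst.take k} with hEC
  have hEC0 : EC 0 = ⊥ := by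
    rw [hEC]
    simp only [List.take_zero]
    rw [show {x : ↥D | x ∈ ([] : List ↥D)} = (∅ : Set ↥D) by ext x; simp]
    exact Subgroup.closure_empty
  have hECm : EC m = ED := by
    rw [hEC, ← hVT]
    simp only [hm, List.take_length]
    congr 1
    ext x
    exact hlstVT x
  have hECle : ∀ k, EC k ≤ ED := by
    intro k
    rw [hEC, ← hVT]
    apply Subgroup.closure_mono
    intro x hx
    exact (hlstVT x).mp (List.take_subset _ _ hx)
  have hECmono : ∀ k, EC k ≤ EC (k + 1) := by
    intro k
    apply Subgroup.closure_mono
    intro x hx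
    rw [List.take_succ]
    exact List.mem_append_left _ hx
  have hECnorm : ∀ k, (EC k).Normal := by
    intro k
    constructor
    intro x hx d
    rw [hcentral x (hECle k hx) d]
    exact hx
  have hECcyc : ∀ k, k < m → ∃ d ∈ EC (k + 1), EC (k + 1) ≤ EC k ⊔ Subgroup.zpowers d := by
    intro k hk
    refine ⟨lst[k], ?_, ?_⟩
    · apply Subgroup.subset_closure
      show lst[k] ∈ lst.take (k + 1)
      rw [List.take_succ, List.getElem?_eq_getElem hk]
      exact List.mem_append_right _ (by simp)
    · rw [hEC]
      rw [Subgroup.closure_le]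
      intro x hx
      have : x ∈ lst.take k ++ lst[k]?.toList := by rwa [← List.take_succ]
      rcases List.mem_append.mp this with hx1 | hx2
      · exact le_sup_left (α := Subgroup ↥D) (Subgroup.subset_closure hx1)
      · rw [List.getElem?_eq_getElem hk] at hx2
        simp only [Option.toList_some, List.mem_singleton] at hx2
        rw [hx2]
        exact le_sup_right (α := Subgroup ↥D) (Subgroup.mem_zpowers _)
  -- the top chain
  set KH : ℕ → Subgroup H := fun j => K ⟨min j n, by omega⟩ with hKH
  set LC : ℕ → Subgroup ↥D := fun j => Subgroup.comap ψ (KH j) with hLC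
  have hKHmono : Monotone KH := by
    intro j j' hj
    exact hmono (Fin.mk_le_mk.mpr (by omega))
  have hLCmono : Monotone LC := fun j j' hj => Subgroup.comap_mono (hKHmono hj)
  have hLC0 : LC 0 = ED := by
    have h1 : KH 0 = ⊥ := by
      have he : (⟨min 0 n, by omega⟩ : Fin (n + 1)) = 0 := Fin.ext (by simp)
      show K ⟨min 0 n, by omega⟩ = ⊥
      rw [he, h0]
    show Subgroup.comap ψ (KH 0) = ED
    rw [h1, hED]
    ext x
    simp only [Subgroup.mem_comap, Subgroup.mem_bot, MonoidHom.mem_ker]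
    rfl
  have hLCnorm : ∀ j, (LC j).Normal := fun j => (hnorm _).comap ψ
  -- combined chain
  set W : ℕ → Subgroup ↥D := fun k => if k ≤ m then EC k else LC (k - m) with hW
  set N : ℕ := m + n with hN
  have hWle : ∀ k, W k ≤ W (k + 1) := by
    intro k
    rcases le_or_gt (k + 1) m with h1 | h1
    · rw [hW]
      simp only
      rw [if_pos (by omega), if_pos h1]
      exact hECmono k
    · rcases le_or_gt k m with h2 | h2
      · have hkm : k = m := by omega
        rw [hW]
        simp only
        rw [if_pos h2, if_neg (by omega), hkm, hECm, ← hLC0]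
        exact hLCmono (by omega)
      · rw [hW]
        simp only
        rw [if_neg (by omega), if_neg (by omega)]
        exact hLCmono (by omega)
  have hWmono : Monotone W := monotone_nat_of_le_succ hWle
  have hW0 : W 0 = ⊥ := by
    rw [hW]
    simp only
    rw [if_pos (by omega)]
    exact hEC0
  have hWN : W N = ⊤ := by
    rcases Nat.eq_zero_or_pos n with hn | hn
    · -- H is trivial-chained: ⊥ = ⊤ in H
      have hbt : (⊥ : Subgroup H) = ⊤ := by
        rw [← h0, ← hlast]
        congr 1
        exact Fin.ext (by simp [hn])
      have hEDtop : ED = ⊤ := by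
        rw [eq_top_iff]
        intro x _
        rw [hED, Subgroup.mem_comap, MonoidHom.mem_ker, ← Subgroup.mem_bot, hbt]
        trivial
      rw [hW]
      simp only
      rw [if_pos (by omega), hN, hn, Nat.add_zero, hECm, hEDtop]
    · rw [hW]
      simp only
      rw [if_neg (by omega)]
      have hNm : N - m = n := by omega
      have hKHn : KH n = ⊤ := by
        have he : (⟨min n n, by omega⟩ : Fin (n + 1)) = Fin.last n := Fin.ext (by simp)
        show K ⟨min n n, by omega⟩ = ⊤
        rw [he, hlast]
      rw [hNm]
      show Subgroup.comap ψ (KH n) = ⊤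
      rw [hKHn, Subgroup.comap_top]
  have hWnorm : ∀ k, (W k).Normal := by
    intro k
    rw [hW]
    simp only
    split
    · exact hECnorm k
    · exact hLCnorm _
  have hWcyc : ∀ k, k < N → ∃ d ∈ W (k + 1), W (k + 1) ≤ W k ⊔ Subgroup.zpowers d := by
    intro k hkN
    rcases le_or_gt (k + 1) m with h1 | h1
    · obtain ⟨d, hd, hle⟩ := hECcyc k (by omega)
      refine ⟨d, ?_, ?_⟩
      · rw [hW]; simp only; rw [if_pos h1]; exact hd
      · rw [hW]; simp only; rw [if_pos h1, if_pos (by omega)]; exact hle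
    · -- top phase
      have hkm : m ≤ k := by omega
      set j : ℕ := k - m with hj
      have hjn : j < n := by omega
      have hWk : W k = LC j := by
        rcases Nat.eq_or_lt_of_le hkm with h2 | h2
        · have hj0 : j = 0 := by omega
          have hWkEC : W k = EC k := by
            rw [hW]
            simp only
            rw [if_pos (by omega)]
          rw [hWkEC, show k = m by omega, hECm, ← hLC0, hj0]
        · rw [hW]
          simp only
          rw [if_neg (by omega)]
      have hWk1 : W (k + 1) = LC (j + 1) := by
        rw [hW]
        simp only
        rw [if_neg (by omega)]
        congr 1
        omega
      set i : Fin n := ⟨j, hjn⟩ with hi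
      obtain ⟨h, hh, hb⟩ := hcyc i
      obtain ⟨d, hd, hle⟩ := step_lemma ψ (hnorm i.castSucc)
        (hmono (Fin.castSucc_le_succ i)) hh hb
      have hLCj1 : LC (j + 1) = Subgroup.comap ψ (K i.succ) := by
        show Subgroup.comap ψ (KH (j + 1)) = _
        congr 1
        exact congrArg K (Fin.ext (show min (j + 1) n = j + 1 by omega))
      have hLCj : LC j = Subgroup.comap ψ (K i.castSucc) := by
        show Subgroup.comap ψ (KH j) = _
        congr 1
        exact congrArg K (Fin.ext (show min j n = j by omega))
      refine ⟨d, ?_, ?_⟩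
      · rw [hWk1, hLCj1]; exact hd
      · rw [hWk1, hWk, hLCj1, hLCj]; exact hle
  exact ⟨N, fun i => W i.val, fun i j hij => hWmono hij, hW0,
    by simpa using hWN,
    fun i => hWnorm i.val,
    fun i => by
      obtain ⟨d, hd, hle⟩ := hWcyc i.val i.isLt
      exact ⟨d, by simpa using hd, by simpa using hle⟩⟩
end

section
/- Let G be a group. If the quotient G/Z(G) of G by its center is polycyclic, then the commutator subgroup [G, G] is polycyclic. -/
open Subgroup
open scoped commutatorElement

universe u

section Infra

variable {G : Type*} {H : Type*} [Group G] [Group H]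

lemma aux_fg_map {K : Subgroup G} (h : K.FG) (f : G →* H) : (K.map f).FG := by
  obtain ⟨S, hS, hfin⟩ := (Subgroup.fg_iff K).mp h
  exact (Subgroup.fg_iff _).mpr ⟨f '' S, by rw [← MonoidHom.map_closure, hS], hfin.image f⟩

lemma aux_fg_of_map_injective {K : Subgroup G} (f : G →* H) (hf : Function.Injective f)
    (h : (K.map f).FG) : K.FG := by
  obtain ⟨S, hS, hfin⟩ := (Subgroup.fg_iff _).mp h
  have hSsub : S ⊆ f '' K := by
    intro s hs
    have : s ∈ K.map f := hS ▸ Subgroup.subset_closure hs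
    obtain ⟨g, hg, rfl⟩ := this
    exact ⟨g, hg, rfl⟩
  refine (Subgroup.fg_iff K).mpr ⟨f ⁻¹' S ∩ ↑K, ?_, (hfin.preimage (hf.injOn)).inter_of_left _⟩
  apply Subgroup.map_injective hf
  rw [MonoidHom.map_closure, ← hS]
  congr 1
  apply Set.Subset.antisymm
  · rintro _ ⟨g, ⟨hg1, _⟩, rfl⟩; exact hg1
  · intro s hs
    obtain ⟨g, hgK, rfl⟩ := hSsub hs
    exact ⟨g, ⟨hs, hgK⟩, rfl⟩

lemma aux_noeth_of_injective (f : G →* H) (hf : Function.Injective f)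
    (h : IsNoetherianGroup H) : IsNoetherianGroup G := fun K =>
  aux_fg_of_map_injective f hf (h (K.map f))

lemma aux_noeth_of_surjective (f : G →* H) (hf : Function.Surjective f)
    (h : IsNoetherianGroup G) : IsNoetherianGroup H := fun K => by
  have := aux_fg_map (h (K.comap f)) f
  rwa [Subgroup.map_comap_eq_self_of_surjective hf] at this

lemma aux_noeth_mulEquiv (e : G ≃* H) (h : IsNoetherianGroup G) : IsNoetherianGroup H :=
  aux_noeth_of_surjective e.toMonoidHom e.surjective h

lemma aux_noeth_subgroup (K : Subgroup G) (h : IsNoetherianGroup G) : IsNoetherianGroup ↥K :=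
  aux_noeth_of_injective K.subtype K.subtype_injective h

lemma aux_poly_mulEquiv (e : G ≃* H) (h : IsPolycyclic G) : IsPolycyclic H :=
  ⟨by haveI : Group.IsSolvable G := h.1; exact solvable_of_surjective (f := e.toMonoidHom) e.surjective,
   aux_noeth_mulEquiv e h.2⟩

lemma aux_poly_subgroup (K : Subgroup G) (h : IsPolycyclic G) : IsPolycyclic ↥K :=
  ⟨by haveI : Group.IsSolvable G := h.1; exact (inferInstance : Group.IsSolvable ↥K), aux_noeth_subgroup K h.2⟩

lemma aux_poly_quotient (f : G →* H) (hf : Function.Surjective f) (h : IsPolycyclic G) :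
    IsPolycyclic H :=
  ⟨by haveI : Group.IsSolvable G := h.1; exact solvable_of_surjective hf, aux_noeth_of_surjective f hf h.2⟩

end Infra

section Infra2
variable {G : Type*} [Group G]

lemma aux_noeth_ext (N : Subgroup G) [N.Normal] (h1 : IsNoetherianGroup ↥N)
    (h2 : IsNoetherianGroup (G ⧸ N)) : IsNoetherianGroup G := by
  intro K
  have hKN : (K ⊓ N).FG := by
    have := aux_fg_map (h1 (K.subgroupOf N)) N.subtype
    rwa [Subgroup.subgroupOf_map_subtype] at this
  obtain ⟨S1, hS1, hfin1⟩ := (Subgroup.fg_iff _).mp hKN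
  obtain ⟨S, hS, hfin⟩ := (Subgroup.fg_iff _).mp (h2 (K.map (QuotientGroup.mk' N)))
  have hlift : ∀ s ∈ S, ∃ k, k ∈ K ∧ QuotientGroup.mk' N k = s := by
    intro s hs
    have : s ∈ K.map (QuotientGroup.mk' N) := hS ▸ Subgroup.subset_closure hs
    obtain ⟨k, hk, rfl⟩ := this
    exact ⟨k, hk, rfl⟩
  choose! f hf1 hf2 using hlift
  refine (Subgroup.fg_iff K).mpr ⟨S1 ∪ f '' S, ?_, (hfin1.union (hfin.image f))⟩
  apply le_antisymm
  · rw [Subgroup.closure_le]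
    rintro x (hx | ⟨s, hs, rfl⟩)
    · exact (hS1 ▸ Subgroup.subset_closure hx : x ∈ K ⊓ N).1
    · exact hf1 s hs
  · intro k hk
    have hmk : (QuotientGroup.mk' N) k ∈ Subgroup.closure S := by
      rw [hS]; exact ⟨k, hk, rfl⟩
    have himg : Subgroup.closure S = (Subgroup.closure (f '' S)).map (QuotientGroup.mk' N) := by
      rw [MonoidHom.map_closure]
      congr 1
      ext s; constructor
      · intro hs; exact ⟨f s, Set.mem_image_of_mem f hs, hf2 s hs⟩
      · rintro ⟨_, ⟨s, hs, rfl⟩, rfl⟩; rw [hf2 s hs]; exact hs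
    rw [himg] at hmk
    obtain ⟨w, hw, hwk⟩ := hmk
    have hwK : w ∈ K := by
      have : Subgroup.closure (f '' S) ≤ K := Subgroup.closure_le K |>.mpr (by
        rintro _ ⟨s, hs, rfl⟩; exact hf1 s hs)
      exact this hw
    have haN : w⁻¹ * k ∈ N := QuotientGroup.eq.mp hwk
    have haKN : w⁻¹ * k ∈ K ⊓ N := ⟨K.mul_mem (K.inv_mem hwK) hk, haN⟩
    have h3 : w⁻¹ * k ∈ Subgroup.closure (S1 ∪ f '' S) := by
      apply Subgroup.closure_mono Set.subset_union_left
      rw [hS1]; exact haKN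
    have hw' : w ∈ Subgroup.closure (S1 ∪ f '' S) :=
      Subgroup.closure_mono Set.subset_union_right hw
    have h4 := Subgroup.mul_mem _ hw' h3
    rwa [mul_inv_cancel_left] at h4

lemma aux_solvable_ext (N : Subgroup G) [N.Normal] (h1 : IsSolvable ↥N)
    (h2 : IsSolvable (G ⧸ N)) : IsSolvable G := by
  haveI : Group.IsSolvable ↥N := h1
  haveI : Group.IsSolvable (G ⧸ N) := h2
  refine solvable_of_ker_le_range N.subtype (QuotientGroup.mk' N) ?_
  rw [QuotientGroup.ker_mk', Subgroup.range_subtype]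

lemma aux_poly_ext (N : Subgroup G) [N.Normal] (h1 : IsPolycyclic ↥N)
    (h2 : IsPolycyclic (G ⧸ N)) : IsPolycyclic G :=
  ⟨aux_solvable_ext N h1.1 h2.1, aux_noeth_ext N h1.2 h2.2⟩

lemma aux_poly_of_comm_fg (hc : ∀ x y : G, x * y = y * x) (hfg : Group.FG G) :
    IsPolycyclic G := by
  refine ⟨isSolvable_of_comm hc, ?_⟩
  letI : CommGroup G := { (inferInstance : Group G) with mul_comm := hc }
  haveI : Module.Finite ℤ (Additive G) :=
    Module.Finite.iff_addGroup_fg.mpr (GroupFG.iff_add_fg.mp hfg)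
  haveI : IsNoetherian ℤ (Additive G) := isNoetherian_of_isNoetherianRing_of_finite ℤ (Additive G)
  intro K
  have hsub : (AddSubgroup.toIntSubmodule (K.toAddSubgroup)).FG := IsNoetherian.noetherian _
  rw [Subgroup.fg_iff_add_fg]
  have := (Submodule.fg_iff_addSubgroup_fg _).mp hsub
  rwa [AddSubgroup.toIntSubmodule_toAddSubgroup] at this

end Infra2

section Crux
variable {G : Type*} [Group G]

lemma aux_comm_mem {M : Subgroup G} [hMn : M.Normal] (t y : G) (hy : y ∈ M) : ⁅t, y⁆ ∈ M := by
  have h1 : t * y * t⁻¹ ∈ M := hMn.conj_mem y hy t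
  have h2 : ⁅t, y⁆ = t * y * t⁻¹ * y⁻¹ := by group
  rw [h2]; exact M.mul_mem h1 (M.inv_mem hy)

lemma aux_comm_mul {M : Subgroup G} [M.Normal] (hMab : ∀ x ∈ M, ∀ y ∈ M, x * y = y * x)
    (t : G) {x y : G} (hx : x ∈ M) (hy : y ∈ M) : ⁅t, x * y⁆ = ⁅t, x⁆ * ⁅t, y⁆ := by
  have hty : ⁅t, y⁆ ∈ M := aux_comm_mem t y hy
  have hc : x⁻¹ * ⁅t, y⁆ = ⁅t, y⁆ * x⁻¹ := hMab _ (M.inv_mem hx) _ hty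
  rw [show ⁅t, x⁆ * ⁅t, y⁆ = t * x * t⁻¹ * (x⁻¹ * ⁅t, y⁆) from by group, hc]
  group

lemma aux_comm_inv {M : Subgroup G} [M.Normal] (hMab : ∀ x ∈ M, ∀ y ∈ M, x * y = y * x)
    (t : G) {x : G} (hx : x ∈ M) : ⁅t, x⁻¹⁆ = ⁅t, x⁆⁻¹ := by
  have h := aux_comm_mul hMab t hx (M.inv_mem hx)
  rw [mul_inv_cancel, commutatorElement_one_right] at h
  exact (inv_eq_of_mul_eq_one_right h.symm).symm

lemma aux_comm_central {A : Subgroup G} (hA : A ≤ Subgroup.center G) (t c : G) {a : G}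
    (ha : a ∈ A) : ⁅t, c * a⁆ = ⁅t, c⁆ := by
  have ha' : ∀ g : G, g * a = a * g := fun g => Subgroup.mem_center_iff.mp (hA ha) g
  rw [show ⁅t, c * a⁆ = t * c * (a * t⁻¹ * a⁻¹) * c⁻¹ from by group, ← ha' t⁻¹]
  group

end Crux

section Crux2
variable {G : Type*} [Group G]

lemma aux_crux (M A : Subgroup G) [hMn : M.Normal]
    (hMab : ∀ x ∈ M, ∀ y ∈ M, x * y = y * x)
    (hcGM : commutator G ≤ M)
    (hA : A ≤ Subgroup.center G)
    (T : Set G) (hTfin : T.Finite)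
    (hTgen : ∀ g : G, ∃ w ∈ Subgroup.closure T, w⁻¹ * g ∈ M)
    (C : Subgroup G) (hCfg : C.FG) (hCM : C ≤ M)
    (hMCA : ∀ m ∈ M, ∃ c ∈ C, ∃ a ∈ A, m = c * a) :
    (commutator G).FG := by
  obtain ⟨Tc, hTc, hTcfin⟩ := (Subgroup.fg_iff C).mp hCfg
  set F : Set G := (fun p : G × G => ⁅p.1, p.2⁆) '' (T ×ˢ Tc ∪ T ×ˢ T) with hF
  have hFfin : F.Finite := ((hTfin.prod hTcfin).union (hTfin.prod hTfin)).image _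
  set N := Subgroup.closure F with hNdef
  have hFcomm : F ⊆ ↑(commutator G) := by
    rintro _ ⟨⟨p1, p2⟩, _, rfl⟩
    exact Subgroup.commutator_mem_commutator (Subgroup.mem_top _) (Subgroup.mem_top _)
  have hNle : N ≤ commutator G := (Subgroup.closure_le _).mpr hFcomm
  have hNM : N ≤ M := hNle.trans hcGM
  -- key : commutators of T with M lie in N
  have key : ∀ t ∈ T, ∀ m ∈ M, ⁅t, m⁆ ∈ N := by
    intro t ht
    have hkeyC : ∀ c ∈ Subgroup.closure Tc, ⁅t, c⁆ ∈ N := by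
      intro c hc
      induction hc using Subgroup.closure_induction with
      | mem x hx => exact Subgroup.subset_closure ⟨(t, x), Or.inl ⟨ht, hx⟩, rfl⟩
      | one => rw [commutatorElement_one_right]; exact N.one_mem
      | mul x y hx hy ihx ihy =>
          have hxM : x ∈ M := hCM (hTc ▸ hx)
          have hyM : y ∈ M := hCM (hTc ▸ hy)
          rw [aux_comm_mul hMab t hxM hyM]; exact N.mul_mem ihx ihy
      | inv x hx ihx =>
          have hxM : x ∈ M := hCM (hTc ▸ hx)
          rw [aux_comm_inv hMab t hxM]; exact N.inv_mem ihx
    intro m hm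
    obtain ⟨c, hc, a, ha, rfl⟩ := hMCA m hm
    rw [aux_comm_central hA t c ha]
    exact hkeyC c (hTc ▸ hc)
  -- T ∪ M generates G
  have hTM_top : Subgroup.closure (T ∪ ↑M) = ⊤ := by
    rw [eq_top_iff]
    intro g _
    obtain ⟨w, hw, hwm⟩ := hTgen g
    have hw' : w ∈ Subgroup.closure (T ∪ ↑M) :=
      Subgroup.closure_mono Set.subset_union_left hw
    have hm' : w⁻¹ * g ∈ Subgroup.closure (T ∪ ↑M) :=
      Subgroup.subset_closure (Or.inr hwm)
    simpa [mul_inv_cancel_left] using Subgroup.mul_mem _ hw' hm'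
  -- N is normal
  have main : ∀ g ∈ Subgroup.closure (T ∪ ↑M),
      (∀ n ∈ N, g * n * g⁻¹ ∈ N) ∧ (∀ n ∈ N, g⁻¹ * n * g ∈ N) := by
    intro g hg
    induction hg using Subgroup.closure_induction with
    | mem x hx =>
        rcases hx with ht | hm
        · constructor
          · intro n hn
            rw [show x * n * x⁻¹ = ⁅x, n⁆ * n from by group]
            exact N.mul_mem (key x ht n (hNM hn)) hn
          · intro n hn
            have hyM : x⁻¹ * n * x ∈ M := by
              have := hMn.conj_mem n (hNM hn) x⁻¹
              simpa using this
            have hxy : ⁅x, x⁻¹ * n * x⁆ ∈ N := key x ht _ hyM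
            rw [show x⁻¹ * n * x = ⁅x, x⁻¹ * n * x⁆⁻¹ * n from by group]
            exact N.mul_mem (N.inv_mem hxy) hn
        · constructor
          · intro n hn
            rw [show x * n * x⁻¹ = x * n * x⁻¹ from rfl, hMab x hm n (hNM hn),
              mul_inv_cancel_right]
            exact hn
          · intro n hn
            rw [show x⁻¹ * n * x = x⁻¹ * n * x from rfl, hMab _ (M.inv_mem hm) n (hNM hn),
              inv_mul_cancel_right]
            exact hn
    | one => constructor <;> intro n hn <;> simpa using hn
    | mul x y hx hy ihx ihy =>
        constructor
        · intro n hn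
          rw [show x * y * n * (x * y)⁻¹ = x * (y * n * y⁻¹) * x⁻¹ from by group]
          exact ihx.1 _ (ihy.1 n hn)
        · intro n hn
          rw [show (x * y)⁻¹ * n * (x * y) = y⁻¹ * (x⁻¹ * n * x) * y from by group]
          exact ihy.2 _ (ihx.2 n hn)
    | inv x hx ihx =>
        constructor
        · intro n hn
          rw [show x⁻¹ * n * x⁻¹⁻¹ = x⁻¹ * n * x from by group]
          exact ihx.2 n hn
        · intro n hn
          rw [show x⁻¹⁻¹ * n * x⁻¹ = x * n * x⁻¹ from by group]
          exact ihx.1 n hn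
  haveI hNnormal : N.Normal := by
    constructor
    intro n hn g
    exact (main g (hTM_top ▸ Subgroup.mem_top g)).1 n hn
  -- commutator G ≤ N
  have hcomm_le : commutator G ≤ N := by
    rw [_root_.commutator_def, Subgroup.commutator_le]
    intro g1 hg1t g2 hg2t
    clear hg1t hg2t
    have h1 : g1 ∈ Subgroup.closure (T ∪ ↑M) := hTM_top ▸ Subgroup.mem_top g1
    have h2 : g2 ∈ Subgroup.closure (T ∪ ↑M) := hTM_top ▸ Subgroup.mem_top g2
    induction h1, h2 using Subgroup.closure_induction₂ with
    | mem x y hx hy =>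
        rcases hx with htx | hmx <;> rcases hy with hty | hmy
        · exact Subgroup.subset_closure ⟨(x, y), Or.inr ⟨htx, hty⟩, rfl⟩
        · exact key x htx y hmy
        · rw [← commutatorElement_inv]
          exact N.inv_mem (key y hty x hmx)
        · rw [commutatorElement_eq_one_iff_mul_comm.mpr (hMab x hmx y hmy)]
          exact N.one_mem
    | one_left x hx => rw [commutatorElement_one_left]; exact N.one_mem
    | one_right x hx => rw [commutatorElement_one_right]; exact N.one_mem
    | mul_left x y z hx hy hz ihx ihy =>
        rw [show ⁅x * y, z⁆ = x * ⁅y, z⁆ * x⁻¹ * ⁅x, z⁆ from by group]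
        exact N.mul_mem (hNnormal.conj_mem _ ihy x) ihx
    | mul_right y z x hy hz hx ihy ihz =>
        rw [show ⁅x, y * z⁆ = ⁅x, y⁆ * (y * ⁅x, z⁆ * y⁻¹) from by group]
        exact N.mul_mem ihy (hNnormal.conj_mem _ ihz y)
    | inv_left x y hx hy ihx =>
        rw [show ⁅x⁻¹, y⁆ = x⁻¹ * ⁅x, y⁆⁻¹ * x from by group]
        simpa using hNnormal.conj_mem _ (N.inv_mem ihx) x⁻¹
    | inv_right x y hx hy ihx =>
        rw [show ⁅x, y⁻¹⁆ = y⁻¹ * ⁅x, y⁆⁻¹ * y from by group]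
        simpa using hNnormal.conj_mem _ (N.inv_mem ihx) y⁻¹
  have hNeq : N = commutator G := le_antisymm hNle hcomm_le
  rw [← hNeq, hNdef]
  exact (Subgroup.fg_iff _).mpr ⟨F, rfl, hFfin⟩

end Crux2

lemma aux_poly_of_fg_subgroup_comm {G : Type*} [Group G] (K : Subgroup G) (hfg : K.FG)
    (hc : ∀ x ∈ K, ∀ y ∈ K, x * y = y * x) : IsPolycyclic ↥K :=
  aux_poly_of_comm_fg (fun x y => Subtype.ext (hc x x.2 y y.2))
    ((Group.fg_iff_subgroup_fg K).mpr hfg)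

lemma aux_map_ds {Q : Type*} [Group Q] (K : Subgroup Q) (hK : K ≤ commutator Q) :
    ∀ n, Subgroup.map K.subtype (derivedSeries ↥K n) ≤ derivedSeries Q (n + 1)
  | 0 => by
      rw [derivedSeries_zero, ← MonoidHom.range_eq_map, Subgroup.range_subtype,
        derivedSeries_one]
      exact hK
  | (n + 1) => by
      rw [derivedSeries_succ, derivedSeries_succ, Subgroup.map_commutator]
      exact Subgroup.commutator_mono (aux_map_ds K hK n) (aux_map_ds K hK n)

lemma aux_ds_bot_of_le {Q : Type*} [Group Q] (K : Subgroup Q) (hK : K ≤ commutator Q)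
    (d : ℕ) (hd : derivedSeries Q (d + 1) = ⊥) : derivedSeries ↥K d = ⊥ := by
  have h := aux_map_ds K hK d
  rw [hd, le_bot_iff] at h
  exact (Subgroup.map_eq_bot_iff_of_injective _ K.subtype_injective).mp h

lemma aux_ds_bot_equiv {X Y : Type*} [Group X] [Group Y] (e : X ≃* Y) (d : ℕ)
    (h : derivedSeries Y d = ⊥) : derivedSeries X d = ⊥ := by
  have h2 := map_derivedSeries_eq (f := e.toMonoidHom) e.surjective d
  rw [h] at h2
  exact (Subgroup.map_eq_bot_iff_of_injective _ e.injective).mp h2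

theorem aux_main : ∀ (d : ℕ) {G : Type u} [inst : Group G] (A : Subgroup G) [hAn : A.Normal]
    (hA : A ≤ Subgroup.center G) (hN : IsNoetherianGroup (G ⧸ A))
    (hd : derivedSeries (G ⧸ A) d = ⊥), IsPolycyclic ↥(commutator G)
  | 0, G, _, A, _, hA, hN, hd => by
      rw [derivedSeries_zero] at hd
      have hcomm : ∀ x y : G, x * y = y * x := by
        intro x y
        have hx : x ∈ A := by
          rw [← QuotientGroup.eq_one_iff (N := A)]
          have : ((x : G ⧸ A)) ∈ (⊥ : Subgroup (G ⧸ A)) := hd ▸ Subgroup.mem_top _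
          exact Subgroup.mem_bot.mp this
        exact (Subgroup.mem_center_iff.mp (hA hx) y).symm
      have hbot : commutator G = ⊥ := by
        apply le_bot_iff.mp
        rw [_root_.commutator_def, Subgroup.commutator_le]
        intro g1 _ g2 _
        rw [Subgroup.mem_bot, commutatorElement_eq_one_iff_mul_comm]
        exact hcomm g1 g2
      refine aux_poly_of_fg_subgroup_comm _ ?_ (fun x _ y _ => hcomm x y)
      rw [hbot]
      exact ⟨∅, by simp⟩
  | (d + 1), G, _, A, _, hA, hN, hd => by
      set π₀ := QuotientGroup.mk' A with hπ₀
      set cQ : Subgroup (G ⧸ A) := commutator (G ⧸ A) with hcQ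
      set H : Subgroup G := cQ.comap π₀ with hH
      haveI hHn : H.Normal := Subgroup.Normal.comap inferInstance π₀
      have hAH : A ≤ H := by
        intro a ha
        show π₀ a ∈ cQ
        have h1 : π₀ a = 1 := (QuotientGroup.eq_one_iff a).mpr ha
        rw [h1]; exact cQ.one_mem
      have hcGH : commutator G ≤ H := by
        rw [hH, ← Subgroup.map_le_iff_le_comap, commutator_def, Subgroup.map_commutator]
        exact Subgroup.commutator_mono le_top le_top
      -- Step 1 : commutator of H is polycyclic
      set φ : ↥H →* (G ⧸ A) := π₀.comp H.subtype with hφ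
      have hkerc : φ.ker ≤ Subgroup.center ↥H := by
        intro x hx
        have hxA : (x : G) ∈ A := by
          rw [← QuotientGroup.eq_one_iff (N := A)]
          exact hx
        rw [Subgroup.mem_center_iff]
        intro y
        exact Subtype.ext (Subgroup.mem_center_iff.mp (hA hxA) (y : G))
      have hrange : φ.range ≤ cQ := by
        rw [hφ, ← MonoidHom.map_range, Subgroup.range_subtype]
        exact Subgroup.map_comap_le _ _
      have e₀ := QuotientGroup.quotientKerEquivRange φ
      have hNoeth1 : IsNoetherianGroup (↥H ⧸ φ.ker) :=
        aux_noeth_mulEquiv e₀.symm (aux_noeth_subgroup φ.range hN)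
      have hds1 : derivedSeries (↥H ⧸ φ.ker) d = ⊥ :=
        aux_ds_bot_equiv e₀ d (aux_ds_bot_of_le φ.range hrange d hd)
      have IH : IsPolycyclic ↥(commutator ↥H) := aux_main d φ.ker hkerc hNoeth1 hds1
      -- Step 2 : D = [H,H]
      set D : Subgroup G := ⁅H, H⁆ with hD
      haveI hDn : D.Normal := Subgroup.commutator_normal H H
      have hDle : D ≤ commutator G := Subgroup.commutator_mono le_top le_top
      have hmapD : (commutator ↥H).map H.subtype = D := by
        rw [commutator_def, Subgroup.map_commutator, ← MonoidHom.range_eq_map,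
          Subgroup.range_subtype, hD]
      have polyD : IsPolycyclic ↥D := by
        have e := Subgroup.equivMapOfInjective (commutator ↥H) H.subtype H.subtype_injective
        exact aux_poly_mulEquiv (hmapD ▸ e) IH
      -- Step 3 : pass to Gbar = G / D
      set π := QuotientGroup.mk' D with hπ
      set M : Subgroup (G ⧸ D) := H.map π with hM
      haveI hMn : M.Normal := Subgroup.Normal.map hHn π (QuotientGroup.mk'_surjective D)
      have hMab : ∀ x ∈ M, ∀ y ∈ M, x * y = y * x := by
        rintro _ ⟨h1, hh1, rfl⟩ _ ⟨h2, hh2, rfl⟩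
        rw [← commutatorElement_eq_one_iff_mul_comm, ← map_commutatorElement,
          ← MonoidHom.mem_ker, hπ, QuotientGroup.ker_mk']
        exact Subgroup.commutator_mem_commutator hh1 hh2
      have hcomm_map : Subgroup.map π (commutator G) = commutator (G ⧸ D) := by
        rw [commutator_def, Subgroup.map_commutator, commutator_def,
          Subgroup.map_top_of_surjective π (QuotientGroup.mk'_surjective D)]
      have hcGbarM : commutator (G ⧸ D) ≤ M := by
        rw [← hcomm_map]
        exact Subgroup.map_mono hcGH
      have hAc : A.map π ≤ Subgroup.center (G ⧸ D) := by
        rintro _ ⟨a, ha, rfl⟩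
        rw [Subgroup.mem_center_iff]
        intro y
        obtain ⟨g, rfl⟩ := QuotientGroup.mk'_surjective D y
        rw [← map_mul, ← map_mul, Subgroup.mem_center_iff.mp (hA ha) g]
      -- generators T
      have hQfg : Group.FG (G ⧸ A) := Group.fg_def.mpr (hN ⊤)
      obtain ⟨S, hSgen, hSfin⟩ := Group.fg_iff.mp hQfg
      have hlift : ∀ s : G ⧸ A, ∃ g : G, π₀ g = s := QuotientGroup.mk'_surjective A
      choose lft hlft using hlift
      have hLimg : π₀ '' (lft '' S) = S := by
        ext s; constructor
        · rintro ⟨_, ⟨u, hu, rfl⟩, rfl⟩; rwa [hlft u]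
        · intro hs; exact ⟨lft s, ⟨s, hs, rfl⟩, hlft s⟩
      have hTgen : ∀ x : G ⧸ D, ∃ w ∈ Subgroup.closure (π '' (lft '' S)), w⁻¹ * x ∈ M := by
        intro x
        obtain ⟨g, rfl⟩ := QuotientGroup.mk'_surjective D x
        have h1 : π₀ g ∈ Subgroup.closure S := by rw [hSgen]; trivial
        rw [← hLimg, ← MonoidHom.map_closure] at h1
        obtain ⟨w, hw, hwg⟩ := h1
        refine ⟨π w, ?_, ?_⟩
        · have : π w ∈ (Subgroup.closure (lft '' S)).map π := ⟨w, hw, rfl⟩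
          rwa [MonoidHom.map_closure] at this
        · have haA : w⁻¹ * g ∈ A := by
            have : (w : G ⧸ A) = g := hwg
            exact QuotientGroup.eq.mp this
          have : π (w⁻¹ * g) ∈ A.map π := ⟨w⁻¹ * g, haA, rfl⟩
          rw [map_mul, map_inv] at this
          exact Subgroup.map_mono hAH this
      -- the subgroup C
      obtain ⟨Sc, hScgen, hScfin⟩ := (Subgroup.fg_iff cQ).mp (hN cQ)
      have hScsub : Sc ⊆ ↑cQ := hScgen ▸ Subgroup.subset_closure
      have hliftH : ∀ s ∈ Sc, ∃ h, h ∈ H ∧ π₀ h = s := by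
        intro s hs
        obtain ⟨g, rfl⟩ := QuotientGroup.mk'_surjective A s
        exact ⟨g, Subgroup.mem_comap.mpr (hScsub hs), rfl⟩
      choose! lftH hlftH1 hlftH2 using hliftH
      have hCfg : (Subgroup.closure (π '' (lftH '' Sc))).FG :=
        (Subgroup.fg_iff _).mpr ⟨π '' (lftH '' Sc), rfl, (hScfin.image _).image _⟩
      have hCM : Subgroup.closure (π '' (lftH '' Sc)) ≤ M := by
        rw [Subgroup.closure_le]
        rintro _ ⟨_, ⟨s, hs, rfl⟩, rfl⟩
        exact ⟨lftH s, hlftH1 s hs, rfl⟩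
      have hMCA : ∀ m ∈ M, ∃ c ∈ Subgroup.closure (π '' (lftH '' Sc)),
          ∃ a ∈ A.map π, m = c * a := by
        rintro _ ⟨h, hh, rfl⟩
        have h1 : π₀ h ∈ Subgroup.closure Sc := by rw [hScgen]; exact Subgroup.mem_comap.mp hh
        have h2 : Subgroup.closure Sc = (Subgroup.closure (lftH '' Sc)).map π₀ := by
          rw [MonoidHom.map_closure]
          congr 1
          ext s; constructor
          · intro hs; exact ⟨lftH s, ⟨s, hs, rfl⟩, hlftH2 s hs⟩
          · rintro ⟨_, ⟨u, hu, rfl⟩, rfl⟩; rwa [hlftH2 u hu]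
        rw [h2] at h1
        obtain ⟨w, hw, hwh⟩ := h1
        have haA : w⁻¹ * h ∈ A := by
          have : (w : G ⧸ A) = h := hwh
          exact QuotientGroup.eq.mp this
        refine ⟨π w, ?_, π (w⁻¹ * h), ⟨w⁻¹ * h, haA, rfl⟩, ?_⟩
        · have : π w ∈ (Subgroup.closure (lftH '' Sc)).map π := ⟨w, hw, rfl⟩
          rwa [MonoidHom.map_closure] at this
        · rw [← map_mul]
          congr 1
          group
      have hcrux := aux_crux M (A.map π) hMab hcGbarM hAc (π '' (lft '' S))
        ((hSfin.image _).image _) hTgen _ hCfg hCM hMCA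
      have polyCbar : IsPolycyclic ↥(commutator (G ⧸ D)) :=
        aux_poly_of_fg_subgroup_comm _ hcrux
          (fun x hx y hy => hMab x (hcGbarM hx) y (hcGbarM hy))
      -- Step 4 : assemble
      set φ₂ : ↥(commutator G) →* (G ⧸ D) := π.comp (commutator G).subtype with hφ₂
      have hker₂ : φ₂.ker = D.subgroupOf (commutator G) := by
        rw [hφ₂, ← MonoidHom.comap_ker, hπ, QuotientGroup.ker_mk', Subgroup.comap_subtype]
      have hrange₂ : φ₂.range = commutator (G ⧸ D) := by
        rw [hφ₂, ← MonoidHom.map_range, Subgroup.range_subtype]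
        exact hcomm_map
      have polyker : IsPolycyclic ↥(φ₂.ker) := by
        rw [hker₂]
        exact aux_poly_mulEquiv (Subgroup.subgroupOfEquivOfLe hDle).symm polyD
      have polyquot : IsPolycyclic (↥(commutator G) ⧸ φ₂.ker) := by
        apply aux_poly_mulEquiv (QuotientGroup.quotientKerEquivRange φ₂).symm
        rw [hrange₂]
        exact polyCbar
      exact aux_poly_ext φ₂.ker polyker polyquot


/-- If `G/Z(G)` is polycyclic, then the commutator subgroup `[G, G]` is polycyclic. -/
theorem commutator_polycyclic_of_polycyclic_quotient_center
    {G : Type*} [Group G] (h : IsPolycyclic (G ⧸ Subgroup.center G)) :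
    IsPolycyclic ↥(commutator G) := by
  obtain ⟨hs, hn⟩ := h
  obtain ⟨d, hd⟩ := hs
  exact aux_main d (Subgroup.center G) le_rfl hn hd
end

section
/- Let H be a Noetherian group, and let G be a group with a surjective group homomorphism φ : G → H whose kernel is contained in the center of G (i.e., G is a central extension of H). If the Schur multiplier H₂(H, ℤ) of H is a finitely generated abelian group, then the commutator subgroup [G, G] is Noetherian. -/
/-- The *Schur multiplier* `H₂(G, ℤ)` of a group `G`, via Hopf's formula:
`H₂(G, ℤ) ≅ (R ⊓ [F, F]) / ⁅F, R⁆`, where `F` is the free group on the underlying set of `G`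
and `R` is the kernel of the canonical projection `F → G`. -/
def SchurMultiplier (G : Type*) [Group G] :=
  ((FreeGroup.lift (id : G → G)).ker ⊓ commutator (FreeGroup G)).map
    (QuotientGroup.mk' ⁅(⊤ : Subgroup (FreeGroup G)), (FreeGroup.lift (id : G → G)).ker⁆)

open Subgroup

lemma Subgroup.FG.map' {G N : Type*} [Group G] [Group N] {K : Subgroup G} (h : K.FG)
    (f : G →* N) : (K.map f).FG := by
  classical
  obtain ⟨S, hS⟩ := h
  exact ⟨S.image f, by rw [Finset.coe_image, ← MonoidHom.map_closure, hS]⟩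

/-- A finitely generated commutative group is Noetherian. -/
lemma isNoetherianGroup_of_fg_comm {A : Type*} [CommGroup A] (hA : Group.FG A) :
    IsNoetherianGroup A := by
  intro K
  haveI : AddGroup.FG (Additive A) := GroupFG.iff_add_fg.mp hA
  haveI hfin : Module.Finite ℤ (Additive A) := Module.Finite.iff_addGroup_fg.mpr ‹_›
  haveI : IsNoetherian ℤ (Additive A) :=
    isNoetherian_of_isNoetherianRing_of_finite ℤ (Additive A)
  have hP : (AddSubgroup.toIntSubmodule K.toAddSubgroup).FG :=
    IsNoetherian.noetherian _
  rw [Subgroup.fg_iff_add_fg]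
  have := (Submodule.fg_iff_addSubgroup_fg (AddSubgroup.toIntSubmodule K.toAddSubgroup)).mp hP
  rwa [AddSubgroup.toIntSubmodule_toAddSubgroup] at this

/-- Noetherianity from a homomorphism with Noetherian-ish kernel and target. -/
lemma isNoetherianGroup_of_hom {A B : Type*} [Group A] [Group B] (f : A →* B)
    (h1 : ∀ L : Subgroup A, L ≤ f.ker → L.FG) (h2 : ∀ Q : Subgroup B, Q.FG) :
    IsNoetherianGroup A := by
  classical
  intro K
  obtain ⟨S, hS⟩ := h1 (K ⊓ f.ker) inf_le_right
  obtain ⟨T', hT'⟩ := h2 (K.map f)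
  have hex : ∀ t' ∈ (T' : Finset B), ∃ a, a ∈ K ∧ f a = t' := by
    intro t' ht'
    have : t' ∈ K.map f := hT' ▸ Subgroup.subset_closure ht'
    exact Subgroup.mem_map.mp this
  let g : B → A := fun b => if hb : ∃ a, a ∈ K ∧ f a = b then hb.choose else 1
  have hgK : ∀ t' ∈ (T' : Finset B), g t' ∈ K ∧ f (g t') = t' := by
    intro t' ht'
    have h := hex t' ht'
    simp only [g, dif_pos h]
    exact h.choose_spec
  set T : Finset A := T'.image g with hT
  set C : Subgroup A := Subgroup.closure (↑(S ∪ T) : Set A) with hC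
  have hSK : (S : Set A) ⊆ K := by
    intro a ha
    have : a ∈ K ⊓ f.ker := hS ▸ Subgroup.subset_closure ha
    exact this.1
  have hTK : (T : Set A) ⊆ K := by
    intro a ha
    rw [hT, Finset.coe_image] at ha
    obtain ⟨t', ht', rfl⟩ := ha
    exact (hgK t' ht').1
  have hCK : C ≤ K := by
    rw [hC, Subgroup.closure_le, Finset.coe_union]
    exact Set.union_subset hSK hTK
  have hKC : K ≤ C := by
    intro k hk
    have hfk : f k ∈ Subgroup.closure (T' : Set B) := by
      rw [hT']; exact Subgroup.mem_map_of_mem f hk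
    have hT'C : Subgroup.closure (T' : Set B) ≤ C.map f := by
      rw [Subgroup.closure_le]
      intro t' ht'
      refine ⟨g t', ?_, (hgK t' ht').2⟩
      apply Subgroup.subset_closure
      rw [Finset.coe_union]
      exact Set.mem_union_right _ (Finset.mem_coe.mpr (Finset.mem_image_of_mem g ht'))
    obtain ⟨c, hcC, hfc⟩ := hT'C hfk
    have hkc : k * c⁻¹ ∈ K ⊓ f.ker := by
      refine Subgroup.mem_inf.mpr ⟨K.mul_mem hk (K.inv_mem (hCK hcC)), ?_⟩
      have : f (k * c⁻¹) = 1 := by rw [map_mul, map_inv, hfc]; group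
      exact this
    have : k * c⁻¹ ∈ C := by
      rw [← hS] at hkc
      refine Subgroup.closure_mono ?_ hkc
      rw [Finset.coe_union]; exact Set.subset_union_left
    have := C.mul_mem this hcC
    simpa using this
  exact ⟨S ∪ T, le_antisymm hCK hKC⟩

open scoped commutatorElement in
lemma commutatorElement_mul_center {G : Type*} [Group G] (a b z w : G)
    (hz : z ∈ Subgroup.center G) (hw : w ∈ Subgroup.center G) :
    ⁅a * z, b * w⁆ = ⁅a, b⁆ := by
  have hz' : ∀ g : G, g * z = z * g := fun g => Subgroup.mem_center_iff.mp hz g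
  have hw' : ∀ g : G, g * w = w * g := fun g => Subgroup.mem_center_iff.mp hw g
  calc ⁅a * z, b * w⁆ = a * (z * (b * w)) * z⁻¹ * a⁻¹ * w⁻¹ * b⁻¹ := by group
    _ = a * ((b * w) * z) * z⁻¹ * a⁻¹ * w⁻¹ * b⁻¹ := by rw [hz' (b * w)]
    _ = a * b * (w * a⁻¹) * w⁻¹ * b⁻¹ := by group
    _ = a * b * (a⁻¹ * w) * w⁻¹ * b⁻¹ := by rw [← hw' a⁻¹]
    _ = ⁅a, b⁆ := by group

/-- Let `H` be a Noetherian group and `G` a central extension of `H`. If the Schur multiplier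
of `H` is a finitely generated (abelian) group, then `[G, G]` is Noetherian. -/
theorem commutator_noetherian_of_central_extension_of_fg_schurMultiplier
    {G H : Type*} [Group G] [Group H] (φ : G →* H)
    (hsurj : Function.Surjective φ) (hker : φ.ker ≤ Subgroup.center G)
    (hH : IsNoetherianGroup H) (hM : Group.FG ↥(SchurMultiplier H)) :
    IsNoetherianGroup ↥(commutator G) := by
  classical
  -- Set up the free group presentation of `H`.
  set π : FreeGroup H →* H := FreeGroup.lift (id : H → H) with hπ
  set R : Subgroup (FreeGroup H) := π.ker with hRdef
  set s : H → G := Function.surjInv hsurj with hs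
  set ψ : FreeGroup H →* G := FreeGroup.lift s with hψ
  have hcomp : ∀ x : FreeGroup H, φ (ψ x) = π x := by
    have : φ.comp ψ = π := FreeGroup.ext_hom _ _ (fun h => by
      simp [hψ, hπ, hs, Function.surjInv_eq hsurj])
    intro x
    exact DFunLike.congr_fun this x
  have hRcenter : ∀ r ∈ R, ψ r ∈ Subgroup.center G := by
    intro r hr
    apply hker
    rw [MonoidHom.mem_ker, hcomp r]
    exact hr
  have hT : ⁅(⊤ : Subgroup (FreeGroup H)), R⁆ ≤ ψ.ker := by
    rw [Subgroup.commutator_le]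
    intro g₁ _ g₂ hg₂
    rw [MonoidHom.mem_ker, map_commutatorElement]
    exact commutatorElement_eq_one_iff_commute.mpr
      (Subgroup.mem_center_iff.mp (hRcenter g₂ hg₂) (ψ g₁))
  set ψbar : (FreeGroup H ⧸ ⁅(⊤ : Subgroup (FreeGroup H)), R⁆) →* G :=
    QuotientGroup.lift _ ψ hT with hψbar
  have hmap : (SchurMultiplier H).map ψbar = (R ⊓ commutator (FreeGroup H)).map ψ := by
    show ((R ⊓ commutator (FreeGroup H)).map
      (QuotientGroup.mk' ⁅(⊤ : Subgroup (FreeGroup H)), R⁆)).map ψbar = _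
    rw [Subgroup.map_map]
    congr 1
  have hψcomm : (commutator (FreeGroup H)).map ψ = commutator G := by
    apply le_antisymm
    · rw [_root_.commutator_def, Subgroup.map_commutator, _root_.commutator_def]
      exact Subgroup.commutator_mono le_top le_top
    · rw [_root_.commutator_def, Subgroup.commutator_le]
      intro g₁ _ g₂ _
      have key : ∀ g : G, φ (ψ (FreeGroup.of (φ g))) = φ g := by
        intro g
        rw [hcomp]
        simp [hπ]
      have hz₁ : (ψ (FreeGroup.of (φ g₁)))⁻¹ * g₁ ∈ Subgroup.center G := by
        apply hker
        show φ _ = 1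
        simp [key]
      have hz₂ : (ψ (FreeGroup.of (φ g₂)))⁻¹ * g₂ ∈ Subgroup.center G := by
        apply hker
        show φ _ = 1
        simp [key]
      have e₁ : g₁ = ψ (FreeGroup.of (φ g₁)) * ((ψ (FreeGroup.of (φ g₁)))⁻¹ * g₁) := by group
      have e₂ : g₂ = ψ (FreeGroup.of (φ g₂)) * ((ψ (FreeGroup.of (φ g₂)))⁻¹ * g₂) := by group
      rw [e₁, e₂, commutatorElement_mul_center _ _ _ _ hz₁ hz₂,
        ← map_commutatorElement]
      exact Subgroup.mem_map_of_mem ψ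
        (Subgroup.commutator_mem_commutator (Subgroup.mem_top _) (Subgroup.mem_top _))
  have hinf : (R ⊓ commutator (FreeGroup H)).map ψ = φ.ker ⊓ commutator G := by
    apply le_antisymm
    · rintro y ⟨x, hx, rfl⟩
      refine Subgroup.mem_inf.mpr ⟨?_, ?_⟩
      · show φ (ψ x) = 1
        rw [hcomp]
        exact hx.1
      · exact hψcomm ▸ Subgroup.mem_map_of_mem ψ hx.2
    · intro y hy
      obtain ⟨hy₁, hy₂⟩ := Subgroup.mem_inf.mp hy
      rw [← hψcomm] at hy₂
      obtain ⟨x, hx, rfl⟩ := hy₂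
      refine Subgroup.mem_map_of_mem ψ ⟨?_, hx⟩
      show π x = 1
      rw [← hcomp]
      exact hy₁
  -- The intersection `ker φ ⊓ [G,G]` is finitely generated.
  have hfgM : (φ.ker ⊓ commutator G).FG := by
    rw [← hinf, ← hmap]
    exact Subgroup.FG.map' ((Group.fg_iff_subgroup_fg (SchurMultiplier H)).mp hM) ψbar
  have hMcenter : φ.ker ⊓ commutator G ≤ Subgroup.center G := le_trans inf_le_left hker
  -- It is a Noetherian group (f.g. abelian).
  have hNoethM : IsNoetherianGroup ↥(φ.ker ⊓ commutator G) := by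
    letI : CommGroup ↥(φ.ker ⊓ commutator G) :=
      { (inferInstanceAs (Group ↥(φ.ker ⊓ commutator G)) : Group ↥(φ.ker ⊓ commutator G)) with
        mul_comm := fun a b => Subtype.ext
          (Subgroup.mem_center_iff.mp (hMcenter b.2) (a : G)) }
    exact isNoetherianGroup_of_fg_comm
      ((Group.fg_iff_subgroup_fg (φ.ker ⊓ commutator G)).mpr hfgM)
  -- Conclude using the restriction of `φ` to `[G,G]`.
  apply isNoetherianGroup_of_hom (φ.comp (commutator G).subtype)
  · intro L hL
    have h1 : L.map (commutator G).subtype ≤ φ.ker ⊓ commutator G := by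
      rintro y ⟨x, hx, rfl⟩
      exact ⟨hL hx, x.2⟩
    have fg0 : ((L.map (commutator G).subtype).subgroupOf (φ.ker ⊓ commutator G)).FG :=
      hNoethM _
    haveI fg1 : Group.FG ↥((L.map (commutator G).subtype).subgroupOf (φ.ker ⊓ commutator G)) :=
      (Group.fg_iff_subgroup_fg _).mpr fg0
    haveI fg2 : Group.FG ↥(L.map (commutator G).subtype) :=
      Group.fg_of_surjective (f := (Subgroup.subgroupOfEquivOfLe h1).toMonoidHom)
        (Subgroup.subgroupOfEquivOfLe h1).surjective
    haveI fg3 : Group.FG ↥L :=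
      Group.fg_of_surjective
        (f := (L.equivMapOfInjective _ (Subgroup.subtype_injective _)).symm.toMonoidHom)
        (L.equivMapOfInjective _ (Subgroup.subtype_injective _)).symm.surjective
    exact (Group.fg_iff_subgroup_fg L).mp fg3
  · exact hH
end

section
/- Let H be a Noetherian group. Suppose that for every group G admitting a surjective group homomorphism φ : G → [H, H] onto the commutator subgroup of H with kernel contained in the center of G, the commutator subgroup [G, G] is Noetherian. Then the Schur multiplier H₂(H, ℤ) of H is a finitely generated abelian group. -/
universe u

open scoped commutatorElement

section Helpers

variable {G₁ G₂ : Type*} [Group G₁] [Group G₂]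

lemma Group.fg_of_mulEquiv (e : G₁ ≃* G₂) (h : Group.FG G₁) : Group.FG G₂ :=
  @Group.fg_of_surjective _ _ _ _ h e.toMonoidHom e.surjective

lemma isNoetherianGroup_of_mulEquiv (e : G₁ ≃* G₂) (h : IsNoetherianGroup G₁) :
    IsNoetherianGroup G₂ := by
  intro K
  rw [← Group.fg_iff_subgroup_fg]
  have e2 : ↥(Subgroup.comap e.toMonoidHom K) ≃* ↥K := by
    have := Subgroup.equivMapOfInjective (Subgroup.comap e.toMonoidHom K) e.toMonoidHom e.injective
    rwa [Subgroup.map_comap_eq_self_of_surjective e.surjective] at this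
  exact Group.fg_of_mulEquiv e2 ((Group.fg_iff_subgroup_fg _).2 (h _))

/-- A subgroup contained in a "Noetherian" subgroup is finitely generated. -/
lemma fg_of_le_noetherian {Q : Type*} [Group Q] {A E : Subgroup Q}
    (hE : IsNoetherianGroup ↥E) (hle : A ≤ E) : Group.FG ↥A :=
  Group.fg_of_mulEquiv (Subgroup.subgroupOfEquivOfLe hle)
    ((Group.fg_iff_subgroup_fg _).2 (hE _))

lemma commutatorElement_central_left {Q : Type*} [Group Q] {z : Q} (a b : Q)
    (hz : z ∈ Subgroup.center Q) : ⁅z * a, b⁆ = ⁅a, b⁆ := by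
  have hzc : ∀ x : Q, z * x = x * z := fun x => ((Subgroup.mem_center_iff.mp hz) x).symm
  have h1 : ⁅z * a, b⁆ = z * (a * b * a⁻¹) * z⁻¹ * b⁻¹ := by group
  rw [h1, hzc (a * b * a⁻¹)]
  group

lemma commutatorElement_central_right {Q : Type*} [Group Q] {z : Q} (a b : Q)
    (hz : z ∈ Subgroup.center Q) : ⁅a, z * b⁆ = ⁅a, b⁆ := by
  have hzc : ∀ x : Q, z * x = x * z := fun x => ((Subgroup.mem_center_iff.mp hz) x).symm
  have h1 : ⁅a, z * b⁆ = a * z * b * a⁻¹ * b⁻¹ * z⁻¹ := by group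
  have h2 : a * z * b * a⁻¹ * b⁻¹ * z⁻¹ = z * (a * b * a⁻¹ * b⁻¹) * z⁻¹ := by
    rw [← hzc a]; group
  rw [h1, h2, hzc (a * b * a⁻¹ * b⁻¹)]
  group

/-- If a group is generated by a set of pairwise commuting elements, it is commutative. -/
lemma mul_comm_of_closure_comm {X : Type*} [Group X] {s : Set X}
    (hs : Subgroup.closure s = ⊤) (h : ∀ x ∈ s, ∀ y ∈ s, x * y = y * x) :
    ∀ a b : X, a * b = b * a := by
  have key : ∀ x ∈ s, ∀ b : X, x * b = b * x := by
    intro x hx b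
    have hb : b ∈ Subgroup.closure s := by rw [hs]; trivial
    induction hb using Subgroup.closure_induction with
    | mem y hy => exact h x hx y hy
    | one => simp
    | mul y z _ _ hy hz => rw [← mul_assoc, hy, mul_assoc, hz, mul_assoc]
    | inv y _ hy =>
      have := hy
      calc x * y⁻¹ = y⁻¹ * (y * x) * y⁻¹ := by group
        _ = y⁻¹ * (x * y) * y⁻¹ := by rw [← this]
        _ = y⁻¹ * x := by group
  intro a b
  have ha : a ∈ Subgroup.closure s := by rw [hs]; trivial
  induction ha using Subgroup.closure_induction with
  | mem y hy => exact key y hy b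
  | one => simp
  | mul y z _ _ hy hz => rw [mul_assoc, hz, ← mul_assoc, hy, mul_assoc]
  | inv y _ hy =>
    calc y⁻¹ * b = y⁻¹ * (b * y) * y⁻¹ := by group
      _ = y⁻¹ * (y * b) * y⁻¹ := by rw [← hy]
      _ = b * y⁻¹ := by group

/-- If the image and the intersection with the kernel are finitely generated,
so is the subgroup. -/
lemma fg_of_map_of_inf_ker_s9 {X Y : Type*} [Group X] [Group Y] (f : X →* Y) (A : Subgroup X)
    (h1 : Group.FG ↥(A.map f)) (h2 : Group.FG ↥(A ⊓ f.ker)) : Group.FG ↥A := by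
  classical
  rw [Group.fg_iff_subgroup_fg] at h1 h2 ⊢
  obtain ⟨S, hS⟩ := h1
  obtain ⟨S₂, hS₂⟩ := h2
  -- choose preimages in A of elements of S
  have hpre : ∀ y : Y, y ∈ A.map f → ∃ x, x ∈ A ∧ f x = y := by
    intro y hy
    obtain ⟨x, hx, rfl⟩ := hy
    exact ⟨x, hx, rfl⟩
  choose g hg1 hg2 using hpre
  have hSsub : ∀ y ∈ S, y ∈ A.map f := by
    intro y hy
    rw [← hS]
    exact Subgroup.subset_closure hy
  set T1 : Finset X := S.attach.image (fun y => g y.1 (hSsub y.1 y.2)) with hT1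
  refine ⟨T1 ∪ S₂, le_antisymm ?_ ?_⟩
  · rw [Subgroup.closure_le]
    intro x hx
    simp only [Finset.coe_union, Set.mem_union] at hx
    rcases hx with hx | hx
    · simp only [hT1, Finset.coe_image, Set.mem_image] at hx
      obtain ⟨y, _, rfl⟩ := hx
      exact hg1 _ _
    · have : x ∈ A ⊓ f.ker := by rw [← hS₂]; exact Subgroup.subset_closure hx
      exact this.1
  · intro a ha
    -- f a ∈ closure S = map f (closure T1)
    have hmap : (Subgroup.closure (T1 : Set X)).map f = Subgroup.closure (S : Set Y) := by
      rw [MonoidHom.map_closure]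
      congr 1
      ext y
      simp only [hT1, Finset.coe_image, Set.image_image, Set.mem_image]
      constructor
      · rintro ⟨z, hz, rfl⟩
        rw [hg2]
        exact z.2
      · intro hy
        exact ⟨⟨y, hy⟩, Finset.mem_attach _ _, hg2 _ _⟩
    have : f a ∈ (Subgroup.closure (T1 : Set X)).map f := by
      rw [hmap, hS]
      exact ⟨a, ha, rfl⟩
    obtain ⟨b, hb, hba⟩ := this
    have hbA : b ∈ A := by
      have : Subgroup.closure (T1 : Set X) ≤ A := by
        rw [Subgroup.closure_le]
        intro x hx
        simp only [hT1, Finset.coe_image, Set.mem_image] at hx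
        obtain ⟨y, _, rfl⟩ := hx
        exact hg1 _ _
      exact this hb
    have hker : a * b⁻¹ ∈ A ⊓ f.ker := by
      rw [Subgroup.mem_inf]
      refine ⟨A.mul_mem ha (A.inv_mem hbA), ?_⟩
      rw [MonoidHom.mem_ker, map_mul, map_inv, hba, mul_inv_cancel]
    have h1 : a * b⁻¹ ∈ Subgroup.closure ((T1 ∪ S₂ : Finset X) : Set X) := by
      rw [← hS₂] at hker
      refine Subgroup.closure_mono ?_ hker
      simp [Finset.coe_union]
    have h2 : b ∈ Subgroup.closure ((T1 ∪ S₂ : Finset X) : Set X) := by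
      refine Subgroup.closure_mono ?_ hb
      simp [Finset.coe_union]
    have := Subgroup.mul_mem _ h1 h2
    simpa using this

end Helpers

section Core
open Pointwise

variable {P : Type v} [Group P]

lemma core_fg (hfg : Group.FG P)
    (hab : ∀ x ∈ commutator P, ∀ y ∈ commutator P, x * y = y * x)
    (X : Subgroup P) (hX1 : X ≤ commutator P) (hX2 : X ≤ Subgroup.center P) :
    Group.FG ↥X := by
  classical
  haveI := hfg
  set C : Subgroup P := commutator P with hC
  haveI hCn : C.Normal := Subgroup.commutator_normal ⊤ ⊤
  letI : CommGroup ↥C :=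
    { (inferInstance : Group ↥C) with
      mul_comm := fun a b => Subtype.ext (hab _ a.2 _ b.2) }
  set B : Subgroup P := C ⊔ Subgroup.center P with hB
  haveI hBn : B.Normal := Subgroup.sup_normal _ _
  letI : CommGroup (P ⧸ B) :=
    { (inferInstance : Group (P ⧸ B)) with
      mul_comm := by
        intro a b
        obtain ⟨x, rfl⟩ := QuotientGroup.mk_surjective a
        obtain ⟨y, rfl⟩ := QuotientGroup.mk_surjective b
        show ((x * y : P) : P ⧸ B) = ((y * x : P) : P ⧸ B)
        rw [QuotientGroup.eq]
        have h1 : (x * y)⁻¹ * (y * x) = ⁅y⁻¹, x⁻¹⁆ := by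
          rw [commutatorElement_def]; group
        rw [h1]
        exact le_sup_left (α := Subgroup P)
          (Subgroup.commutator_mem_commutator (Subgroup.mem_top _) (Subgroup.mem_top _)) }
  haveI hAfg : Group.FG (P ⧸ B) := Group.fg_of_surjective (QuotientGroup.mk'_surjective B)
  haveI : Monoid.FG (P ⧸ B) := Group.fg_iff_monoid_fg.mp hAfg
  -- conjugation action
  set ρ₀ : P →* MulAut ↥C := MulAut.conjNormal with hρ₀
  have hB0 : B ≤ ρ₀.ker := by
    intro b hb
    have hset := Subgroup.mul_normal C (Subgroup.center P)
    have hb' : b ∈ ((C : Set P) * (Subgroup.center P : Set P)) := by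
      rw [← hset]; exact hb
    obtain ⟨c, hc, z, hz, rfl⟩ := hb'
    rw [MonoidHom.mem_ker]
    ext x
    have hzc : ∀ g : P, g * z = z * g := Subgroup.mem_center_iff.mp hz
    have hcx : c * (x : P) = (x : P) * c := hab c hc _ x.2
    show ((ρ₀ (c * z)) x : P) = ((1 : MulAut ↥C) x : P)
    rw [MulAut.conjNormal_apply]
    show c * z * ↑x * (c * z)⁻¹ = ↑x
    rw [mul_inv_rev]
    calc c * z * ↑x * (z⁻¹ * c⁻¹) = c * (z * ↑x) * (z⁻¹ * c⁻¹) := by group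
      _ = c * (↑x * z) * (z⁻¹ * c⁻¹) := by rw [← hzc ↑x]
      _ = c * ↑x * c⁻¹ := by group
      _ = ↑x * c * c⁻¹ := by rw [hcx]
      _ = ↑x := by group
  set ρ₁ : P ⧸ B →* MulAut ↥C := QuotientGroup.lift B ρ₀ hB0 with hρ₁
  -- the representation
  set ρ : Representation ℤ (P ⧸ B) (Additive ↥C) :=
    { toFun := fun a => ((MonoidHom.toAdditive ((ρ₁ a).toMonoidHom)) : Additive ↥C →+ Additive ↥C).toIntLinearMap
      map_one' := by
        ext v
        simp only [map_one]
        rfl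
      map_mul' := by
        intro a b
        ext v
        simp only [map_mul]
        rfl } with hρ
  letI : AddCommGroup ρ.asModule := inferInstance
  haveI : IsNoetherianRing (MonoidAlgebra ℤ (P ⧸ B)) :=
    Algebra.FiniteType.isNoetherianRing ℤ (MonoidAlgebra ℤ (P ⧸ B))
  -- smul facts
  have hsmul_of : ∀ (g : P ⧸ B) (v : ρ.asModule),
      (MonoidAlgebra.of ℤ (P ⧸ B) g) • v = ρ g v := by
    intro g v
    have h : (MonoidAlgebra.of ℤ (P ⧸ B) g) • v
        = ρ.asAlgebraHom (MonoidAlgebra.of ℤ (P ⧸ B) g) v := rfl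
    rw [h, Representation.asAlgebraHom_of]
  have hρ_apply : ∀ (p : P) (v : ρ.asModule),
      ρ (QuotientGroup.mk p) v = Additive.ofMul (ρ₀ p (Additive.toMul v)) := by
    intro p v
    show Additive.ofMul (ρ₁ (QuotientGroup.mk p) (Additive.toMul v)) = _
    rw [hρ₁, QuotientGroup.lift_mk']
  -- ρ₀ acts trivially on central elements
  have hfix0 : ∀ (p : P) (x : ↥C), (x : P) ∈ Subgroup.center P → ρ₀ p x = x := by
    intro p x hx
    apply Subtype.ext
    rw [hρ₀, MulAut.conjNormal_apply]
    have := Subgroup.mem_center_iff.mp hx p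
    rw [this]
    group
  -- finite generation of the module
  obtain ⟨n, S, -, hS⟩ := Group.fg_iff'.mp hfg
  have hcommS : ∀ p : P × P, (⁅p.1, p.2⁆ : P) ∈ C :=
    fun p => Subgroup.commutator_mem_commutator (Subgroup.mem_top _) (Subgroup.mem_top _)
  set gfun : P × P → ρ.asModule := fun p => Additive.ofMul (⟨⁅p.1, p.2⁆, hcommS p⟩ : ↥C)
    with hgfun
  set gens : Finset ρ.asModule := (S ×ˢ S).image gfun with hgens
  set Sp : Submodule (MonoidAlgebra ℤ (P ⧸ B)) ρ.asModule :=
    Submodule.span (MonoidAlgebra ℤ (P ⧸ B)) (gens : Set ρ.asModule) with hSp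
  -- the subgroup of elements of C landing in Sp
  set C₀ : Subgroup P :=
    { carrier := {x : P | ∃ hx : x ∈ C, (Additive.ofMul (⟨x, hx⟩ : ↥C) : ρ.asModule) ∈ Sp}
      mul_mem' := by
        rintro x y ⟨hx, hxS⟩ ⟨hy, hyS⟩
        refine ⟨C.mul_mem hx hy, ?_⟩
        have heq : (Additive.ofMul (⟨x * y, C.mul_mem hx hy⟩ : ↥C) : ρ.asModule)
            = (Additive.ofMul (⟨x, hx⟩ : ↥C) : ρ.asModule)
              + (Additive.ofMul (⟨y, hy⟩ : ↥C) : ρ.asModule) := rfl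
        rw [heq]
        exact Sp.add_mem hxS hyS
      one_mem' := by
        refine ⟨C.one_mem, ?_⟩
        have heq : (Additive.ofMul (⟨1, C.one_mem⟩ : ↥C) : ρ.asModule) = 0 := rfl
        rw [heq]
        exact Sp.zero_mem
      inv_mem' := by
        rintro x ⟨hx, hxS⟩
        refine ⟨C.inv_mem hx, ?_⟩
        have heq : (Additive.ofMul (⟨x⁻¹, C.inv_mem hx⟩ : ↥C) : ρ.asModule)
            = -(Additive.ofMul (⟨x, hx⟩ : ↥C) : ρ.asModule) := rfl
        rw [heq]
        exact Sp.neg_mem hxS } with hC₀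
  have hC₀n : C₀.Normal := by
    constructor
    rintro x ⟨hxC, hxS⟩ p
    have h2 := Sp.smul_mem (MonoidAlgebra.of ℤ (P ⧸ B) (QuotientGroup.mk p)) hxS
    erw [hsmul_of, hρ_apply] at h2
    refine ⟨hCn.conj_mem x hxC p, ?_⟩
    have heq : (⟨p * x * p⁻¹, hCn.conj_mem x hxC p⟩ : ↥C)
        = ρ₀ p (Additive.toMul (Additive.ofMul (⟨x, hxC⟩ : ↥C))) := by
      apply Subtype.ext
      rw [hρ₀, MulAut.conjNormal_apply]
      rfl
    rw [heq]
    exact h2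
  -- C is contained in C₀
  have hCle : C ≤ C₀ := by
    set cset : Set P := {x : P | ∃ a ∈ S, ∃ b ∈ S, (⁅a, b⁆ : P) = x} with hcset
    have hsub : cset ⊆ ↑C₀ := by
      rintro x ⟨a, ha, b, hb, rfl⟩
      refine ⟨hcommS (a, b), Submodule.subset_span ?_⟩
      simp only [hgens, Finset.coe_image, Set.mem_image]
      exact ⟨(a, b), by simpa using ⟨ha, hb⟩, rfl⟩
    have hncl : Subgroup.normalClosure cset ≤ C₀ :=
      haveI := hC₀n
      Subgroup.normalClosure_le_normal hsub
    refine le_trans ?_ hncl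
    show commutator P ≤ Subgroup.normalClosure cset
    rw [commutator_def, Subgroup.commutator_le]
    intro a _ b _
    set f := QuotientGroup.mk' (Subgroup.normalClosure cset) with hf
    have hfS : Subgroup.closure (f '' (S : Set P)) = ⊤ := by
      rw [← MonoidHom.map_closure, hS, Subgroup.map_top_of_surjective]
      exact QuotientGroup.mk'_surjective _
    have hcomm : ∀ u v : P ⧸ Subgroup.normalClosure cset, u * v = v * u := by
      apply mul_comm_of_closure_comm hfS
      rintro _ ⟨x, hx, rfl⟩ _ ⟨y, hy, rfl⟩
      rw [← commutatorElement_eq_one_iff_mul_comm, ← map_commutatorElement]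
      have : (⁅x, y⁆ : P) ∈ Subgroup.normalClosure cset :=
        Subgroup.subset_normalClosure ⟨x, hx, y, hy, rfl⟩
      rwa [← QuotientGroup.ker_mk' (Subgroup.normalClosure cset), MonoidHom.mem_ker] at this
    have h1 : f ⁅a, b⁆ = 1 := by
      rw [map_commutatorElement]
      exact commutatorElement_eq_one_iff_mul_comm.mpr (hcomm (f a) (f b))
    rwa [← MonoidHom.mem_ker, QuotientGroup.ker_mk'] at h1
  have hspan : Sp = ⊤ := by
    rw [eq_top_iff]
    rintro v -
    obtain ⟨hx, hmem⟩ := hCle (Additive.toMul v : ↥C).2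
    have : (Additive.ofMul (⟨((Additive.toMul v : ↥C) : P), hx⟩ : ↥C) : ρ.asModule) = v := by
      congr 1
    rwa [this] at hmem
  haveI : Module.Finite (MonoidAlgebra ℤ (P ⧸ B)) ρ.asModule := ⟨⟨gens, hspan⟩⟩
  haveI : IsNoetherian (MonoidAlgebra ℤ (P ⧸ B)) ρ.asModule := inferInstance
  -- the submodule corresponding to X
  have hXC : X ≤ C := hX1
  have hbridge : ∀ (r : MonoidAlgebra ℤ (P ⧸ B)) (v : ρ.asModule),
      r • v = ρ.asAlgebraHom r v := fun _ _ => rfl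
  have hfixX : ∀ (g : P ⧸ B) (v : ρ.asModule), ((Additive.toMul v : ↥C) : P) ∈ X → ρ g v = v := by
    intro g v hv
    obtain ⟨p, rfl⟩ := QuotientGroup.mk_surjective g
    rw [hρ_apply, hfix0 p _ (hX2 hv)]
    rfl
  have hof : ∀ (g : P ⧸ B) (v : ρ.asModule), ((Additive.toMul v : ↥C) : P) ∈ X →
      (MonoidAlgebra.of ℤ (P ⧸ B) g) • v = v := by
    intro g v hv
    rw [hsmul_of, hfixX g v hv]
  have hzswap : ∀ (c : ℤ) (r : MonoidAlgebra ℤ (P ⧸ B)) (v : ρ.asModule),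
      (c • r) • v = c • (r • v) := by
    intro c r v
    rw [hbridge, map_smul]
    rfl
  have hzsmul : ∀ (c : ℤ) (v : ρ.asModule), ((Additive.toMul v : ↥C) : P) ∈ X →
      ((Additive.toMul (c • v) : ↥C) : P) ∈ X := by
    intro c v hv
    have h : Additive.toMul (c • v) = (Additive.toMul v) ^ c := rfl
    rw [h]
    push_cast
    exact X.zpow_mem hv c
  set Y : Submodule (MonoidAlgebra ℤ (P ⧸ B)) ρ.asModule :=
    { carrier := {v : ρ.asModule | ((Additive.toMul v : ↥C) : P) ∈ X}
      add_mem' := by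
        intro a b ha hb
        exact X.mul_mem ha hb
      zero_mem' := X.one_mem
      smul_mem' := by
        intro r v hv
        show ((Additive.toMul (r • v) : ↥C) : P) ∈ X
        induction r using MonoidAlgebra.induction_on with
        | of g =>
          rw [hof g v hv]
          exact hv
        | add r s hr hs =>
          rw [add_smul]
          exact X.mul_mem hr hs
        | smul c r hr =>
          rw [hzswap]
          exact hzsmul c _ hr } with hY
  have hYfg : Y.FG := IsNoetherian.noetherian Y
  obtain ⟨Tf, hTf⟩ := hYfg
  have hTfY : (Tf : Set ρ.asModule) ⊆ ↑Y := by
    rw [← hTf]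
    exact Submodule.subset_span
  have hclosY : (AddSubgroup.closure (Tf : Set ρ.asModule)) ≤ Y.toAddSubgroup :=
    (AddSubgroup.closure_le _).mpr hTfY
  have hkey : ∀ v ∈ Y, v ∈ AddSubgroup.closure (Tf : Set ρ.asModule) := by
    intro v hv
    rw [← hTf] at hv
    induction hv using Submodule.span_induction with
    | mem w hw => exact AddSubgroup.subset_closure hw
    | zero => exact zero_mem _
    | add a b _ _ ha hb => exact add_mem ha hb
    | smul r w hw hw' =>
      have hwY : ((Additive.toMul w : ↥C) : P) ∈ X := hclosY hw'
      clear hw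
      induction r using MonoidAlgebra.induction_on with
      | of g =>
        rw [hof g w hwY]
        exact hw'
      | add r s hr hs =>
        rw [add_smul]
        exact add_mem hr hs
      | smul c r hr =>
        rw [hzswap]
        exact AddSubgroup.zsmul_mem _ hr c
  -- back to the group X
  have heqfin : AddSubgroup.closure (Tf : Set ρ.asModule) = (X.subgroupOf C).toAddSubgroup := by
    apply le_antisymm
    · refine (AddSubgroup.closure_le _).mpr ?_
      intro w hw
      exact hTfY hw
    · intro v hv
      exact hkey v hv
  have h1 : (X.subgroupOf C).FG := by
    rw [Subgroup.fg_iff_add_fg]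
    exact ⟨Tf, heqfin⟩
  exact Group.fg_of_mulEquiv (Subgroup.subgroupOfEquivOfLe hXC)
    ((Group.fg_iff_subgroup_fg _).mpr h1)

end Core


/-- Let `H` be a Noetherian group. If for every central extension `G` of the derived subgroup
`[H, H]` the commutator subgroup `[G, G]` is Noetherian, then the Schur multiplier of `H` is
finitely generated. -/
theorem fg_schurMultiplier_of_noetherian_commutator_of_central_extensions
    {H : Type u} [Group H] (hH : IsNoetherianGroup H)
    (hyp : ∀ (G : Type u) [Group G] (φ : G →* ↥(commutator H)),
      Function.Surjective φ → φ.ker ≤ Subgroup.center G →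
        IsNoetherianGroup ↥(commutator G)) :
    Group.FG ↥(SchurMultiplier H) := by
  classical
  set π : FreeGroup H →* H := FreeGroup.lift (id : H → H) with hπ
  set R : Subgroup (FreeGroup H) := π.ker with hR
  set N : Subgroup (FreeGroup H) := ⁅(⊤ : Subgroup (FreeGroup H)), R⁆ with hN
  haveI hNn : N.Normal := Subgroup.commutator_normal ⊤ R
  set mk : FreeGroup H →* FreeGroup H ⧸ N := QuotientGroup.mk' N with hmk
  have hmks : Function.Surjective mk := QuotientGroup.mk'_surjective N
  have hNR : N ≤ R := Subgroup.commutator_le_right ⊤ R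
  have hπs : Function.Surjective π := fun h => ⟨FreeGroup.of h, by simp [hπ]⟩
  set πb : (FreeGroup H ⧸ N) →* H := QuotientGroup.lift N π hNR with hπb
  have hcomp : ∀ f : FreeGroup H, πb (mk f) = π f := fun f => rfl
  have hπbs : Function.Surjective πb := by
    intro h
    obtain ⟨f, hf⟩ := hπs h
    exact ⟨mk f, by rw [hcomp, hf]⟩
  have hker : πb.ker = R.map mk := by
    have h1 : Subgroup.comap mk πb.ker = R := by
      ext x
      simp only [Subgroup.mem_comap, MonoidHom.mem_ker, hcomp]
      rfl
    rw [← h1, Subgroup.map_comap_eq_self_of_surjective hmks]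
  set Z : Subgroup (FreeGroup H ⧸ N) := R.map mk with hZ
  have hZc : Z ≤ Subgroup.center (FreeGroup H ⧸ N) := by
    rintro _ ⟨r, hr, rfl⟩
    rw [Subgroup.mem_center_iff]
    intro q
    obtain ⟨f, rfl⟩ := hmks q
    have hcm : (⁅f, r⁆ : FreeGroup H) ∈ N :=
      Subgroup.commutator_mem_commutator (Subgroup.mem_top f) hr
    have h1 : mk ⁅f, r⁆ = 1 := by
      rwa [← MonoidHom.mem_ker, hmk, QuotientGroup.ker_mk']
    rw [map_commutatorElement] at h1
    exact commutatorElement_eq_one_iff_mul_comm.mp h1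
  set M : Subgroup (FreeGroup H ⧸ N) := (R ⊓ commutator (FreeGroup H)).map mk with hM
  have hMZ : M ≤ Z := Subgroup.map_mono inf_le_left
  have hcommQ : commutator (FreeGroup H ⧸ N) = (commutator (FreeGroup H)).map mk := by
    rw [commutator_def, commutator_def, Subgroup.map_commutator,
      Subgroup.map_top_of_surjective mk hmks]
  have hMC : M ≤ commutator (FreeGroup H ⧸ N) := by
    rw [hcommQ]
    exact Subgroup.map_mono inf_le_right
  -- a finitely generated subgroup W with Z ⊔ W = ⊤
  obtain ⟨T, hT⟩ := hH ⊤
  choose sec hsec using hπbs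
  set W : Subgroup (FreeGroup H ⧸ N) := Subgroup.closure (sec '' (T : Set H)) with hW
  have hWfg : Group.FG ↥W := by
    rw [Group.fg_iff_subgroup_fg]
    exact ⟨T.image sec, by rw [Finset.coe_image, hW]⟩
  have hWmap : W.map πb = ⊤ := by
    rw [hW, MonoidHom.map_closure]
    have himg : πb '' (sec '' (T : Set H)) = (T : Set H) := by
      rw [Set.image_image]
      simp only [hsec]
      exact Set.image_id _
    rw [himg, hT]
  have hdecomp : ∀ q : FreeGroup H ⧸ N, ∃ z ∈ Z, ∃ w ∈ W, q = z * w := by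
    intro q
    have h1 : πb q ∈ W.map πb := by rw [hWmap]; trivial
    obtain ⟨w, hw, hwq⟩ := h1
    refine ⟨q * w⁻¹, ?_, w, hw, by group⟩
    have h2 : q * w⁻¹ ∈ πb.ker := by
      rw [MonoidHom.mem_ker, map_mul, map_inv, hwq, mul_inv_cancel]
    exact hker ▸ h2
  have hcommW : commutator (FreeGroup H ⧸ N) = ⁅W, W⁆ := by
    apply le_antisymm
    · rw [commutator_def, Subgroup.commutator_le]
      intro a _ b _
      obtain ⟨z, hz, w, hw, rfl⟩ := hdecomp a
      obtain ⟨z', hz', w', hw', rfl⟩ := hdecomp b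
      rw [commutatorElement_central_left _ _ (hZc hz),
        commutatorElement_central_right _ _ (hZc hz')]
      exact Subgroup.commutator_mem_commutator hw hw'
    · exact Subgroup.commutator_mono le_top le_top
  have hWW_le_W : ⁅W, W⁆ ≤ W := by
    rw [Subgroup.commutator_le]
    intro a ha b hb
    rw [commutatorElement_def]
    exact W.mul_mem (W.mul_mem (W.mul_mem ha hb) (W.inv_mem ha)) (W.inv_mem hb)
  have hMW : M ≤ W := le_trans hMC (le_trans (le_of_eq hcommW) hWW_le_W)
  -- the central extension G of [H,H]
  set Gs : Subgroup (FreeGroup H ⧸ N) := W ⊓ Subgroup.comap πb (commutator H) with hGs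
  have hGmem : ∀ g : ↥Gs, πb ↑g ∈ commutator H := fun g => g.2.2
  set φ : ↥Gs →* ↥(commutator H) := (πb.domRestrict Gs).codRestrict _ hGmem with hφ
  have hφs : Function.Surjective φ := by
    rintro ⟨h', hh'⟩
    have h1 : h' ∈ W.map πb := by rw [hWmap]; trivial
    obtain ⟨w, hw, hwq⟩ := h1
    refine ⟨⟨w, hw, ?_⟩, ?_⟩
    · show πb w ∈ commutator H
      rw [hwq]; exact hh'
    · apply Subtype.ext
      exact hwq
  have hφker : φ.ker ≤ Subgroup.center ↥Gs := by
    intro x hx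
    have hx1 : φ x = 1 := hx
    have h1 : πb ↑x = 1 := congrArg Subtype.val hx1
    have hxZ : (↑x : FreeGroup H ⧸ N) ∈ Z :=
      hker ▸ (show (↑x : FreeGroup H ⧸ N) ∈ πb.ker from h1)
    rw [Subgroup.mem_center_iff]
    intro g
    exact Subtype.ext (Subgroup.mem_center_iff.mp (hZc hxZ) ↑g)
  have hNoe : IsNoetherianGroup ↥(commutator ↥Gs) := hyp ↥Gs φ hφs hφker
  -- E := ⁅Gs, Gs⁆ is Noetherian
  set E : Subgroup (FreeGroup H ⧸ N) := ⁅Gs, Gs⁆ with hE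
  have hGstop : (⊤ : Subgroup ↥Gs).map Gs.subtype = Gs := by
    rw [← MonoidHom.range_eq_map, Subgroup.range_subtype]
  have hmapE : (commutator ↥Gs).map Gs.subtype = E := by
    rw [commutator_def, Subgroup.map_commutator, hGstop, hE]
  have hEnoe : IsNoetherianGroup ↥E :=
    isNoetherianGroup_of_mulEquiv
      ((Subgroup.equivMapOfInjective _ _ (Subgroup.subtype_injective Gs)).trans
        (MulEquiv.subgroupCongr hmapE)) hNoe
  -- ⁅W,W⁆ ≤ Gs and second commutators
  have hWWG : ⁅W, W⁆ ≤ Gs := by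
    rw [hGs, le_inf_iff]
    refine ⟨hWW_le_W, ?_⟩
    rw [Subgroup.commutator_le]
    intro a _ b _
    rw [Subgroup.mem_comap, map_commutatorElement]
    exact Subgroup.commutator_mem_commutator (Subgroup.mem_top _) (Subgroup.mem_top _)
  have hW''E : ⁅⁅W, W⁆, ⁅W, W⁆⁆ ≤ E := by
    rw [hE]
    exact Subgroup.commutator_mono hWWG hWWG
  -- quotient of W by its second commutator subgroup
  set K : Subgroup ↥W := ⁅commutator ↥W, commutator ↥W⁆ with hK
  haveI hKn : K.Normal := Subgroup.commutator_normal _ _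
  have hWtop : (⊤ : Subgroup ↥W).map W.subtype = W := by
    rw [← MonoidHom.range_eq_map, Subgroup.range_subtype]
  have hcommWsub : (commutator ↥W).map W.subtype = ⁅W, W⁆ := by
    rw [commutator_def, Subgroup.map_commutator, hWtop]
  have hKmap : K.map W.subtype = ⁅⁅W, W⁆, ⁅W, W⁆⁆ := by
    rw [hK, Subgroup.map_commutator, hcommWsub]
  set ν : ↥W →* (↥W ⧸ K) := QuotientGroup.mk' K with hν
  have hνs : Function.Surjective ν := QuotientGroup.mk'_surjective K
  set M₁ : Subgroup ↥W := M.subgroupOf W with hM₁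
  have hM₁map : M₁.map W.subtype = M := by
    rw [hM₁, Subgroup.subgroupOf_map_subtype, inf_eq_left.mpr hMW]
  have hM₁comm : M₁ ≤ commutator ↥W := by
    intro x hx
    have h1 : (↑x : FreeGroup H ⧸ N) ∈ ⁅W, W⁆ := (hcommW ▸ hMC) hx
    rw [← hcommWsub] at h1
    obtain ⟨y, hy, hyx⟩ := h1
    have h2 : y = x := Subtype.ext hyx
    rwa [← h2]
  have hM₁cent : ∀ x : ↥W, x ∈ M₁ → ∀ g : ↥W, g * x = x * g := by
    intro x hx g
    exact Subtype.ext (Subgroup.mem_center_iff.mp (hZc (hMZ hx)) ↑g)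
  -- the quotient group P := W ⧸ K
  have hPfg : Group.FG (↥W ⧸ K) := @Group.fg_of_surjective _ _ _ _ hWfg ν hνs
  have hcommP : commutator (↥W ⧸ K) = (commutator ↥W).map ν := by
    rw [commutator_def, commutator_def, Subgroup.map_commutator,
      Subgroup.map_top_of_surjective ν hνs]
  have hPab : ∀ x ∈ commutator (↥W ⧸ K), ∀ y ∈ commutator (↥W ⧸ K), x * y = y * x := by
    intro x hx y hy
    have h2 : ⁅commutator (↥W ⧸ K), commutator (↥W ⧸ K)⁆ = ⊥ := by
      rw [hcommP, ← Subgroup.map_commutator]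
      have h3 : ⁅commutator ↥W, commutator ↥W⁆ = K := rfl
      rw [h3, eq_bot_iff]
      rintro _ ⟨k, hk, rfl⟩
      have h4 : ν k = 1 := by
        rw [← MonoidHom.mem_ker, hν, QuotientGroup.ker_mk']
        exact hk
      rw [Subgroup.mem_bot]
      exact h4
    rw [← commutatorElement_eq_one_iff_mul_comm]
    have h5 := Subgroup.commutator_mem_commutator hx hy
    rw [h2] at h5
    exact Subgroup.mem_bot.mp h5
  have hMν_comm : M₁.map ν ≤ commutator (↥W ⧸ K) := by
    rw [hcommP]
    exact Subgroup.map_mono hM₁comm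
  have hMν_cent : M₁.map ν ≤ Subgroup.center (↥W ⧸ K) := by
    rintro _ ⟨x, hx, rfl⟩
    rw [Subgroup.mem_center_iff]
    intro p
    obtain ⟨g, rfl⟩ := hνs p
    rw [← map_mul, ← map_mul, hM₁cent x hx g]
  have hp2 : Group.FG ↥(M₁.map ν) := core_fg hPfg hPab (M₁.map ν) hMν_comm hMν_cent
  have hp1 : Group.FG ↥(M₁ ⊓ ν.ker) := by
    have hkerν : ν.ker = K := QuotientGroup.ker_mk' K
    rw [hkerν]
    have hmapinf : (M₁ ⊓ K).map W.subtype = M ⊓ ⁅⁅W, W⁆, ⁅W, W⁆⁆ := by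
      rw [Subgroup.map_inf _ _ _ (Subgroup.subtype_injective W), hM₁map, hKmap]
    have hle : M ⊓ ⁅⁅W, W⁆, ⁅W, W⁆⁆ ≤ E := le_trans inf_le_right hW''E
    have hfgsub : Group.FG ↥(M ⊓ ⁅⁅W, W⁆, ⁅W, W⁆⁆) := fg_of_le_noetherian hEnoe hle
    exact Group.fg_of_mulEquiv
      ((Subgroup.equivMapOfInjective _ _ (Subgroup.subtype_injective W)).trans
        (MulEquiv.subgroupCongr hmapinf)).symm hfgsub
  have hM₁fg : Group.FG ↥M₁ := fg_of_map_of_inf_ker_s9 ν M₁ hp2 hp1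
  have hMfg : Group.FG ↥M := Group.fg_of_mulEquiv (Subgroup.subgroupOfEquivOfLe hMW) hM₁fg
  exact hMfg
end

section
/- Let H be a perfect Noetherian group (i.e., H = [H, H] and every subgroup of H is finitely generated). Then the Schur multiplier H₂(H, ℤ) of H is a finitely generated abelian group if and only if for every group G admitting a surjective group homomorphism φ : G → H with kernel contained in the center of G, the commutator subgroup [G, G] is Noetherian. -/
universe u

/-- Images of finitely generated subgroups are finitely generated. -/
lemma Subgroup.FG.map'_s10 {G G' : Type*} [Group G] [Group G'] {P : Subgroup G} (h : P.FG)
    (f : G →* G') : (P.map f).FG := by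
  rw [Subgroup.fg_iff_submonoid_fg] at h ⊢
  exact h.map f

/-- Finite generation can be pulled back along injective maps. -/
lemma Subgroup.FG.of_map_injective {G G' : Type*} [Group G] [Group G'] {P : Subgroup G}
    (f : G →* G') (hf : Function.Injective f) (h : (P.map f).FG) : P.FG := by
  rw [Subgroup.fg_iff_submonoid_fg] at h ⊢
  exact Submonoid.FG.map_injective f hf h

/-- Every subgroup of a finitely generated commutative group is finitely generated. -/
lemma Subgroup.fg_of_comm_of_fg {G : Type*} [CommGroup G] [hfg : Group.FG G]
    (K : Subgroup G) : K.FG := by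
  haveI : Module.Finite ℤ (Additive G) :=
    Module.Finite.iff_addGroup_fg.2 (GroupFG.iff_add_fg.1 hfg)
  have hM : (AddSubgroup.toIntSubmodule
      (Subgroup.toAddSubgroup K : AddSubgroup (Additive G))).FG :=
    IsNoetherian.noetherian _
  rw [Submodule.fg_iff_addSubgroup_fg, AddSubgroup.toIntSubmodule_toAddSubgroup] at hM
  exact (Subgroup.fg_iff_add_fg K).2 hM

/-- A group with finitely generated kernel and range (for some homomorphism) is finitely
generated. -/
lemma Group.fg_of_ker_of_range {G H : Type*} [Group G] [Group H] (f : G →* H)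
    (hker : f.ker.FG) (hrange : f.range.FG) : Group.FG G := by
  obtain ⟨S, hS⟩ := hker
  obtain ⟨T, hT⟩ := hrange
  have hTsub : ∀ t ∈ T, t ∈ f.range := fun t ht => hT ▸ Subgroup.subset_closure ht
  choose lf hlf using fun t : T => hTsub t.1 t.2
  classical
  set U : Finset G := T.attach.image lf with hU
  refine Group.fg_iff.2 ⟨(S ∪ U : Finset G), ?_, Finset.finite_toSet _⟩
  apply top_unique
  intro g _
  have hrange_le : f.range ≤ (Subgroup.closure ((S ∪ U : Finset G) : Set G)).map f := by
    rw [← hT, Subgroup.closure_le]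
    intro t ht
    refine ⟨lf ⟨t, ht⟩, Subgroup.subset_closure ?_, hlf ⟨t, ht⟩⟩
    simp only [Finset.coe_union, Set.mem_union]
    exact Or.inr (by simp [hU])
  obtain ⟨c, hc, hfc⟩ := hrange_le ⟨g, rfl⟩
  have hker' : c⁻¹ * g ∈ f.ker := by
    simp [MonoidHom.mem_ker, map_mul, hfc]
  have hkerle : f.ker ≤ Subgroup.closure ((S ∪ U : Finset G) : Set G) := by
    rw [← hS]
    exact Subgroup.closure_mono (by simp)
  have : g = c * (c⁻¹ * g) := by group
  rw [this]
  exact mul_mem hc (hkerle hker')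

open scoped commutatorElement

/-- Commutators ignore central factors (left version). -/
lemma commutatorElement_central_mul_left {G : Type*} [Group G] {z : G}
    (hz : z ∈ Subgroup.center G) (s b : G) : ⁅z * s, b⁆ = ⁅s, b⁆ := by
  have hz' := Subgroup.mem_center_iff.1 hz
  have h1 : z * (s * b * s⁻¹) = s * b * s⁻¹ * z := (hz' _).symm
  simp only [commutatorElement_def, mul_inv_rev]
  calc z * s * b * (s⁻¹ * z⁻¹) * b⁻¹
      = z * (s * b * s⁻¹) * z⁻¹ * b⁻¹ := by group
    _ = s * b * s⁻¹ * z * z⁻¹ * b⁻¹ := by rw [h1]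
    _ = s * b * s⁻¹ * b⁻¹ := by group

/-- Commutators ignore central factors. -/
lemma commutatorElement_mul_central {G : Type*} [Group G] {z w : G}
    (hz : z ∈ Subgroup.center G) (hw : w ∈ Subgroup.center G) (s t : G) :
    ⁅z * s, w * t⁆ = ⁅s, t⁆ := by
  rw [commutatorElement_central_mul_left hz, ← commutatorElement_inv,
    commutatorElement_central_mul_left hw, commutatorElement_inv]

/-- Let `H` be a perfect Noetherian group. Then the Schur multiplier of `H` is finitely
generated if and only if for every central extension `G` of `H` the commutator subgroup
`[G, G]` is Noetherian. -/
theorem fg_schurMultiplier_iff_of_perfect_noetherian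
    {H : Type u} [Group H] (hperf : commutator H = ⊤) (hH : IsNoetherianGroup H) :
    Group.FG ↥(SchurMultiplier H) ↔
      ∀ (G : Type u) [Group G] (φ : G →* H),
        Function.Surjective φ → φ.ker ≤ Subgroup.center G →
          IsNoetherianGroup ↥(commutator G) := by
  set π : FreeGroup H →* H := FreeGroup.lift (id : H → H) with hπ
  set R : Subgroup (FreeGroup H) := π.ker with hR
  set N : Subgroup (FreeGroup H) := ⁅(⊤ : Subgroup (FreeGroup H)), R⁆ with hN
  have hπsurj : Function.Surjective π := fun h => ⟨FreeGroup.of h, FreeGroup.lift_apply_of⟩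
  have hNR : N ≤ R := Subgroup.commutator_le_right _ _
  have hSM : SchurMultiplier H = (R ⊓ commutator (FreeGroup H)).map (QuotientGroup.mk' N) := rfl
  constructor
  · -- Schur multiplier f.g. ⇒ every central extension has Noetherian commutator subgroup
    intro hFG G _ φ hsurj hcent
    -- lift the projection through the free group
    set σ : FreeGroup H →* G := FreeGroup.lift (Function.surjInv hsurj) with hσ
    have hcomm_π : φ.comp σ = π := by
      apply FreeGroup.ext_hom
      intro a
      simp [hσ, hπ, FreeGroup.lift_apply_of, Function.surjInv_eq hsurj]
    have hφσ : ∀ x, φ (σ x) = π x := fun x => by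
      rw [← hcomm_π]; rfl
    have hσR : ∀ r ∈ R, σ r ∈ φ.ker := fun r hr => by
      simp only [MonoidHom.mem_ker, hφσ]
      exact hr
    -- σ kills ⁅F, R⁆
    have hNker : N ≤ σ.ker := by
      rw [hN]
      rw [Subgroup.commutator_le]
      intro g _ r hr
      have hcentr : σ r ∈ Subgroup.center G := hcent (hσR r hr)
      simp only [MonoidHom.mem_ker, map_commutatorElement]
      exact commutatorElement_eq_one_iff_mul_comm.2
        ((Subgroup.mem_center_iff.1 hcentr) (σ g))
    set σbar : (FreeGroup H ⧸ N) →* G := QuotientGroup.lift N σ hNker with hσbar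
    have hσbar_comp : σbar.comp (QuotientGroup.mk' N) = σ := by
      ext x
      simp [hσbar]
    -- every element of G is central multiple of an element of σ's range
    have hdecomp : ∀ g : G, ∃ z f, z ∈ Subgroup.center G ∧ g = z * σ f := by
      intro g
      obtain ⟨f, hf⟩ := hπsurj (φ g)
      refine ⟨g * (σ f)⁻¹, f, hcent ?_, by group⟩
      simp [MonoidHom.mem_ker, map_mul, hφσ, hf]
    -- the commutator subgroup of G is the image of the commutator subgroup of F
    have hcommG : commutator G = (commutator (FreeGroup H)).map σ := by
      apply le_antisymm
      · rw [commutator_def, Subgroup.commutator_le]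
        intro g₁ _ g₂ _
        obtain ⟨z, f₁, hz, hg₁⟩ := hdecomp g₁
        obtain ⟨w, f₂, hw, hg₂⟩ := hdecomp g₂
        rw [hg₁, hg₂, commutatorElement_mul_central hz hw, ← map_commutatorElement]
        exact Subgroup.mem_map_of_mem σ
          (Subgroup.commutator_mem_commutator (Subgroup.mem_top _) (Subgroup.mem_top _))
      · rw [commutator_def, Subgroup.map_commutator]
        exact Subgroup.commutator_mono le_top le_top
    -- the central part of the commutator subgroup
    set A : Subgroup G := φ.ker ⊓ commutator G with hA
    have hAcent : A ≤ Subgroup.center G := le_trans inf_le_left hcent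
    have hAeq : A = (R ⊓ commutator (FreeGroup H)).map σ := by
      apply le_antisymm
      · rintro a ⟨haker, hacomm⟩
        rw [hcommG] at hacomm
        obtain ⟨c, hc, hca⟩ := hacomm
        refine ⟨c, ⟨?_, hc⟩, hca⟩
        have h1 : π c = 1 := by rw [← hφσ, hca]; exact haker
        rw [hR]
        exact MonoidHom.mem_ker.mpr h1
      · rintro a ⟨c, ⟨hcR, hccomm⟩, hca⟩
        exact ⟨hca ▸ hσR c hcR, hca ▸ hcommG ▸ Subgroup.mem_map_of_mem σ hccomm⟩
    -- A is finitely generated, being the image of the Schur multiplier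
    have hAfg : A.FG := by
      have h1 : (SchurMultiplier H).FG := (Group.fg_iff_subgroup_fg _).1 hFG
      have h2 : (SchurMultiplier H).map σbar = A := by
        rw [hSM, Subgroup.map_map, hσbar_comp, hAeq]
      exact h2 ▸ h1.map'_s10 σbar
    -- every subgroup of A is finitely generated (A is f.g. abelian)
    have hAsub : ∀ B : Subgroup G, B ≤ A → B.FG := by
      intro B hB
      letI cg : CommGroup ↥A :=
        { (inferInstance : Group ↥A) with
          mul_comm := fun a b =>
            Subtype.ext ((Subgroup.mem_center_iff.1 (hAcent b.2)) a.1) }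
      have hAfg' : Group.FG ↥A := (Group.fg_iff_subgroup_fg A).2 hAfg
      have h1 : (B.subgroupOf A).FG :=
        @Subgroup.fg_of_comm_of_fg ↥A cg hAfg' (B.subgroupOf A)
      have h2 : (B.subgroupOf A).map A.subtype = B := by
        rw [Subgroup.subgroupOf_map_subtype, inf_eq_left.2 hB]
      exact h2 ▸ h1.map'_s10 A.subtype
    -- conclude Noetherianity of the commutator subgroup
    intro K
    set j : ↥K →* G := (commutator G).subtype.comp K.subtype with hj
    have hjinj : Function.Injective j := fun a b hab =>
      Subtype.ext (Subtype.ext hab)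
    set f : ↥K →* H := φ.comp j with hf
    have hranfg : f.range.FG := hH f.range
    have hkerfg : f.ker.FG := by
      apply Subgroup.FG.of_map_injective j hjinj
      apply hAsub
      rintro x ⟨k, hk, hkx⟩
      constructor
      · have h1 : f k = 1 := MonoidHom.mem_ker.mp hk
        have h2 : φ (j k) = 1 := h1
        rw [← hkx]
        exact MonoidHom.mem_ker.mpr h2
      · rw [← hkx]
        exact k.1.2
    haveI := Group.fg_of_ker_of_range f hkerfg hranfg
    exact (Group.fg_iff_subgroup_fg K).1 ‹_›
  · -- converse: apply the hypothesis to the universal central extension F/⁅F,R⁆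
    intro h
    set G₀ := FreeGroup H ⧸ N with hG₀
    set φ₀ : G₀ →* H := QuotientGroup.lift N π hNR with hφ₀
    have hφ₀surj : Function.Surjective φ₀ := by
      intro x
      obtain ⟨y, hy⟩ := hπsurj x
      exact ⟨QuotientGroup.mk y, hy⟩
    have hφ₀cent : φ₀.ker ≤ Subgroup.center G₀ := by
      intro a ha
      rw [Subgroup.mem_center_iff]
      intro b
      obtain ⟨x, rfl⟩ := QuotientGroup.mk'_surjective N a
      obtain ⟨y, rfl⟩ := QuotientGroup.mk'_surjective N b
      have hx : x ∈ R := by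
        exact ha
      rw [← commutatorElement_eq_one_iff_mul_comm, ← map_commutatorElement]
      have hmem : ⁅y, x⁆ ∈ N := Subgroup.commutator_mem_commutator (Subgroup.mem_top y) hx
      exact (QuotientGroup.eq_one_iff _).mpr hmem
    have hNoeth := h G₀ φ₀ hφ₀surj hφ₀cent
    -- the Schur multiplier sits inside the commutator subgroup of G₀
    have hle : SchurMultiplier H ≤ commutator G₀ := by
      rw [hSM]
      calc (R ⊓ commutator (FreeGroup H)).map (QuotientGroup.mk' N)
          ≤ (commutator (FreeGroup H)).map (QuotientGroup.mk' N) :=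
            Subgroup.map_mono inf_le_right
        _ ≤ commutator G₀ := by
            rw [commutator_def, Subgroup.map_commutator]
            exact Subgroup.commutator_mono le_top le_top
    have h1 : ((SchurMultiplier H).subgroupOf (commutator G₀)).FG :=
      hNoeth _
    have h2 : ((SchurMultiplier H).subgroupOf (commutator G₀)).map (commutator G₀).subtype =
        SchurMultiplier H := by
      rw [Subgroup.subgroupOf_map_subtype, inf_eq_left.2 hle]
    exact (Group.fg_iff_subgroup_fg _).2 (h2 ▸ h1.map'_s10 (commutator G₀).subtype)
end

section
/- Let H be a finitely generated group, and let G be a group with a surjective group homomorphism φ : G → H whose kernel is contained in the center of G (i.e., G is a central extension of H). Then the commutator subgroup [G, G] is finitely generated if and only if the commutator subgroup [H, H] is finitely generated. -/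
open scoped commutatorElement

/-- Let `H` be a finitely generated group and `G` a central extension of `H`. Then `[G, G]`
is finitely generated if and only if `[H, H]` is finitely generated. -/
theorem commutator_fg_iff_of_central_extension_of_fg
    {G H : Type*} [Group G] [Group H] (φ : G →* H)
    (hsurj : Function.Surjective φ) (hker : φ.ker ≤ Subgroup.center G)
    (hH : Group.FG H) :
    (commutator G).FG ↔ (commutator H).FG := by
  have hmap : Subgroup.map φ (commutator G) = commutator H := by
    rw [commutator_def, commutator_def, Subgroup.map_commutator,
      Subgroup.map_top_of_surjective φ hsurj]
  constructor
  · intro hfg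
    rcases (Subgroup.fg_iff _).1 hfg with ⟨s, hsc, hsf⟩
    refine (Subgroup.fg_iff _).2 ⟨φ '' s, ?_, hsf.image φ⟩
    rw [← MonoidHom.map_closure, hsc, hmap]
  · intro hfg
    -- basic facts
    have hEmem : ∀ a b : G, ⁅a, b⁆ ∈ commutator G := fun a b =>
      commutator_def G ▸ Subgroup.commutator_mem_commutator (Subgroup.mem_top a)
        (Subgroup.mem_top b)
    have hz : ∀ z ∈ φ.ker, ∀ g : G, g * z = z * g := fun z hzk g =>
      Subgroup.mem_center_iff.1 (hker hzk) g
    have hcz : ∀ z ∈ φ.ker, ∀ e : G, ⁅z, e⁆ = 1 := by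
      intro z hzk e
      rw [commutatorElement_eq_one_iff_mul_comm, ← hz z hzk e]
    have hcz' : ∀ z ∈ φ.ker, ∀ e : G, ⁅e, z⁆ = 1 := by
      intro z hzk e
      rw [commutatorElement_eq_one_iff_mul_comm, hz z hzk e]
    have strip_r : ∀ (a b n : G), n ∈ φ.ker → ⁅a, b * n⁆ = ⁅a, b⁆ := by
      intro a b n hn
      have h1 : ⁅a, b * n⁆ = a * b * (n * a⁻¹ * n⁻¹) * b⁻¹ := by
        simp only [commutatorElement_def]; group
      have h2 : n * a⁻¹ * n⁻¹ = a⁻¹ := by rw [← hz n hn a⁻¹]; group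
      rw [h1, h2, commutatorElement_def]
    have strip_l : ∀ (a b n : G), n ∈ φ.ker → ⁅a * n, b⁆ = ⁅a, b⁆ := by
      intro a b n hn
      have h1 : ⁅a * n, b⁆ = a * (n * b * n⁻¹) * a⁻¹ * b⁻¹ := by
        simp only [commutatorElement_def]; group
      have h2 : n * b * n⁻¹ = b := by rw [← hz n hn b]; group
      rw [h1, h2, commutatorElement_def]
    -- generating sets
    rcases (Subgroup.fg_iff _).1 hfg with ⟨T, hTc, hTf⟩
    rcases Group.fg_iff.1 hH with ⟨S, hSc, hSf⟩
    set σ : H → G := Function.surjInv hsurj with hσdef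
    have hσ : ∀ h : H, φ (σ h) = h := fun h => Function.surjInv_eq hsurj h
    have hτex : ∀ t : H, ∃ g : G, t ∈ T → g ∈ commutator G ∧ φ g = t := by
      intro t
      by_cases ht : t ∈ T
      · have h1 : t ∈ Subgroup.map φ (commutator G) := by
          rw [hmap, ← hTc]; exact Subgroup.subset_closure ht
        rcases h1 with ⟨g, hg, hgt⟩
        exact ⟨g, fun _ => ⟨hg, hgt⟩⟩
      · exact ⟨1, fun h => absurd h ht⟩
    choose τ hτ using hτex
    -- the subgroups D and F
    set D : Subgroup G := Subgroup.closure (τ '' T) with hDdef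
    have hDE : D ≤ commutator G := by
      rw [hDdef]
      refine (Subgroup.closure_le _).2 ?_
      rintro x ⟨t, ht, rfl⟩
      exact (hτ t ht).1
    have dec : ∀ e ∈ commutator G, ∃ d ∈ D, ∃ n ∈ φ.ker, e = d * n := by
      intro e he
      have h1 : φ e ∈ Subgroup.map φ D := by
        have h2 : φ e ∈ commutator H := hmap ▸ Subgroup.mem_map_of_mem φ he
        rw [← hTc] at h2
        refine (Subgroup.closure_le _).2 ?_ h2
        intro t ht
        exact ⟨τ t, Subgroup.subset_closure ⟨t, ht, rfl⟩, (hτ t ht).2⟩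
      rcases h1 with ⟨d, hd, hde⟩
      refine ⟨d, hd, d⁻¹ * e, ?_, by group⟩
      rw [MonoidHom.mem_ker, map_mul, map_inv, hde, inv_mul_cancel]
    have LE : ∀ e ∈ commutator G, ∀ e' ∈ commutator G, ⁅e, e'⁆ ∈ D := by
      intro e he e' he'
      obtain ⟨d, hd, n, hn, rfl⟩ := dec e he
      obtain ⟨d', hd', n', hn', rfl⟩ := dec e' he'
      rw [strip_r _ _ _ hn', strip_l _ _ _ hn, commutatorElement_def]
      exact mul_mem (mul_mem (mul_mem hd hd') (inv_mem hd)) (inv_mem hd')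
    set W : Set G := (τ '' T) ∪ (Set.image2 (fun s t => ⁅σ s, τ t⁆) S T)
        ∪ (Set.image2 (fun s s' => ⁅σ s, σ s'⁆) S S) with hWdef
    have hWfin : W.Finite :=
      Set.Finite.union (Set.Finite.union (hTf.image τ) (Set.Finite.image2 _ hSf hTf))
        (Set.Finite.image2 _ hSf hSf)
    set F : Subgroup G := Subgroup.closure W with hFdef
    have hDF : D ≤ F := by
      rw [hDdef, hFdef]
      exact Subgroup.closure_mono (fun x hx => Or.inl (Or.inl hx))
    have hFE : F ≤ commutator G := by
      rw [hFdef]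
      refine (Subgroup.closure_le _).2 ?_
      rintro x ((⟨t, ht, rfl⟩ | ⟨s, hs, t, ht, rfl⟩) | ⟨s, hs, s', hs', rfl⟩)
      · exact (hτ t ht).1
      · exact hEmem _ _
      · exact hEmem _ _
    -- G is generated by lifts of S together with the (central) kernel
    have hG : ∀ a : G, a ∈ Subgroup.closure ((σ '' S) ∪ (φ.ker : Set G)) := by
      intro a
      have h1 : φ a ∈ Subgroup.map φ (Subgroup.closure (σ '' S)) := by
        rw [MonoidHom.map_closure]
        have h2 : φ '' (σ '' S) = S := by
          rw [Set.image_image]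
          simp only [hσ, Set.image_id']
        rw [h2, hSc]
        exact Subgroup.mem_top _
      rcases h1 with ⟨m, hm, hma⟩
      have h3 : a = m * (m⁻¹ * a) := by group
      rw [h3]
      refine mul_mem (Subgroup.closure_mono Set.subset_union_left hm)
        (Subgroup.subset_closure (Or.inr ?_))
      show m⁻¹ * a ∈ φ.ker
      rw [MonoidHom.mem_ker, map_mul, map_inv, hma, inv_mul_cancel]
    -- Step L1 : commutators of lifted generators with D lie in F
    have L1 : ∀ s ∈ S, ∀ d ∈ D, ⁅σ s, d⁆ ∈ F := by
      intro s hs d hd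
      rw [hDdef] at hd
      induction hd using Subgroup.closure_induction with
      | mem x hx =>
        rcases hx with ⟨t, ht, rfl⟩
        exact Subgroup.subset_closure (Or.inl (Or.inr ⟨s, hs, t, ht, rfl⟩))
      | one => rw [commutatorElement_one_right]; exact one_mem F
      | mul x y hx hy ihx ihy =>
        have hid : ⁅σ s, x * y⁆ = ⁅σ s, x⁆ * (⁅x, ⁅σ s, y⁆⁆ * ⁅σ s, y⁆) := by
          simp only [commutatorElement_def]; group
        rw [hid]
        exact mul_mem ihx (mul_mem (hDF (LE x (hDE hx) _ (hEmem _ _))) ihy)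
      | inv x hx ihx =>
        have hid : ⁅σ s, x⁻¹⁆ = ⁅x, ⁅σ s, x⁻¹⁆⁆⁻¹ * ⁅σ s, x⁆⁻¹ := by
          simp only [commutatorElement_def]; group
        rw [hid]
        exact mul_mem (inv_mem (hDF (LE x (hDE hx) _ (hEmem _ _)))) (inv_mem ihx)
    -- Step L2 : commutators of lifted generators with the commutator subgroup lie in F
    have L2 : ∀ s ∈ S, ∀ e ∈ commutator G, ⁅σ s, e⁆ ∈ F := by
      intro s hs e he
      obtain ⟨d, hd, n, hn, rfl⟩ := dec e he
      rw [strip_r _ _ _ hn]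
      exact L1 s hs d hd
    -- Step L3 : commutators of arbitrary elements with the commutator subgroup lie in F
    have L3 : ∀ x : G, ∀ e ∈ commutator G, ⁅x, e⁆ ∈ F := by
      intro x
      have hx := hG x
      induction hx using Subgroup.closure_induction with
      | mem y hy =>
        rcases hy with ⟨s, hs, rfl⟩ | hzk
        · exact L2 s hs
        · intro e _he
          rw [hcz y hzk e]
          exact one_mem F
      | one =>
        intro e _he
        rw [commutatorElement_one_left]
        exact one_mem F
      | mul x y hx hy ihx ihy =>
        intro e he
        have hid : ⁅x * y, e⁆ = ⁅x, ⁅y, e⁆⁆ * ⁅y, e⁆ * ⁅x, e⁆ := by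
          simp only [commutatorElement_def]; group
        rw [hid]
        exact mul_mem (mul_mem (ihx _ (hEmem _ _)) (ihy _ he)) (ihx _ he)
      | inv x hx ihx =>
        intro e he
        have hid : ⁅x⁻¹, e⁆ = ⁅e, ⁅x, x⁻¹ * e⁻¹ * x⁆⁆ * ⁅x, x⁻¹ * e⁻¹ * x⁆ := by
          simp only [commutatorElement_def]; group
        have he'' : x⁻¹ * e⁻¹ * x ∈ commutator G := by
          have h4 : x⁻¹ * e⁻¹ * x = ⁅x⁻¹, e⁻¹⁆ * e⁻¹ := by group
          rw [h4]
          exact mul_mem (hEmem _ _) (inv_mem he)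
        rw [hid]
        exact mul_mem (hDF (LE e he _ (hEmem _ _))) (ihx _ he'')
    -- conjugation preserves F ∩ commutator G
    have LC : ∀ g f : G, f ∈ F → f ∈ commutator G → g * f * g⁻¹ ∈ F := by
      intro g f hfF hfE
      have hid : g * f * g⁻¹ = ⁅g, f⁆ * f := by simp only [commutatorElement_def]; group
      rw [hid]
      exact mul_mem (L3 g f hfE) hfF
    -- Step L4a : commutators with a lifted generator on the right lie in F
    have L4a : ∀ s ∈ S, ∀ a : G, ⁅a, σ s⁆ ∈ F := by
      intro s hs a
      have ha := hG a
      induction ha using Subgroup.closure_induction with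
      | mem y hy =>
        rcases hy with ⟨s', hs', rfl⟩ | hzk
        · exact Subgroup.subset_closure (Or.inr ⟨s', hs', s, hs, rfl⟩)
        · rw [hcz y hzk (σ s)]; exact one_mem F
      | one => rw [commutatorElement_one_left]; exact one_mem F
      | mul x y hx hy ihx ihy =>
        have hid : ⁅x * y, σ s⁆ = ⁅x, ⁅y, σ s⁆⁆ * ⁅y, σ s⁆ * ⁅x, σ s⁆ := by
          simp only [commutatorElement_def]; group
        rw [hid]
        exact mul_mem (mul_mem (L3 x _ (hEmem _ _)) ihy) ihx
      | inv x hx ihx =>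
        have hid : ⁅x⁻¹, σ s⁆ = x⁻¹ * ⁅x, σ s⁆⁻¹ * (x⁻¹)⁻¹ := by
          simp only [commutatorElement_def]; group
        rw [hid]
        exact LC x⁻¹ _ (inv_mem ihx) (inv_mem (hEmem _ _))
    -- Step L4 : all commutators lie in F
    have L4 : ∀ a b : G, ⁅a, b⁆ ∈ F := by
      intro a b
      have hb := hG b
      induction hb using Subgroup.closure_induction with
      | mem y hy =>
        rcases hy with ⟨s, hs, rfl⟩ | hzk
        · exact L4a s hs a
        · rw [hcz' y hzk a]; exact one_mem F
      | one => rw [commutatorElement_one_right]; exact one_mem F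
      | mul x y hx hy ihx ihy =>
        have hid : ⁅a, x * y⁆ = ⁅a, x⁆ * (x * ⁅a, y⁆ * x⁻¹) := by
          simp only [commutatorElement_def]; group
        rw [hid]
        exact mul_mem ihx (LC x _ ihy (hEmem _ _))
      | inv x hx ihx =>
        have hid : ⁅a, x⁻¹⁆ = x⁻¹ * ⁅a, x⁆⁻¹ * (x⁻¹)⁻¹ := by
          simp only [commutatorElement_def]; group
        rw [hid]
        exact LC x⁻¹ _ (inv_mem ihx) (inv_mem (hEmem _ _))
    -- conclude
    refine (Subgroup.fg_iff _).2 ⟨W, ?_, hWfin⟩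
    show F = commutator G
    refine le_antisymm hFE ?_
    rw [commutator_eq_closure]
    refine (Subgroup.closure_le _).2 ?_
    rintro x ⟨a, b, rfl⟩
    exact L4 a b
end

section
/- Let G be a group such that the quotient G/Z(G) of G by its center is finitely generated. Then the commutator subgroup [G, G] is finitely generated if and only if the commutator subgroup of G/Z(G) is finitely generated. -/
section Aux

open scoped commutatorElement

variable {G : Type*} [Group G]

private lemma comm_id3 (a b d : G) : ⁅a * b, d⁆ = ⁅a, ⁅b, d⁆⁆ * ⁅b, d⁆ * ⁅a, d⁆ := by
  simp only [commutatorElement_def]; group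

private lemma comm_id4 (a b c : G) : ⁅a, b * c⁆ = ⁅a, b⁆ * ⁅b, ⁅a, c⁆⁆ * ⁅a, c⁆ := by
  simp only [commutatorElement_def]; group

private lemma comm_id2 (g b : G) : ⁅g, b⁻¹⁆ = ⁅b⁻¹, ⁅g, b⁆⁻¹⁆ * ⁅g, b⁆⁻¹ := by
  simp only [commutatorElement_def]; group

private lemma comm_cc_left {z : G} (hz : z ∈ Subgroup.center G) (a b : G) :
    ⁅a * z, b⁆ = ⁅a, b⁆ := by
  have hzb : z * b = b * z := (Subgroup.mem_center_iff.mp hz b).symm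
  simp only [commutatorElement_def, mul_inv_rev]
  calc a * z * b * (z⁻¹ * a⁻¹) * b⁻¹ = a * (z * b * z⁻¹) * a⁻¹ * b⁻¹ := by group
    _ = a * b * a⁻¹ * b⁻¹ := by rw [hzb]; group

private lemma comm_cc_right {z : G} (hz : z ∈ Subgroup.center G) (a b : G) :
    ⁅a, b * z⁆ = ⁅a, b⁆ := by
  have hza : z * a⁻¹ = a⁻¹ * z := (Subgroup.mem_center_iff.mp hz a⁻¹).symm
  simp only [commutatorElement_def, mul_inv_rev]
  calc a * (b * z) * a⁻¹ * (z⁻¹ * b⁻¹) = a * b * (z * a⁻¹ * z⁻¹) * b⁻¹ := by group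
    _ = a * b * a⁻¹ * b⁻¹ := by rw [hza]; group

private lemma mem_commutator' (a b : G) : ⁅a, b⁆ ∈ commutator G :=
  Subgroup.commutator_mem_commutator (Subgroup.mem_top a) (Subgroup.mem_top b)

/-- The hard direction: if `G/Z(G)` and `[G/Z, G/Z]` are finitely generated, so is `[G,G]`. -/
private theorem commutator_fg_of_quotient_center
    {G : Type*} [Group G] (h : Group.FG (G ⧸ Subgroup.center G))
    (h2 : (commutator (G ⧸ Subgroup.center G)).FG) : (commutator G).FG := by
  classical
  set Z := Subgroup.center G with hZ
  let π : G →* G ⧸ Z := QuotientGroup.mk' Z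
  have hπsurj : Function.Surjective π := QuotientGroup.mk'_surjective Z
  -- the image of the commutator subgroup is the commutator subgroup of the quotient
  have hmapD : (commutator G).map π = commutator (G ⧸ Z) := by
    rw [commutator_def, Subgroup.map_commutator,
      Subgroup.map_top_of_surjective _ hπsurj, commutator_def]
  -- generators of the quotient and of its commutator subgroup
  obtain ⟨SQ, hSQtop, hSQfin⟩ := Group.fg_iff.mp h
  obtain ⟨T₀, hT₀cl, hT₀fin⟩ := (Subgroup.fg_iff _).mp h2
  -- lift the generators of the quotient
  let lift : G ⧸ Z → G := Function.surjInv hπsurj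
  let X : Set G := lift '' SQ
  have hXfin : X.Finite := hSQfin.image _
  have hπX : π '' X = SQ := by
    rw [Set.image_image]
    calc (fun q => π (lift q)) '' SQ = (fun q => q) '' SQ :=
          Set.image_congr fun q _ => Function.surjInv_eq hπsurj q
      _ = SQ := Set.image_id SQ
  -- lift the generators of the commutator subgroup of the quotient, inside `commutator G`
  let liftD : G ⧸ Z → G := fun t =>
    if ht : ∃ d, d ∈ commutator G ∧ π d = t then ht.choose else 1
  have hliftD : ∀ t ∈ T₀, liftD t ∈ commutator G ∧ π (liftD t) = t := by
    intro t ht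
    have htc : t ∈ commutator (G ⧸ Z) := hT₀cl ▸ Subgroup.subset_closure ht
    have hex : ∃ d, d ∈ commutator G ∧ π d = t := by
      rw [← hmapD] at htc
      obtain ⟨d, hd, hdt⟩ := htc
      exact ⟨d, hd, hdt⟩
    simp only [liftD, dif_pos hex]
    exact hex.choose_spec
  let C : Set G := liftD '' T₀
  have hCfin : C.Finite := hT₀fin.image _
  have hCD : C ⊆ (commutator G : Set G) := by
    rintro c ⟨t, ht, rfl⟩; exact (hliftD t ht).1
  have hπC : π '' C = T₀ := by
    rw [Set.image_image]
    calc (fun t => π (liftD t)) '' T₀ = (fun t => t) '' T₀ :=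
          Set.image_congr fun t ht => (hliftD t ht).2
      _ = T₀ := Set.image_id T₀
  -- the finite generating set
  let X' : Set G := X ∪ X⁻¹
  have hX'fin : X'.Finite := hXfin.union hXfin.inv
  let S : Set G := C ∪ (Set.image2 (fun a b => ⁅a, b⁆) X' X' ∪
    Set.image2 (fun a c => ⁅a, c⁆) X' C)
  have hSfin : S.Finite := hCfin.union ((hX'fin.image2 _ hX'fin).union (hX'fin.image2 _ hCfin))
  -- P is the candidate subgroup, K the lifted commutator subgroup of the quotient
  have hKP : Subgroup.closure C ≤ Subgroup.closure S :=
    Subgroup.closure_mono Set.subset_union_left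
  have hPD : Subgroup.closure S ≤ commutator G := by
    rw [Subgroup.closure_le]
    rintro s (hs | hs | hs)
    · exact hCD hs
    · obtain ⟨a, -, b, -, rfl⟩ := hs; exact mem_commutator' a b
    · obtain ⟨a, -, c, -, rfl⟩ := hs; exact mem_commutator' a c
  have hKD : Subgroup.closure C ≤ commutator G := hKP.trans hPD
  -- membership facts about S
  have hS2 : ∀ a ∈ X', ∀ b ∈ X', ⁅a, b⁆ ∈ Subgroup.closure S := fun a ha b hb =>
    Subgroup.subset_closure (Or.inr (Or.inl (Set.mem_image2_of_mem ha hb)))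
  have hS3 : ∀ a ∈ X', ∀ c ∈ C, ⁅a, c⁆ ∈ Subgroup.closure S := fun a ha c hc =>
    Subgroup.subset_closure (Or.inr (Or.inr (Set.mem_image2_of_mem ha hc)))
  -- K surjects onto the commutator subgroup of the quotient
  have hmapK : (Subgroup.closure C).map π = commutator (G ⧸ Z) := by
    rw [MonoidHom.map_closure, hπC, hT₀cl]
  -- decomposition of elements of G
  have dec : ∀ a : G, ∃ w ∈ Subgroup.closure X, ∃ z ∈ Z, a = w * z := by
    intro a
    have : π a ∈ (Subgroup.closure X).map π := by
      rw [MonoidHom.map_closure, hπX, hSQtop]; trivial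
    obtain ⟨w, hw, hπw⟩ := this
    refine ⟨w, hw, w⁻¹ * a, ?_, by group⟩
    have : w⁻¹ * a ∈ π.ker := by
      rw [MonoidHom.mem_ker, map_mul, map_inv, hπw]; group
    rwa [QuotientGroup.ker_mk'] at this
  -- decomposition of elements of the commutator subgroup
  have decD : ∀ d ∈ commutator G, ∃ k ∈ Subgroup.closure C, ∃ z ∈ Z, d = k * z := by
    intro d hd
    have : π d ∈ (Subgroup.closure C).map π := by
      rw [hmapK, ← hmapD]; exact ⟨d, hd, rfl⟩
    obtain ⟨k, hk, hπk⟩ := this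
    refine ⟨k, hk, k⁻¹ * d, ?_, by group⟩
    have : k⁻¹ * d ∈ π.ker := by
      rw [MonoidHom.mem_ker, map_mul, map_inv, hπk]; group
    rwa [QuotientGroup.ker_mk'] at this
  -- commutators of elements of the commutator subgroup lie in K
  have H1 : ∀ d ∈ commutator G, ∀ d' ∈ commutator G, ⁅d, d'⁆ ∈ Subgroup.closure C := by
    intro d hd d' hd'
    obtain ⟨k, hk, z, hz, rfl⟩ := decD d hd
    obtain ⟨k', hk', z', hz', rfl⟩ := decD d' hd'
    rw [comm_cc_left hz, comm_cc_right hz', commutatorElement_def]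
    exact mul_mem (mul_mem (mul_mem hk hk') (inv_mem hk)) (inv_mem hk')
  -- gamma₀ : commutators with the second entry in the commutator subgroup
  have gamma0 : ∀ g : G, (∀ c ∈ C, ⁅g, c⁆ ∈ Subgroup.closure S) →
      ∀ d ∈ commutator G, ⁅g, d⁆ ∈ Subgroup.closure S := by
    intro g hg d hd
    obtain ⟨k, hk, z, hz, rfl⟩ := decD d hd
    rw [comm_cc_right hz]
    refine Subgroup.closure_induction (p := fun k _ => ⁅g, k⁆ ∈ Subgroup.closure S)
      (fun c hc => hg c hc) (by simpa using (Subgroup.closure S).one_mem) ?_ ?_ hk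
    · intro x y hx hy ihx ihy
      rw [comm_id4 g x y]
      exact mul_mem (mul_mem ihx
        (hKP (H1 x (hKD hx) ⁅g, y⁆ (mem_commutator' g y)))) ihy
    · intro x hx ihx
      rw [comm_id2 g x]
      exact mul_mem
        (hKP (H1 x⁻¹ ((commutator G).inv_mem (hKD hx)) ⁅g, x⁆⁻¹
          ((commutator G).inv_mem (mem_commutator' g x)))) (inv_mem ihx)
  -- gamma : for w in the lifted generating subgroup, ⁅w, d⁆ ∈ P for d in the commutator subgroup
  have gamma : ∀ w ∈ Subgroup.closure X, ∀ d ∈ commutator G,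
      ⁅w, d⁆ ∈ Subgroup.closure S ∧ ⁅w⁻¹, d⁆ ∈ Subgroup.closure S := by
    intro w hw
    refine Subgroup.closure_induction (p := fun w _ => ∀ d ∈ commutator G,
      ⁅w, d⁆ ∈ Subgroup.closure S ∧ ⁅w⁻¹, d⁆ ∈ Subgroup.closure S) ?_ ?_ ?_ ?_ hw
    · intro x hx d hd
      have hx1 : x ∈ X' := Or.inl hx
      have hx2 : x⁻¹ ∈ X' := Or.inr (by simpa using hx)
      exact ⟨gamma0 x (fun c hc => hS3 x hx1 c hc) d hd,
        gamma0 x⁻¹ (fun c hc => hS3 x⁻¹ hx2 c hc) d hd⟩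
    · intro d hd
      constructor <;> simpa using (Subgroup.closure S).one_mem
    · intro a b ha hb iha ihb d hd
      constructor
      · rw [comm_id3 a b d]
        exact mul_mem (mul_mem (iha ⁅b, d⁆ (mem_commutator' b d)).1 (ihb d hd).1) (iha d hd).1
      · rw [mul_inv_rev, comm_id3 b⁻¹ a⁻¹ d]
        exact mul_mem (mul_mem (ihb ⁅a⁻¹, d⁆ (mem_commutator' a⁻¹ d)).2 (iha d hd).2) (ihb d hd).2
    · intro a ha iha d hd
      exact ⟨(iha d hd).2, by rw [inv_inv]; exact (iha d hd).1⟩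
  -- lambda₀ : fixing a good first entry, commutators with second entry in closure X
  have lambda0 : ∀ a : G, (∀ y ∈ X', ⁅a, y⁆ ∈ Subgroup.closure S) →
      ∀ w ∈ Subgroup.closure X, ⁅a, w⁆ ∈ Subgroup.closure S := by
    intro a ha w hw
    refine Subgroup.closure_induction (p := fun w _ => ⁅a, w⁆ ∈ Subgroup.closure S)
      (fun y hy => ha y (Or.inl hy)) (by simpa using (Subgroup.closure S).one_mem) ?_ ?_ hw
    · intro b c hb hc ihb ihc
      rw [comm_id4 a b c]
      exact mul_mem (mul_mem ihb
        ((gamma b hb ⁅a, c⁆ (mem_commutator' a c)).1)) ihc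
    · intro b hb ihb
      rw [comm_id2 a b]
      exact mul_mem ((gamma b hb ⁅a, b⁆⁻¹ ((commutator G).inv_mem (mem_commutator' a b))).2)
        (inv_mem ihb)
  -- phi : commutators of two elements of closure X
  have phi : ∀ w ∈ Subgroup.closure X, ∀ u ∈ Subgroup.closure X,
      ⁅w, u⁆ ∈ Subgroup.closure S ∧ ⁅w⁻¹, u⁆ ∈ Subgroup.closure S := by
    intro w hw
    refine Subgroup.closure_induction (p := fun w _ => ∀ u ∈ Subgroup.closure X,
      ⁅w, u⁆ ∈ Subgroup.closure S ∧ ⁅w⁻¹, u⁆ ∈ Subgroup.closure S) ?_ ?_ ?_ ?_ hw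
    · intro x hx u hu
      have hx1 : x ∈ X' := Or.inl hx
      have hx2 : x⁻¹ ∈ X' := Or.inr (by simpa using hx)
      exact ⟨lambda0 x (fun y hy => hS2 x hx1 y hy) u hu,
        lambda0 x⁻¹ (fun y hy => hS2 x⁻¹ hx2 y hy) u hu⟩
    · intro u hu
      constructor <;> simpa using (Subgroup.closure S).one_mem
    · intro a b ha hb iha ihb u hu
      constructor
      · rw [comm_id3 a b u]
        exact mul_mem (mul_mem ((gamma a ha ⁅b, u⁆ (mem_commutator' b u)).1)
          (ihb u hu).1) (iha u hu).1
      · rw [mul_inv_rev, comm_id3 b⁻¹ a⁻¹ u]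
        exact mul_mem (mul_mem ((gamma b hb ⁅a⁻¹, u⁆ (mem_commutator' a⁻¹ u)).2)
          (iha u hu).2) (ihb u hu).2
    · intro a ha iha u hu
      exact ⟨(iha u hu).2, by rw [inv_inv]; exact (iha u hu).1⟩
  -- every commutator lies in the closure of S
  have main : ∀ a b : G, ⁅a, b⁆ ∈ Subgroup.closure S := by
    intro a b
    obtain ⟨w, hw, z, hz, rfl⟩ := dec a
    obtain ⟨w', hw', z', hz', rfl⟩ := dec b
    rw [comm_cc_left hz, comm_cc_right hz']
    exact (phi w hw w' hw').1
  have hPeq : commutator G = Subgroup.closure S := by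
    refine le_antisymm ?_ hPD
    rw [commutator_eq_closure, Subgroup.closure_le]
    rintro g ⟨a, b, rfl⟩
    exact main a b
  exact (Subgroup.fg_iff _).mpr ⟨S, hPeq.symm, hSfin⟩

end Aux

/-- Let `G` be a group such that `G/Z(G)` is finitely generated. Then `[G, G]` is finitely
generated if and only if the commutator subgroup of `G/Z(G)` is finitely generated. -/
theorem commutator_fg_iff_commutator_quotient_center_fg
    {G : Type*} [Group G] (h : Group.FG (G ⧸ Subgroup.center G)) :
    (commutator G).FG ↔ (commutator (G ⧸ Subgroup.center G)).FG := by
  constructor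
  · intro hfg
    have hmap : (commutator G).map (QuotientGroup.mk' (Subgroup.center G))
        = commutator (G ⧸ Subgroup.center G) := by
      rw [commutator_def, Subgroup.map_commutator,
        Subgroup.map_top_of_surjective _ (QuotientGroup.mk'_surjective _), commutator_def]
    obtain ⟨T, hTcl, hTfin⟩ := (Subgroup.fg_iff _).mp hfg
    refine (Subgroup.fg_iff _).mpr ⟨QuotientGroup.mk' (Subgroup.center G) '' T, ?_, hTfin.image _⟩
    rw [← MonoidHom.map_closure, hTcl, hmap]
  · intro hfg
    exact commutator_fg_of_quotient_center h hfg
end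

section
/- There exist groups G and H and a surjective group homomorphism φ : G → H whose kernel is contained in the center of G, such that the commutator subgroup [H, H] is finitely generated (indeed trivial) but the commutator subgroup [G, G] is not finitely generated. (For instance, G = F/[F, [F, F]] and H = F/[F, F], where F is a free group on a countably infinite basis.) -/
/-- The discrete Heisenberg group as triples of integers. -/
structure Heis where
  a : ℤ
  b : ℤ
  c : ℤ

namespace Heis

@[ext] lemma ext' {x y : Heis} (ha : x.a = y.a) (hb : x.b = y.b) (hc : x.c = y.c) :
    x = y := by cases x; cases y; simp_all

instance : Mul Heis := ⟨fun x y => ⟨x.a + y.a, x.b + y.b, x.c + y.c + x.a * y.b⟩⟩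
instance : One Heis := ⟨⟨0, 0, 0⟩⟩
instance : Inv Heis := ⟨fun x => ⟨-x.a, -x.b, x.a * x.b - x.c⟩⟩

@[simp] lemma mul_a (x y : Heis) : (x * y).a = x.a + y.a := rfl
@[simp] lemma mul_b (x y : Heis) : (x * y).b = x.b + y.b := rfl
@[simp] lemma mul_c (x y : Heis) : (x * y).c = x.c + y.c + x.a * y.b := rfl
@[simp] lemma inv_a (x : Heis) : x⁻¹.a = -x.a := rfl
@[simp] lemma inv_b (x : Heis) : x⁻¹.b = -x.b := rfl
@[simp] lemma inv_c (x : Heis) : x⁻¹.c = x.a * x.b - x.c := rfl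
@[simp] lemma one_a : (1 : Heis).a = 0 := rfl
@[simp] lemma one_b : (1 : Heis).b = 0 := rfl
@[simp] lemma one_c : (1 : Heis).c = 0 := rfl

instance : Group Heis where
  mul_assoc x y z := by ext <;> simp <;> ring
  one_mul x := by ext <;> simp
  mul_one x := by ext <;> simp
  inv_mul_cancel x := by ext <;> simp <;> ring

end Heis

lemma countable_of_fg {G : Type} [Group G] (K : Subgroup G) (h : K.FG) :
    Countable K := by
  classical
  obtain ⟨S, hS⟩ := h
  haveI : Countable (FreeGroup ((S : Set G) : Type _)) := FreeGroup.toWord_injective.countable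
  set v : ((S : Set G) : Type _) → G := fun x => (x : G) with hv
  have hrange : (FreeGroup.lift v).range = K := by
    rw [FreeGroup.range_lift_eq_closure, hv, Subtype.range_coe, hS]
  have hsurj : Function.Surjective ((FreeGroup.lift v).rangeRestrict) :=
    MonoidHom.rangeRestrict_surjective _
  have : Countable (FreeGroup.lift v).range := hsurj.countable
  rw [hrange] at this
  exact this

/-- There exist a central extension `φ : G → H` (a surjective homomorphism with kernel
contained in the center of `G`) such that `[H, H]` is finitely generated (indeed trivial)
but `[G, G]` is not finitely generated. -/
theorem exists_central_extension_commutator_not_fg :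
    ∃ (G H : Type) (_ : Group G) (_ : Group H) (φ : G →* H),
      Function.Surjective φ ∧ φ.ker ≤ Subgroup.center G ∧
        commutator H = ⊥ ∧ ¬ (commutator G).FG := by
  classical
  refine ⟨ℕ → Heis, ℕ → Multiplicative (ℤ × ℤ), inferInstance, inferInstance,
    { toFun := fun f i => Multiplicative.ofAdd ((f i).a, (f i).b)
      map_one' := rfl
      map_mul' := by intro f g; funext i; rfl }, ?_, ?_, ?_, ?_⟩
  · -- surjective
    intro h
    refine ⟨fun i => ⟨(Multiplicative.toAdd (h i)).1, (Multiplicative.toAdd (h i)).2, 0⟩, ?_⟩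
    funext i; rfl
  · -- kernel central
    intro f hf
    have hf' : ∀ i, (f i).a = 0 ∧ (f i).b = 0 := by
      intro i
      have := congrFun (MonoidHom.mem_ker.mp hf) i
      have h1 : ((f i).a, (f i).b) = ((0 : ℤ), (0 : ℤ)) := this
      exact ⟨congrArg Prod.fst h1, congrArg Prod.snd h1⟩
    rw [Subgroup.mem_center_iff]
    intro g
    funext i
    obtain ⟨ha, hb⟩ := hf' i
    ext <;> simp [ha, hb] <;> ring
  · -- commutator H = ⊥
    rw [commutator, eq_bot_iff]
    rw [Subgroup.commutator_le]
    intro g _ h _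
    rw [Subgroup.mem_bot, commutatorElement_def]
    rw [mul_comm g h]
    group
  · -- commutator G not FG
    intro hfg
    haveI hcnt : Countable (commutator (ℕ → Heis)) :=
      countable_of_fg _ hfg
    -- uncountable injection from Set ℕ
    set e : Set ℕ → (ℕ → Heis) := fun s i => ⟨0, 0, if i ∈ s then 1 else 0⟩ with he
    have hmem : ∀ s, e s ∈ commutator (ℕ → Heis) := by
      intro s
      open scoped commutatorElement in
      have : e s = ⁅(fun i => (⟨if i ∈ s then 1 else 0, 0, 0⟩ : Heis)),
          (fun _ => (⟨0, 1, 0⟩ : Heis))⁆ := by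
        funext i
        show (_ : Heis) = (_ * _ * _⁻¹ * _⁻¹ : Heis)
        ext <;> simp <;> ring
      rw [this, commutator]
      exact Subgroup.commutator_mem_commutator (Subgroup.mem_top _) (Subgroup.mem_top _)
    set ι : Set ℕ → commutator (ℕ → Heis) := fun s => ⟨e s, hmem s⟩ with hι
    have hinj : Function.Injective ι := by
      intro s t hst
      have h1 : e s = e t := congrArg Subtype.val hst
      ext n
      have h2 : (e s n).c = (e t n).c := by rw [h1]
      simp only [he] at h2
      by_cases hn : n ∈ s <;> by_cases hn' : n ∈ t <;> simp_all
    obtain ⟨f, hf⟩ := exists_injective_nat (commutator (ℕ → Heis))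
    exact Function.cantor_injective (f ∘ ι) (hf.comp hinj)
end
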